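/- arXiv:1507.07673 — 4 statements merged into one kernel-verified Lean document; each statement's English description precedes it below -/
import Mathlib

section
/- Let V be a distribution on ℝ belonging to the class S(α) for some α ≥ 0 (including the case V̂(α) < 1). Then for every ε > 0 there exists a constant K > 0 such that for all n ∈ ℕ and all x ≥ 0, the n-fold convolution tail satisfies \overline{V^{n*}}(x) ≤ K (V̂(α) + ε)^n V̄(x), where V̂(α) = ∫ e^{αx} V(dx). -/
open MeasureTheory ProbabilityTheory Filter Asymptotics

noncomputable section

/-- The tail function `Ū(x) = U((x,∞))` of a measure on `ℝ`. -/
def tailDist (μ : Measure ℝ) (x : ℝ) : ℝ := (μ (Set.Ioi x)).toReal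

/-- Convolution of two measures on `ℝ`. -/
def convDist (μ ν : Measure ℝ) : Measure ℝ := (μ.prod ν).map (fun p => p.1 + p.2)

/-- The distribution with CDF `V(x)𝟙_{x ≥ 0}`, i.e. the pushforward under `x ↦ max x 0`. -/
def posMod (μ : Measure ℝ) : Measure ℝ := μ.map (fun x => max x 0)

/-- `V̂(α) = ∫ e^{αx} V(dx)`. -/
def mgfVal (μ : Measure ℝ) (α : ℝ) : ℝ := ∫ x, Real.exp (α * x) ∂μ

/-- The convolution-equivalence class `S(α)`: a distribution `V` on `ℝ` is in `S(α)` if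
the distribution with CDF `V(x)𝟙_{x ≥ 0}` has everywhere positive tail,
`V̄(x-y)/V̄(x) → e^{αy}` for all `y`, `V̂(α) = ∫ e^{αx} V(dx) < ∞`, and
`\overline{V^{2*}}(x)/V̄(x) → 2V̂(α)`. -/
def MemCE (α : ℝ) (V : Measure ℝ) : Prop :=
  (∀ x : ℝ, 0 < tailDist (posMod V) x) ∧
  (∀ y : ℝ, Tendsto (fun x => tailDist (posMod V) (x - y) / tailDist (posMod V) x)
      atTop (nhds (Real.exp (α * y)))) ∧
  Integrable (fun x => Real.exp (α * x)) (posMod V) ∧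
  Tendsto (fun x => tailDist (convDist (posMod V) (posMod V)) x / tailDist (posMod V) x)
      atTop (nhds (2 * mgfVal (posMod V) α))

/-- Strongly regular variation `R*_{-α}`: the distribution `V` with tail
`V̄(x) = Ū(eˣ)/Ū(0)` (i.e. the conditional law of `ln ξ` given `ξ > 0`, where `ξ ∼ U`)
belongs to `S(α)`. -/
def MemSRV (α : ℝ) (U : Measure ℝ) : Prop :=
  U (Set.Ioi 0) ≠ 0 ∧
  MemCE α (((U (Set.Ioi 0))⁻¹ • U.restrict (Set.Ioi 0)).map Real.log)

/-- Regular variation `R_{-α}`: `Ū(x) > 0` for all `x` and `Ū(xy)/Ū(x) → y^{-α}` for `y > 0`. -/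
def MemRV (α : ℝ) (U : Measure ℝ) : Prop :=
  (∀ x : ℝ, 0 < tailDist U x) ∧
  ∀ y : ℝ, 0 < y →
    Tendsto (fun x => tailDist U (x * y) / tailDist U x) atTop (nhds (y ^ (-α)))

/-- Assumption A: every convex combination `pF + (1-p)G`, `0 < p < 1`,
is of strongly regular variation with index `-α`. -/
def AssumpA (α : ℝ) (F G : Measure ℝ) : Prop :=
  ∀ p : ℝ, 0 < p → p < 1 →
    MemSRV α (ENNReal.ofReal p • F + ENNReal.ofReal (1 - p) • G)

end
/-- The `n`-fold convolution `V^{n∗}` of a distribution `V` on `ℝ`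
(`V^{0∗}` is the Dirac mass at `0`). -/
noncomputable def convIter (V : Measure ℝ) : ℕ → Measure ℝ
  | 0 => Measure.dirac 0
  | n + 1 => convDist (convIter V n) V

section KestenAux
open Set

namespace KAux

lemma measurable_maxz : Measurable (fun x : ℝ => max x 0) := measurable_id.max measurable_const

instance convDist.instIsProbabilityMeasure (μ ν : Measure ℝ) [IsProbabilityMeasure μ]
    [IsProbabilityMeasure ν] : IsProbabilityMeasure (convDist μ ν) :=
  Measure.isProbabilityMeasure_map (by fun_prop)

instance posMod.instIsProbabilityMeasure (μ : Measure ℝ) [IsProbabilityMeasure μ] :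
    IsProbabilityMeasure (posMod μ) :=
  Measure.isProbabilityMeasure_map measurable_maxz.aemeasurable

instance convIter.instIsProbabilityMeasure (V : Measure ℝ) [IsProbabilityMeasure V] (n : ℕ) :
    IsProbabilityMeasure (convIter V n) := by
  induction n with
  | zero => exact Measure.dirac.isProbabilityMeasure
  | succ n ih => exact convDist.instIsProbabilityMeasure _ _

lemma convDist_apply_Ioi (μ ν : Measure ℝ) [SFinite μ] [SFinite ν] (x : ℝ) :
    convDist μ ν (Set.Ioi x) = ∫⁻ y, μ (Set.Ioi (x - y)) ∂ν := by
  rw [convDist, Measure.map_apply (by fun_prop) measurableSet_Ioi]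
  have : (fun p : ℝ × ℝ => p.1 + p.2) ⁻¹' (Set.Ioi x) = {p : ℝ × ℝ | x - p.2 < p.1} := by
    ext p; simp [Set.mem_Ioi, sub_lt_iff_lt_add]
  rw [this, Measure.prod_apply_symm (by
    have h2 : {p : ℝ × ℝ | x - p.2 < p.1} = (fun p : ℝ × ℝ => p.1 + p.2) ⁻¹' (Set.Ioi x) := by
      ext p; simp [Set.mem_Ioi, sub_lt_iff_lt_add]
    rw [h2]; exact (measurable_fst.add measurable_snd) measurableSet_Ioi)]
  congr 1

lemma posMod_apply_of_subset {B : Set ℝ} (V : Measure ℝ) (hB : MeasurableSet B)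
    (h : B ⊆ Set.Ioi 0) : posMod V B = V B := by
  rw [posMod, Measure.map_apply measurable_maxz hB]
  congr 1
  ext y; simp only [Set.mem_preimage]
  constructor
  · intro hy
    have := h hy; simp only [Set.mem_Ioi] at this
    have hy0 : 0 < y := by
      rcases le_or_gt y 0 with h' | h'
      · rw [max_eq_right h'] at this; linarith
      · exact h'
    rwa [max_eq_left hy0.le] at hy
  · intro hy
    have := h hy; simp only [Set.mem_Ioi] at this
    rwa [max_eq_left this.le]

lemma posMod_Ioi_of_nonneg (V : Measure ℝ) {x : ℝ} (hx : 0 ≤ x) :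
    posMod V (Set.Ioi x) = V (Set.Ioi x) :=
  posMod_apply_of_subset V measurableSet_Ioi (fun _ hy => lt_of_le_of_lt hx hy)

lemma posMod_Ioi_of_neg (V : Measure ℝ) [IsProbabilityMeasure V] {x : ℝ} (hx : x < 0) :
    posMod V (Set.Ioi x) = 1 := by
  rw [posMod, Measure.map_apply measurable_maxz measurableSet_Ioi]
  have : (fun y : ℝ => max y 0) ⁻¹' (Set.Ioi x) = Set.univ := by
    ext y; simp only [Set.mem_preimage, Set.mem_Ioi, Set.mem_univ, iff_true]
    exact lt_of_lt_of_le hx (le_max_right _ _)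
  rw [this]; simp

lemma posMod_restrict (V : Measure ℝ) {S : Set ℝ} (hS : MeasurableSet S) (h : S ⊆ Set.Ioi 0) :
    (posMod V).restrict S = V.restrict S := by
  ext B hB
  rw [Measure.restrict_apply hB, Measure.restrict_apply hB,
    posMod_apply_of_subset V (hB.inter hS) (fun y hy => h hy.2)]

section Tail

variable (V : Measure ℝ) [IsProbabilityMeasure V]

lemma tau_meas : Measurable (fun z : ℝ => posMod V (Set.Ioi z)) := by
  apply Antitone.measurable
  intro a b hab
  exact measure_mono (Set.Ioi_subset_Ioi hab)

lemma tau_ne_top (z : ℝ) : posMod V (Set.Ioi z) ≠ ⊤ := measure_ne_top _ _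

lemma tau_le_one (z : ℝ) : posMod V (Set.Ioi z) ≤ 1 := prob_le_one

lemma ofReal_T (z : ℝ) : ENNReal.ofReal (tailDist (posMod V) z) = posMod V (Set.Ioi z) :=
  ENNReal.ofReal_toReal (tau_ne_top V z)

lemma T_meas : Measurable (fun z : ℝ => tailDist (posMod V) z) :=
  (tau_meas V).ennreal_toReal

lemma T_antitone : Antitone (fun z : ℝ => tailDist (posMod V) z) := by
  intro a b hab
  exact ENNReal.toReal_mono (tau_ne_top V a) (measure_mono (Set.Ioi_subset_Ioi hab))

lemma T_le_one (z : ℝ) : tailDist (posMod V) z ≤ 1 := by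
  have := ENNReal.toReal_mono (by simp) (tau_le_one V z)
  simpa [tailDist] using this

lemma T_nonneg (z : ℝ) : 0 ≤ tailDist (posMod V) z := ENNReal.toReal_nonneg

lemma integrable_T_comp (μ : Measure ℝ) [IsFiniteMeasure μ] (x : ℝ) :
    Integrable (fun y => tailDist (posMod V) (x - y)) μ := by
  apply (integrable_const (1:ℝ)).mono'
  · exact ((T_meas V).comp (measurable_const.sub measurable_id)).aestronglyMeasurable
  · refine Eventually.of_forall (fun y => ?_)
    rw [Real.norm_of_nonneg (T_nonneg V _)]
    exact T_le_one V _

lemma lint_tail_eq (μ : Measure ℝ) [IsFiniteMeasure μ] (S : Set ℝ) (x : ℝ) :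
    ∫⁻ y in S, posMod V (Set.Ioi (x - y)) ∂μ
      = ENNReal.ofReal (∫ y in S, tailDist (posMod V) (x - y) ∂μ) := by
  rw [ofReal_integral_eq_lintegral_ofReal ((integrable_T_comp V μ x).integrableOn)
    (Eventually.of_forall (fun y => T_nonneg V _))]
  exact lintegral_congr (fun y => (ofReal_T V _).symm)

end Tail

section Mgf

variable {V : Measure ℝ} [IsProbabilityMeasure V] {α : ℝ}

lemma integrable_exp_V (hα : 0 ≤ α) (hV : Integrable (fun x => Real.exp (α * x)) (posMod V)) :
    Integrable (fun x => Real.exp (α * x)) V := by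
  have h1 : Integrable (fun x => Real.exp (α * max x 0)) V := by
    rw [posMod] at hV
    exact (integrable_map_measure hV.1 measurable_maxz.aemeasurable).mp hV
  apply h1.mono'
  · exact ((Real.measurable_exp).comp (measurable_const.mul measurable_id)).aestronglyMeasurable
  · refine Eventually.of_forall (fun y => ?_)
    rw [Real.norm_of_nonneg (Real.exp_nonneg _)]
    exact Real.exp_le_exp.mpr (mul_le_mul_of_nonneg_left (le_max_left _ _) hα)

lemma lint_exp_eq (μ : Measure ℝ) (h : Integrable (fun x => Real.exp (α * x)) μ) :
    ∫⁻ y, ENNReal.ofReal (Real.exp (α * y)) ∂μ = ENNReal.ofReal (mgfVal μ α) := by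
  rw [mgfVal, ofReal_integral_eq_lintegral_ofReal h
    (Eventually.of_forall (fun y => Real.exp_nonneg _))]

lemma lint_exp_conv (μ ν : Measure ℝ) [SFinite μ] [SFinite ν] :
    ∫⁻ y, ENNReal.ofReal (Real.exp (α * y)) ∂(convDist μ ν)
      = (∫⁻ y, ENNReal.ofReal (Real.exp (α * y)) ∂μ)
        * (∫⁻ y, ENNReal.ofReal (Real.exp (α * y)) ∂ν) := by
  rw [convDist, lintegral_map (by fun_prop) (by fun_prop)]
  rw [← lintegral_prod_mul (by fun_prop) (by fun_prop)]
  apply lintegral_congr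
  intro p
  rw [← ENNReal.ofReal_mul (Real.exp_nonneg _), ← Real.exp_add, mul_add]

lemma lint_exp_convIter (hα : 0 ≤ α) (hVi : Integrable (fun x => Real.exp (α * x)) (posMod V))
    (n : ℕ) :
    ∫⁻ y, ENNReal.ofReal (Real.exp (α * y)) ∂(convIter V n)
      = (ENNReal.ofReal (mgfVal V α)) ^ n := by
  induction n with
  | zero =>
      simp [convIter, lintegral_dirac]
  | succ n ih =>
      rw [convIter, lint_exp_conv, ih, lint_exp_eq V (integrable_exp_V hα hVi), pow_succ]

lemma chernoff (hα : 0 ≤ α) (hVi : Integrable (fun x => Real.exp (α * x)) (posMod V))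
    (n : ℕ) (z : ℝ) :
    convIter V n (Set.Ioi z)
      ≤ ENNReal.ofReal (Real.exp (-(α * z)) * (mgfVal V α) ^ n) := by
  have h1 : convIter V n (Set.Ioi z)
      ≤ ∫⁻ y, ENNReal.ofReal (Real.exp (α * (y - z))) ∂(convIter V n) := by
    rw [← setLIntegral_one]
    refine le_trans (setLIntegral_mono (by fun_prop) (fun y hy => ?_))
      (setLIntegral_le_lintegral _ _)
    rw [show (1:ENNReal) = ENNReal.ofReal 1 by simp]
    apply ENNReal.ofReal_le_ofReal
    rw [← Real.exp_zero]
    apply Real.exp_le_exp.mpr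
    exact mul_nonneg hα (by simp only [Set.mem_Ioi] at hy; linarith)
  calc convIter V n (Set.Ioi z) ≤ _ := h1
    _ = ENNReal.ofReal (Real.exp (-(α * z)))
          * ∫⁻ y, ENNReal.ofReal (Real.exp (α * y)) ∂(convIter V n) := by
        rw [← lintegral_const_mul _ (by fun_prop)]
        apply lintegral_congr
        intro y
        rw [← ENNReal.ofReal_mul (Real.exp_nonneg _), ← Real.exp_add]
        ring_nf
    _ = ENNReal.ofReal (Real.exp (-(α * z))) * (ENNReal.ofReal (mgfVal V α)) ^ n := by
        rw [lint_exp_convIter hα hVi]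
    _ = _ := by
        rw [← ENNReal.ofReal_pow (by
          rw [mgfVal]; positivity), ← ENNReal.ofReal_mul (Real.exp_nonneg _)]

lemma mgfVal_pos (hα : 0 ≤ α) (hVi : Integrable (fun x => Real.exp (α * x)) (posMod V))
    (hpos : 0 < tailDist (posMod V) 0) : 0 < mgfVal V α := by
  have h1 : (V (Set.Ioi 0)).toReal ≤ mgfVal V α := by
    rw [mgfVal]
    have : (V (Set.Ioi 0)).toReal = ∫ y in Set.Ioi 0, (1:ℝ) ∂V := by
      simp [Measure.restrict_apply_univ, Measure.real]
    rw [this]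
    refine le_trans (setIntegral_mono_on (integrable_const 1).integrableOn
      (integrable_exp_V hα hVi).integrableOn measurableSet_Ioi (fun y hy => ?_))
      (setIntegral_le_integral (integrable_exp_V hα hVi)
        (Eventually.of_forall (fun y => Real.exp_nonneg _)))
    rw [← Real.exp_zero]
    exact Real.exp_le_exp.mpr (mul_nonneg hα (le_of_lt hy))
  have h2 : 0 < (V (Set.Ioi 0)).toReal := by
    rwa [tailDist, posMod_Ioi_of_nonneg V le_rfl] at hpos
  linarith

lemma convIter_one_Ioi (x : ℝ) : convIter V 1 (Set.Ioi x) = V (Set.Ioi x) := by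
  show convDist (Measure.dirac 0) V (Set.Ioi x) = _
  rw [convDist_apply_Ioi]
  have hpt : ∀ y : ℝ, Measure.dirac 0 (Set.Ioi (x - y))
      = (Set.Ioi x).indicator (fun _ => (1:ENNReal)) y := by
    intro y
    rw [Measure.dirac_apply' _ measurableSet_Ioi]
    by_cases h : x < y
    · rw [Set.indicator_of_mem (by simpa [Set.mem_Ioi] using h),
        Set.indicator_of_mem (by simp [Set.mem_Ioi]; linarith)]
      rfl
    · rw [Set.indicator_of_notMem (by simp [Set.mem_Ioi]; linarith),
        Set.indicator_of_notMem (by simpa [Set.mem_Ioi] using h)]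
  rw [lintegral_congr hpt, lintegral_indicator measurableSet_Ioi, setLIntegral_one]

end Mgf

section Events

variable {V : Measure ℝ} [IsProbabilityMeasure V] {α : ℝ}

lemma ratio_event (hV : MemCE α V) (y δ : ℝ) (hδ : 0 < δ) :
    ∀ᶠ x in atTop,
      tailDist (posMod V) (x - y) ≤ (Real.exp (α * y) + δ) * tailDist (posMod V) x := by
  have h := (hV.2.1 y).eventually (eventually_le_nhds (lt_add_of_pos_right _ hδ))
  filter_upwards [h] with x hx
  have hT := hV.1 x
  rwa [div_le_iff₀ hT] at hx

lemma tendsto_ratio_integral (hV : MemCE α V) (μ : Measure ℝ) [IsFiniteMeasure μ]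
    {S : Set ℝ} (hS : MeasurableSet S) (C : ℝ)
    (hbound : ∀ᶠ x in atTop, ∀ y ∈ S,
      tailDist (posMod V) (x - y) ≤ C * tailDist (posMod V) x) :
    Tendsto (fun x => ∫ y in S, tailDist (posMod V) (x - y) / tailDist (posMod V) x ∂μ)
      atTop (nhds (∫ y in S, Real.exp (α * y) ∂μ)) := by
  apply tendsto_integral_filter_of_dominated_convergence (fun _ => C)
  · refine Eventually.of_forall (fun x => ?_)
    exact (((T_meas V).comp (measurable_const.sub measurable_id)).div_const
      _).aestronglyMeasurable
  · filter_upwards [hbound] with x hx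
    refine (ae_restrict_iff' hS).mpr (Eventually.of_forall (fun y hy => ?_))
    have hT := hV.1 x
    rw [Real.norm_of_nonneg (div_nonneg (T_nonneg V _) (T_nonneg V _)), div_le_iff₀ hT]
    calc tailDist (posMod V) (x - y) ≤ C * tailDist (posMod V) x := hx y hy
      _ = C * tailDist (posMod V) x := rfl
  · exact integrable_const C
  · exact Eventually.of_forall (fun y => hV.2.1 y)

lemma tail_WW (V : Measure ℝ) [IsProbabilityMeasure V] {x : ℝ} (hx : 0 ≤ x) :
    tailDist (convDist (posMod V) (posMod V)) x
      = (∫ y in Set.Iic x, tailDist (posMod V) (x - y) ∂(posMod V))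
        + tailDist (posMod V) x := by
  have h1 : convDist (posMod V) (posMod V) (Set.Ioi x)
      = ENNReal.ofReal (∫ y in Set.Iic x, tailDist (posMod V) (x - y) ∂(posMod V))
        + posMod V (Set.Ioi x) := by
    rw [convDist_apply_Ioi]
    rw [← lintegral_add_compl (fun y => posMod V (Set.Ioi (x - y))) measurableSet_Iic]
    rw [Set.compl_Iic, lint_tail_eq]
    congr 1
    rw [setLIntegral_congr_fun measurableSet_Ioi
      (fun y (hy : y ∈ Set.Ioi x) => posMod_Ioi_of_neg V (x := x - y) (by
        simp only [Set.mem_Ioi] at hy; linarith))]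
    rw [setLIntegral_one]
  rw [tailDist, h1, ENNReal.toReal_add (by simp) (tau_ne_top V x), ENNReal.toReal_ofReal
    (setIntegral_nonneg measurableSet_Iic (fun y _ => T_nonneg V _))]
  rfl

lemma refl_ineq (V : Measure ℝ) [IsProbabilityMeasure V] (A x : ℝ) :
    ∫ z in Set.Iic A, (tailDist (posMod V) (x - z) - tailDist (posMod V) x) ∂(posMod V)
      ≤ ∫ y in Set.Ioc (x - A) x, tailDist (posMod V) (x - y) ∂(posMod V) := by
  set W := posMod V with hW
  set SA : Set (ℝ × ℝ) := {p : ℝ × ℝ | p.1 ≤ A ∧ x - p.1 < p.2 ∧ p.2 ≤ x} with hSAdef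
  set SB : Set (ℝ × ℝ) := {p : ℝ × ℝ | x - A < p.1 ∧ p.1 ≤ x ∧ x - p.1 < p.2} with hSBdef
  have hSA : MeasurableSet SA := by
    apply MeasurableSet.inter (measurable_fst measurableSet_Iic)
    exact MeasurableSet.inter
      (measurableSet_lt (measurable_const.sub measurable_fst) measurable_snd)
      (measurable_snd measurableSet_Iic)
  have hSB : MeasurableSet SB := by
    apply MeasurableSet.inter (measurable_fst measurableSet_Ioi)
    exact MeasurableSet.inter (measurable_fst measurableSet_Iic)
      (measurableSet_lt (measurable_const.sub measurable_fst) measurable_snd)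
  have hA : (W.prod W) SA = ∫⁻ z in Set.Iic A, W (Set.Ioc (x - z) x) ∂W := by
    rw [Measure.prod_apply hSA, ← lintegral_indicator measurableSet_Iic]
    apply lintegral_congr
    intro z
    by_cases hz : z ≤ A
    · rw [Set.indicator_of_mem (Set.mem_Iic.mpr hz)]
      congr 1
      ext y
      simp only [Set.mem_preimage, Set.mem_Ioc, hSAdef, Set.mem_setOf_eq]
      tauto
    · rw [Set.indicator_of_notMem (fun h => hz (Set.mem_Iic.mp h))]
      have : (Prod.mk z ⁻¹' SA) = ∅ := by
        ext y; simp only [Set.mem_preimage, hSAdef, Set.mem_setOf_eq, Set.mem_empty_iff_false]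
        tauto
      rw [this]; simp
  have hB : (W.prod W) SB = ∫⁻ y in Set.Ioc (x - A) x, W (Set.Ioi (x - y)) ∂W := by
    rw [Measure.prod_apply hSB, ← lintegral_indicator measurableSet_Ioc]
    apply lintegral_congr
    intro y
    by_cases hy : y ∈ Set.Ioc (x - A) x
    · rw [Set.indicator_of_mem hy]
      simp only [Set.mem_Ioc] at hy
      congr 1
      ext z
      simp only [Set.mem_preimage, Set.mem_Ioi, hSBdef, Set.mem_setOf_eq]
      tauto
    · rw [Set.indicator_of_notMem hy]
      simp only [Set.mem_Ioc] at hy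
      have : (Prod.mk y ⁻¹' SB) = ∅ := by
        ext z; simp only [Set.mem_preimage, hSBdef, Set.mem_setOf_eq, Set.mem_empty_iff_false]
        tauto
      rw [this]; simp
  have hsub : SA ⊆ Prod.swap ⁻¹' SB := by
    rintro ⟨z, y⟩ hp
    simp only [hSAdef, Set.mem_setOf_eq] at hp
    obtain ⟨h1, h2, h3⟩ := hp
    simp only [Set.mem_preimage, hSBdef, Set.mem_setOf_eq, Prod.fst_swap, Prod.snd_swap]
    exact ⟨by linarith, h3, by linarith⟩
  have hkey : (W.prod W) SA ≤ (W.prod W) SB := by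
    calc (W.prod W) SA ≤ (W.prod W) (Prod.swap ⁻¹' SB) := measure_mono hsub
      _ = (Measure.map Prod.swap (W.prod W)) SB := by
          rw [Measure.map_apply measurable_swap hSB]
      _ = (W.prod W) SB := by rw [Measure.prod_swap]
  -- real conversions
  have hIoc : ∀ z : ℝ, W (Set.Ioc (x - z) x) = W (Set.Ioi (x - z)) - W (Set.Ioi x) := by
    intro z
    rcases le_or_gt (x - z) x with h | h
    · rw [← Set.Ioc_union_Ioi_eq_Ioi h, measure_union _ measurableSet_Ioi]
      · rw [ENNReal.add_sub_cancel_right (tau_ne_top V x)]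
      · exact Set.Ioc_disjoint_Ioi le_rfl
    · rw [Set.Ioc_eq_empty (by linarith)]
      have : W (Set.Ioi (x - z)) ≤ W (Set.Ioi x) :=
        measure_mono (Set.Ioi_subset_Ioi h.le)
      simp [tsub_eq_zero_of_le this]
  have hmeas : Measurable (fun z : ℝ => W (Set.Ioc (x - z) x)) := by
    have : (fun z : ℝ => W (Set.Ioc (x - z) x))
        = fun z => W (Set.Ioi (x - z)) - W (Set.Ioi x) := funext hIoc
    rw [this]
    exact ((tau_meas V).comp (measurable_const.sub measurable_id)).sub measurable_const
  have hfin : ∀ z : ℝ, W (Set.Ioc (x - z) x) < ⊤ :=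
    fun z => lt_of_le_of_lt (measure_mono (Set.subset_univ _)) (by simp [measure_lt_top])
  have hL : ∫ z in Set.Iic A, (tailDist W (x - z) - tailDist W x) ∂W
      ≤ ((W.prod W) SA).toReal := by
    rw [hA, ← integral_toReal hmeas.aemeasurable (Eventually.of_forall hfin)]
    apply integral_mono
    · exact ((integrable_T_comp V W x).sub (integrable_const _)).integrableOn
    · refine ((integrable_const (1:ℝ)).mono' (hmeas.ennreal_toReal).aestronglyMeasurable
        (Eventually.of_forall (fun z => ?_))).integrableOn
      rw [Real.norm_of_nonneg ENNReal.toReal_nonneg]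
      have : W (Set.Ioc (x - z) x) ≤ 1 := prob_le_one
      have h2 := ENNReal.toReal_mono (by simp) this
      simpa using h2
    · intro z
      show tailDist W (x - z) - tailDist W x ≤ (W (Set.Ioc (x - z) x)).toReal
      rcases le_or_gt 0 z with h | h
      · rw [hIoc z, ENNReal.toReal_sub_of_le
          (measure_mono (Set.Ioi_subset_Ioi (by linarith))) (tau_ne_top V _)]
        exact le_rfl
      · refine le_trans ?_ ENNReal.toReal_nonneg
        have : tailDist W (x - z) ≤ tailDist W x := T_antitone V (by linarith)
        linarith
  have hR : ((W.prod W) SB).toReal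
      = ∫ y in Set.Ioc (x - A) x, tailDist W (x - y) ∂W := by
    rw [hB, lint_tail_eq, ENNReal.toReal_ofReal
      (setIntegral_nonneg measurableSet_Ioc (fun y _ => T_nonneg V _))]
  calc ∫ z in Set.Iic A, (tailDist W (x - z) - tailDist W x) ∂W
      ≤ ((W.prod W) SA).toReal := hL
    _ ≤ ((W.prod W) SB).toReal :=
        ENNReal.toReal_mono (measure_ne_top _ _) hkey
    _ = _ := hR

end Events

section Core

variable {V : Measure ℝ} [IsProbabilityMeasure V] {α : ℝ}

lemma core (hα : 0 ≤ α) (hV : MemCE α V) {δ : ℝ} (hδ : 0 < δ) :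
    ∃ A : ℝ, 1 ≤ A ∧ ∀ᶠ x in atTop,
      ∫ y in Set.Iic (x - A), tailDist (posMod V) (x - y) ∂V
        ≤ (mgfVal V α + δ) * tailDist (posMod V) x := by
  have hWint : Integrable (fun x => Real.exp (α * x)) (posMod V) := hV.2.2.1
  have hVint : Integrable (fun x => Real.exp (α * x)) V := integrable_exp_V hα hWint
  set W := posMod V with hWdef
  set mp := mgfVal (posMod V) α with hmp
  set m := mgfVal V α with hm
  -- Step 1 : choice of A
  set g : ℝ → ℝ := fun a => ∫ y in Set.Iic a, Real.exp (α * y) ∂W with hgdef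
  have hg : Tendsto (fun k : ℕ => g (k : ℝ)) atTop (nhds mp) := by
    have hU : (⋃ k : ℕ, Set.Iic ((k : ℝ))) = Set.univ := by
      ext y
      simp only [Set.mem_iUnion, Set.mem_Iic, Set.mem_univ, iff_true]
      exact exists_nat_ge y
    have := tendsto_setIntegral_of_monotone (μ := W)
      (f := fun y => Real.exp (α * y)) (s := fun k : ℕ => Set.Iic ((k : ℝ)))
      (fun k => measurableSet_Iic)
      (fun i j hij => Set.Iic_subset_Iic.mpr (by exact_mod_cast hij))
      (by rw [hU]; exact hWint.integrableOn)
    rwa [hU, Measure.restrict_univ] at this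
  have hw : Tendsto (fun k : ℕ => (W (Set.Iic (k : ℝ))).toReal) atTop (nhds 1) := by
    have hU : (⋃ k : ℕ, Set.Iic ((k : ℝ))) = Set.univ := by
      ext y
      simp only [Set.mem_iUnion, Set.mem_Iic, Set.mem_univ, iff_true]
      exact exists_nat_ge y
    have h1 := tendsto_measure_iUnion_atTop (μ := W)
      (s := fun k : ℕ => Set.Iic ((k : ℝ)))
      (fun i j hij => Set.Iic_subset_Iic.mpr (by exact_mod_cast hij))
    rw [hU] at h1
    have h2 := (ENNReal.tendsto_toReal (a := W Set.univ) (by simp)).comp h1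
    simpa [Function.comp_def] using h2
  have hcomb : Tendsto
      (fun k : ℕ => 2 * mp - 1 - 2 * g (k : ℝ) + (W (Set.Iic (k : ℝ))).toReal) atTop
      (nhds 0) := by
    have := ((tendsto_const_nhds (x := 2 * mp - 1)).sub (hg.const_mul 2)).add hw
    have h0 : 2 * mp - 1 - 2 * mp + 1 = 0 := by ring
    rwa [h0] at this
  obtain ⟨k, hk⟩ := ((hcomb.eventually (eventually_le_nhds (by linarith : (0:ℝ) < δ/8))).and
    (eventually_ge_atTop 1)).exists
  set A : ℝ := (k : ℝ) with hAdef
  have hA1 : 1 ≤ A := by rw [hAdef]; exact_mod_cast hk.2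
  have hA0 : 0 < A := by linarith
  have hηA : 2 * mp - 1 - 2 * g A + (W (Set.Iic A)).toReal ≤ δ / 8 := hk.1
  -- Step 2 : the tendsto facts
  set C : ℝ := Real.exp (α * A) + 1 with hC
  have ev0 : ∀ᶠ x in atTop, tailDist W (x - A) ≤ C * tailDist W x :=
    ratio_event hV A 1 one_pos
  have hbound1 : ∀ᶠ x in atTop, ∀ y ∈ Set.Iic (0:ℝ),
      tailDist W (x - y) ≤ 1 * tailDist W x := by
    refine Eventually.of_forall (fun x y hy => ?_)
    rw [one_mul]
    exact T_antitone V (by simp only [Set.mem_Iic] at hy; linarith)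
  have hboundC : ∀ᶠ x in atTop, ∀ y ∈ Set.Iic A,
      tailDist W (x - y) ≤ C * tailDist W x := by
    filter_upwards [ev0] with x hx y hy
    simp only [Set.mem_Iic] at hy
    exact le_trans (T_antitone V (by linarith)) hx
  have hboundC2 : ∀ᶠ x in atTop, ∀ y ∈ Set.Ioc (0:ℝ) A,
      tailDist W (x - y) ≤ C * tailDist W x := by
    filter_upwards [hboundC] with x hx y hy
    exact hx y (Set.mem_Iic.mpr hy.2)
  have E1 := tendsto_ratio_integral hV V measurableSet_Iic 1 hbound1
  have E2 := tendsto_ratio_integral hV V measurableSet_Ioc C hboundC2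
  have E4 := tendsto_ratio_integral hV W measurableSet_Iic C hboundC
  have E3 : Tendsto
      (fun x => (∫ y in Set.Iic x, tailDist W (x - y) ∂W) / tailDist W x) atTop
      (nhds (2 * mp - 1)) := by
    have h4 := hV.2.2.2
    apply Tendsto.congr' _ (h4.sub_const 1)
    filter_upwards [eventually_ge_atTop (0:ℝ)] with x hx
    rw [tail_WW V hx, add_div, div_self (ne_of_gt (hV.1 x))]
    ring
  -- Step 3 : eventual inequalities
  have e1 := E1.eventually (eventually_le_nhds
    (lt_add_of_pos_right _ (by linarith : (0:ℝ) < δ/8)))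
  have e2 := E2.eventually (eventually_le_nhds
    (lt_add_of_pos_right _ (by linarith : (0:ℝ) < δ/8)))
  have e3 := E3.eventually (eventually_le_nhds
    (lt_add_of_pos_right _ (by linarith : (0:ℝ) < δ/8)))
  have e4 := E4.eventually (eventually_ge_nhds
    (by linarith [hδ] : (∫ y in Set.Iic A, Real.exp (α * y) ∂W) - δ/8
      < ∫ y in Set.Iic A, Real.exp (α * y) ∂W))
  refine ⟨A, hA1, ?_⟩
  filter_upwards [e1, e2, e3, e4, eventually_ge_atTop (2*A + 1)] with x h1 h2 h3 h4 hx
  have hTx : 0 < tailDist W x := hV.1 x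
  have hTxne : tailDist W x ≠ 0 := ne_of_gt hTx
  -- integrability
  have hint : ∀ S : Set ℝ, IntegrableOn (fun y => tailDist W (x - y)) S V :=
    fun S => (integrable_T_comp V V x).integrableOn
  have hintW : ∀ S : Set ℝ, IntegrableOn (fun y => tailDist W (x - y)) S W :=
    fun S => (integrable_T_comp V W x).integrableOn
  -- convert ratio integrals into tail integrals
  have hdiv : ∀ (μ : Measure ℝ) (S : Set ℝ),
      ∫ y in S, tailDist W (x - y) / tailDist W x ∂μ
        = (∫ y in S, tailDist W (x - y) ∂μ) / tailDist W x := by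
    intro μ S
    exact integral_div (tailDist W x) _
  rw [hdiv, div_le_iff₀ hTx] at h1 h2
  rw [div_le_iff₀ hTx] at h3
  rw [hdiv, le_div_iff₀ hTx] at h4
  -- decompositions
  have hd1 : Set.Iic (x - A) = Set.Iic A ∪ Set.Ioc A (x - A) :=
    (Set.Iic_union_Ioc_eq_Iic (by linarith)).symm
  have hd2 : Set.Iic A = Set.Iic (0:ℝ) ∪ Set.Ioc 0 A :=
    (Set.Iic_union_Ioc_eq_Iic (by linarith)).symm
  have hd3 : Set.Iic x = Set.Iic (x - A) ∪ Set.Ioc (x - A) x :=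
    (Set.Iic_union_Ioc_eq_Iic (by linarith)).symm
  -- middle term via W
  have hVW : ∫ y in Set.Ioc A (x - A), tailDist W (x - y) ∂V
      = ∫ y in Set.Ioc A (x - A), tailDist W (x - y) ∂W := by
    rw [hWdef, ← posMod_restrict V measurableSet_Ioc
      (fun y hy => lt_trans hA0 hy.1)]
  -- reflection bound
  have hrefl := refl_ineq V A x
  have hJA : ∫ z in Set.Iic A, (tailDist W (x - z) - tailDist W x) ∂W
      = (∫ z in Set.Iic A, tailDist W (x - z) ∂W)
        - (W (Set.Iic A)).toReal * tailDist W x := by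
    rw [integral_sub (hintW _) (integrable_const _).integrableOn, setIntegral_const]
    simp [smul_eq_mul, Measure.real]
  rw [hJA] at hrefl
  -- decompose JW
  have hJW : ∫ y in Set.Iic x, tailDist W (x - y) ∂W
      = (∫ y in Set.Iic A, tailDist W (x - y) ∂W)
        + (∫ y in Set.Ioc A (x - A), tailDist W (x - y) ∂W)
        + (∫ y in Set.Ioc (x - A) x, tailDist W (x - y) ∂W) := by
    rw [hd3, setIntegral_union (Set.Iic_disjoint_Ioc le_rfl) measurableSet_Ioc
      (hintW _) (hintW _), hd1, setIntegral_union (Set.Iic_disjoint_Ioc le_rfl)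
      measurableSet_Ioc (hintW _) (hintW _)]
  -- bound the middle integral
  have hmid : ∫ y in Set.Ioc A (x - A), tailDist W (x - y) ∂W
      ≤ (δ / 2) * tailDist W x := by
    have hJAge : (∫ z in Set.Iic A, tailDist W (x - z) ∂W)
        ≥ (g A - δ/8) * tailDist W x := h4
    have hJRge : (∫ y in Set.Ioc (x - A) x, tailDist W (x - y) ∂W)
        ≥ (g A - δ/8) * tailDist W x - (W (Set.Iic A)).toReal * tailDist W x := by
      calc (∫ y in Set.Ioc (x - A) x, tailDist W (x - y) ∂W)
          ≥ (∫ z in Set.Iic A, tailDist W (x - z) ∂W)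
            - (W (Set.Iic A)).toReal * tailDist W x := hrefl
        _ ≥ _ := by linarith [hJAge]
    have hJWle : ∫ y in Set.Iic x, tailDist W (x - y) ∂W
        ≤ (2 * mp - 1 + δ/8) * tailDist W x := h3
    have hprod := mul_le_mul_of_nonneg_right hηA hTx.le
    linarith [hJAge, hJRge, hJWle, hJW, hprod]
  -- final combination
  have hIA : (∫ y in Set.Iic (0:ℝ), Real.exp (α * y) ∂V)
      + (∫ y in Set.Ioc (0:ℝ) A, Real.exp (α * y) ∂V) ≤ m := by
    rw [← setIntegral_union (Set.Iic_disjoint_Ioc le_rfl) measurableSet_Ioc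
      hVint.integrableOn hVint.integrableOn, ← hd2]
    exact setIntegral_le_integral hVint
      (Eventually.of_forall (fun y => Real.exp_nonneg _))
  calc ∫ y in Set.Iic (x - A), tailDist W (x - y) ∂V
      = (∫ y in Set.Iic (0:ℝ), tailDist W (x - y) ∂V)
        + (∫ y in Set.Ioc (0:ℝ) A, tailDist W (x - y) ∂V)
        + (∫ y in Set.Ioc A (x - A), tailDist W (x - y) ∂V) := by
        rw [hd1, setIntegral_union (Set.Iic_disjoint_Ioc le_rfl) measurableSet_Ioc
          (hint _) (hint _), hd2, setIntegral_union (Set.Iic_disjoint_Ioc le_rfl)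
          measurableSet_Ioc (hint _) (hint _)]
    _ ≤ ((∫ y in Set.Iic (0:ℝ), Real.exp (α * y) ∂V) + δ/8) * tailDist W x
        + ((∫ y in Set.Ioc (0:ℝ) A, Real.exp (α * y) ∂V) + δ/8) * tailDist W x
        + (δ/2) * tailDist W x := by
        rw [hVW]
        exact add_le_add (add_le_add h1 h2) hmid
    _ ≤ (m + δ) * tailDist W x := by
        have hprod := mul_le_mul_of_nonneg_right hIA hTx.le
        nlinarith [hTx]

end Core

section Slices

variable {V : Measure ℝ} [IsProbabilityMeasure V] {α : ℝ}

lemma slice_iter (V : Measure ℝ) [IsProbabilityMeasure V] {b x₁ : ℝ} (hb : 0 ≤ b)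
    (Θ : ENNReal)
    (hθ : ∀ x ≥ x₁, posMod V (Set.Ioi (x + b)) ≤ Θ * posMod V (Set.Ioi x)) :
    ∀ x ≥ x₁, ∀ j : ℕ,
      posMod V (Set.Ioi (x + j * b)) ≤ Θ ^ j * posMod V (Set.Ioi x) := by
  intro x hx j
  induction j with
  | zero => simp
  | succ j ih =>
      have h1 : x + (j + 1 : ℕ) * b = (x + j * b) + b := by push_cast; ring
      rw [h1, pow_succ, mul_comm (Θ^j) Θ, mul_assoc]
      calc posMod V (Set.Ioi ((x + j*b) + b)) ≤ Θ * posMod V (Set.Ioi (x + j*b)) :=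
            hθ _ (by nlinarith [hb])
        _ ≤ Θ * (Θ^j * posMod V (Set.Ioi x)) := mul_le_mul_right ih Θ

lemma chunkC_sum (hα : 0 ≤ α) (hV : MemCE α V) {b x : ℝ} (hb : 0 < b) (hx0 : 0 ≤ x)
    (hslice : ∀ j : ℕ, posMod V (Set.Ioi (x + j * b))
      ≤ (ENNReal.ofReal (2 * Real.exp (-(α*b))))^j * posMod V (Set.Ioi x))
    (n : ℕ) :
    ∀ J : ℕ, ∫⁻ y in Set.Ioc x (x + J * b), convIter V n (Set.Ioi (x - y)) ∂V
      ≤ ENNReal.ofReal ((mgfVal V α)^n * Real.exp (α*b)) * (ENNReal.ofReal 2)^J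
        * posMod V (Set.Ioi x) := by
  have hm0 : 0 < mgfVal V α := mgfVal_pos hα hV.2.2.1 (hV.1 0)
  intro J
  induction J with
  | zero => simp
  | succ J ih =>
      have hle1 : x ≤ x + (J:ℝ) * b := by
        have : (0:ℝ) ≤ (J:ℝ) * b := by positivity
        linarith
      have hle2 : x + (J:ℝ) * b ≤ x + ((J+1:ℕ):ℝ) * b := by
        push_cast
        nlinarith [hb]
      have hsplit : Set.Ioc x (x + ((J+1:ℕ):ℝ) * b)
          = Set.Ioc x (x + (J:ℝ)*b) ∪ Set.Ioc (x + (J:ℝ)*b) (x + ((J+1:ℕ):ℝ)*b) :=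
        (Set.Ioc_union_Ioc_eq_Ioc hle1 hle2).symm
      rw [hsplit, lintegral_union measurableSet_Ioc
        (Set.Ioc_disjoint_Ioc.mpr (le_trans (min_le_left _ _) (le_max_right _ _)))]
      have hpiece : ∫⁻ y in Set.Ioc (x + (J:ℝ)*b) (x + ((J+1:ℕ):ℝ)*b),
          convIter V n (Set.Ioi (x - y)) ∂V
            ≤ ENNReal.ofReal ((mgfVal V α)^n * Real.exp (α*b)) * (ENNReal.ofReal 2)^J
              * posMod V (Set.Ioi x) := by
        have hub : ∀ y ∈ Set.Ioc (x + (J:ℝ)*b) (x + ((J+1:ℕ):ℝ)*b),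
            convIter V n (Set.Ioi (x - y))
              ≤ ENNReal.ofReal (Real.exp (α * ((J+1:ℕ):ℝ) * b) * (mgfVal V α)^n) := by
          intro y hy
          refine le_trans (chernoff hα hV.2.2.1 n (x - y)) (ENNReal.ofReal_le_ofReal ?_)
          refine mul_le_mul_of_nonneg_right (Real.exp_le_exp.mpr ?_) (pow_nonneg hm0.le n)
          have h1 : y ≤ x + ((J+1:ℕ):ℝ)*b := hy.2
          nlinarith [hα]
        calc ∫⁻ y in Set.Ioc (x + (J:ℝ)*b) (x + ((J+1:ℕ):ℝ)*b),
              convIter V n (Set.Ioi (x - y)) ∂V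
            ≤ ∫⁻ _ in Set.Ioc (x + (J:ℝ)*b) (x + ((J+1:ℕ):ℝ)*b),
                ENNReal.ofReal (Real.exp (α * ((J+1:ℕ):ℝ) * b) * (mgfVal V α)^n) ∂V :=
              setLIntegral_mono measurable_const hub
          _ = ENNReal.ofReal (Real.exp (α * ((J+1:ℕ):ℝ) * b) * (mgfVal V α)^n)
                * V (Set.Ioc (x + (J:ℝ)*b) (x + ((J+1:ℕ):ℝ)*b)) := by
              rw [setLIntegral_const]
          _ ≤ ENNReal.ofReal (Real.exp (α * ((J+1:ℕ):ℝ) * b) * (mgfVal V α)^n)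
                * posMod V (Set.Ioi (x + (J:ℝ)*b)) := by
              apply mul_le_mul_right
              rw [posMod_Ioi_of_nonneg V (by positivity)]
              exact measure_mono Set.Ioc_subset_Ioi_self
          _ ≤ ENNReal.ofReal (Real.exp (α * ((J+1:ℕ):ℝ) * b) * (mgfVal V α)^n)
                * ((ENNReal.ofReal (2 * Real.exp (-(α*b))))^J * posMod V (Set.Ioi x)) :=
              mul_le_mul_right (hslice J) _
          _ = ENNReal.ofReal ((mgfVal V α)^n * Real.exp (α*b)) * (ENNReal.ofReal 2)^J
                * posMod V (Set.Ioi x) := by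
              rw [← ENNReal.ofReal_pow (by positivity), ← ENNReal.ofReal_pow (by norm_num),
                ← mul_assoc, ← ENNReal.ofReal_mul (by positivity),
                ← ENNReal.ofReal_mul (by positivity)]
              congr 2
              have e1 : (Real.exp (-(α*b)))^J = Real.exp ((J:ℝ) * (-(α*b))) :=
                (Real.exp_nat_mul _ J).symm
              have h2 : Real.exp (α * ((J+1:ℕ):ℝ) * b) * Real.exp ((J:ℝ) * (-(α*b)))
                  = Real.exp (α*b) := by
                rw [← Real.exp_add]
                congr 1
                push_cast
                ring
              rw [mul_pow, e1]
              linear_combination (mgfVal V α ^ n * 2^J) * h2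
      have h2e : (ENNReal.ofReal 2) = 2 := by
        simp [ENNReal.ofReal_ofNat]
      calc ∫⁻ y in Set.Ioc x (x + (J:ℝ)*b), convIter V n (Set.Ioi (x - y)) ∂V
            + ∫⁻ y in Set.Ioc (x + (J:ℝ)*b) (x + ((J+1:ℕ):ℝ)*b),
                convIter V n (Set.Ioi (x - y)) ∂V
          ≤ ENNReal.ofReal ((mgfVal V α)^n * Real.exp (α*b)) * (ENNReal.ofReal 2)^J
                * posMod V (Set.Ioi x)
              + ENNReal.ofReal ((mgfVal V α)^n * Real.exp (α*b)) * (ENNReal.ofReal 2)^J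
                * posMod V (Set.Ioi x) := add_le_add ih hpiece
        _ = _ := by
            rw [h2e, pow_succ]
            ring

lemma chunk_c (hα : 0 ≤ α) (hV : MemCE α V) {ρ : ℝ} (hρm : mgfVal V α < ρ) (hρ0 : 0 < ρ) :
    ∃ Cc : ℝ, 1 ≤ Cc ∧ ∀ᶠ x in atTop, ∀ n : ℕ,
      ∫⁻ y in Set.Ioi x, convIter V n (Set.Ioi (x - y)) ∂V
        ≤ ENNReal.ofReal (Cc * ρ^n) * posMod V (Set.Ioi x) := by
  have hm0 : 0 < mgfVal V α := mgfVal_pos hα hV.2.2.1 (hV.1 0)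
  set m := mgfVal V α with hmdef
  rcases le_or_gt 1 ρ with hρ1 | hρ1
  · refine ⟨1, le_rfl, ?_⟩
    filter_upwards [eventually_ge_atTop (0:ℝ)] with x hx n
    calc ∫⁻ y in Set.Ioi x, convIter V n (Set.Ioi (x - y)) ∂V
        ≤ ∫⁻ _ in Set.Ioi x, 1 ∂V :=
          setLIntegral_mono measurable_const (fun y _ => prob_le_one)
      _ = V (Set.Ioi x) := setLIntegral_one _
      _ = posMod V (Set.Ioi x) := (posMod_Ioi_of_nonneg V hx).symm
      _ ≤ ENNReal.ofReal (1 * ρ^n) * posMod V (Set.Ioi x) := by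
          nth_rewrite 1 [← one_mul (posMod V (Set.Ioi x))]
          apply mul_le_mul_left
          rw [show (1:ENNReal) = ENNReal.ofReal 1 by simp]
          exact ENNReal.ofReal_le_ofReal (by rw [one_mul]; exact one_le_pow₀ hρ1)
  · -- hard case : ρ < 1
    have hαpos : 0 < α := by
      rcases lt_or_eq_of_le hα with h | h
      · exact h
      · exfalso
        have hm1 : m = 1 := by
          rw [hmdef, mgfVal]
          simp [← h]
        have : m < 1 := lt_trans hρm hρ1
        linarith
    obtain ⟨L, hLdef⟩ : ∃ L : ℝ, L = -Real.log ρ := ⟨_, rfl⟩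
    have hLpos : 0 < L := by
      have := Real.log_neg hρ0 hρ1
      rw [hLdef]; linarith
    obtain ⟨Lm, hLmdef⟩ : ∃ t : ℝ, t = Real.log ρ - Real.log m := ⟨_, rfl⟩
    have hLmpos : 0 < Lm := by
      rw [hLmdef]
      exact sub_pos.mpr (Real.log_lt_log hm0 hρm)
    have hlog2 : 0 < Real.log 2 := Real.log_pos one_lt_two
    obtain ⟨D, hDdef⟩ : ∃ D : ℝ, D = L * Real.log 2 / Lm + 1 := ⟨_, rfl⟩
    have hDpos : 0 < D := by rw [hDdef]; positivity
    obtain ⟨b, hbdef⟩ : ∃ b : ℝ, b = (Real.log 2 + D) / α := ⟨_, rfl⟩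
    have hbpos : 0 < b := by rw [hbdef]; positivity
    have hαb : α * b = Real.log 2 + D := by
      rw [hbdef]; field_simp
    obtain ⟨θ, hθdef⟩ : ∃ θ : ℝ, θ = 2 * Real.exp (-(α * b)) := ⟨_, rfl⟩
    have hθpos : 0 < θ := by rw [hθdef]; positivity
    have hθexp : θ = Real.exp (-D) := by
      rw [hθdef, hαb, neg_add, Real.exp_add, ← mul_assoc, Real.exp_neg,
        Real.exp_log two_pos]
      norm_num
    have hθ1 : θ < 1 := by
      rw [hθexp, ← Real.exp_zero]
      exact Real.exp_lt_exp.mpr (by linarith)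
    obtain ⟨γ, hγdef⟩ : ∃ γ : ℝ, γ = L / D := ⟨_, rfl⟩
    have hγpos : 0 < γ := by rw [hγdef]; positivity
    have hF1 : θ ^ γ = ρ := by
      rw [hθexp, ← Real.exp_log hρ0, Real.rpow_def_of_pos (Real.exp_pos _), Real.log_exp]
      congr 1
      rw [hγdef]
      field_simp
      rw [hLdef]
      ring
    have hkey : Real.log 2 * γ < Lm := by
      have h1 : Real.log 2 * γ = (Real.log 2 * L) / D := by rw [hγdef]; ring
      have hD2 : Lm * D = L * Real.log 2 + Lm := by
        rw [hDdef]
        field_simp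
      rw [h1, div_lt_iff₀ hDpos, hD2]
      linarith
    have hσρ : m * (2:ℝ) ^ γ < ρ := by
      have h2γ : (2:ℝ)^γ = Real.exp (Real.log 2 * γ) := by
        rw [Real.rpow_def_of_pos two_pos]
      rw [h2γ, ← Real.exp_log hm0, ← Real.exp_add, ← Real.exp_log hρ0]
      apply Real.exp_lt_exp.mpr
      have hLm' : Lm = Real.log ρ - Real.log m := hLmdef
      linarith
    have hσ0 : 0 ≤ m * (2:ℝ)^γ := by positivity
    have hfact3 : ∀ n : ℕ, θ ^ (⌈γ * (n:ℝ)⌉₊) ≤ ρ^n := by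
      intro n
      have h3 : θ ^ (γ*(n:ℝ)) = ρ^n := by
        rw [Real.rpow_mul hθpos.le, hF1, Real.rpow_natCast]
      rw [← Real.rpow_natCast θ, ← h3]
      exact Real.rpow_le_rpow_of_exponent_ge hθpos hθ1.le (Nat.le_ceil _)
    have hfact4 : ∀ n : ℕ, m^n * 2^(⌈γ * (n:ℝ)⌉₊) ≤ 2 * ρ^n := by
      intro n
      have h2J : (2:ℝ)^(⌈γ * (n:ℝ)⌉₊) ≤ 2 * ((2:ℝ)^γ)^n := by
        rw [← Real.rpow_natCast (2:ℝ)]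
        calc (2:ℝ)^((⌈γ * (n:ℝ)⌉₊ : ℝ)) ≤ (2:ℝ)^(γ*(n:ℝ) + 1) :=
              Real.rpow_le_rpow_of_exponent_le one_le_two
                (le_of_lt (Nat.ceil_lt_add_one (by positivity)))
          _ = 2 * ((2:ℝ)^γ)^n := by
              rw [Real.rpow_add two_pos, Real.rpow_one,
                Real.rpow_mul (by norm_num : (0:ℝ) ≤ 2), Real.rpow_natCast]
              ring
      calc m^n * 2^(⌈γ * (n:ℝ)⌉₊) ≤ m^n * (2 * ((2:ℝ)^γ)^n) := by
            apply mul_le_mul_of_nonneg_left h2J (pow_nonneg hm0.le n)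
        _ = 2 * (m * (2:ℝ)^γ)^n := by rw [mul_pow]; ring
        _ ≤ 2 * ρ^n := by
            have := pow_le_pow_left₀ hσ0 hσρ.le n
            linarith
    -- eventual slice bound
    have hevθ : ∀ᶠ x in atTop,
        posMod V (Set.Ioi (x + b)) ≤ ENNReal.ofReal θ * posMod V (Set.Ioi x) := by
      have h := ratio_event hV (-b) (Real.exp (-(α*b))) (Real.exp_pos _)
      filter_upwards [h] with x hx
      rw [sub_neg_eq_add] at hx
      have hx2 : tailDist (posMod V) (x + b) ≤ θ * tailDist (posMod V) x := by
        have : Real.exp (α * (-b)) = Real.exp (-(α*b)) := by ring_nf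
        rw [this] at hx
        rw [hθdef]
        linarith [hx]
      calc posMod V (Set.Ioi (x + b)) = ENNReal.ofReal (tailDist (posMod V) (x+b)) :=
            (ofReal_T V _).symm
        _ ≤ ENNReal.ofReal (θ * tailDist (posMod V) x) := ENNReal.ofReal_le_ofReal hx2
        _ = ENNReal.ofReal θ * ENNReal.ofReal (tailDist (posMod V) x) :=
            ENNReal.ofReal_mul hθpos.le
        _ = ENNReal.ofReal θ * posMod V (Set.Ioi x) := by rw [ofReal_T]
    obtain ⟨x₁, hx₁⟩ := eventually_atTop.mp hevθ
    refine ⟨2 * Real.exp (α*b) + 1, by nlinarith [Real.exp_pos (α*b)] , ?_⟩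
    filter_upwards [eventually_ge_atTop (max x₁ 0)] with x hx n
    have hx0 : 0 ≤ x := le_trans (le_max_right _ _) hx
    have hxx1 : x₁ ≤ x := le_trans (le_max_left _ _) hx
    have hsliceτ : ∀ j : ℕ, posMod V (Set.Ioi (x + j * b))
        ≤ (ENNReal.ofReal θ)^j * posMod V (Set.Ioi x) :=
      slice_iter V hbpos.le (ENNReal.ofReal θ) (fun x' hx' => hx₁ x' hx') x hxx1
    set J := ⌈γ * (n:ℝ)⌉₊ with hJdef
    have hsplitset : Set.Ioi x = Set.Ioc x (x + J*b) ∪ Set.Ioi (x + J*b) :=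
      (Set.Ioc_union_Ioi_eq_Ioi (le_add_of_nonneg_right (by positivity))).symm
    have hsplitint : ∫⁻ y in Set.Ioi x, convIter V n (Set.Ioi (x - y)) ∂V
        = (∫⁻ y in Set.Ioc x (x + J*b), convIter V n (Set.Ioi (x - y)) ∂V)
          + ∫⁻ y in Set.Ioi (x + J*b), convIter V n (Set.Ioi (x - y)) ∂V := by
      rw [hsplitset, lintegral_union measurableSet_Ioi (Set.Ioc_disjoint_Ioi le_rfl)]
    rw [hsplitint]
    have hsliceτ2 : ∀ j : ℕ, posMod V (Set.Ioi (x + j * b))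
        ≤ (ENNReal.ofReal (2 * Real.exp (-(α*b))))^j * posMod V (Set.Ioi x) := by
      rw [← hθdef]; exact hsliceτ
    have hpiece1 := chunkC_sum hα hV hbpos hx0 hsliceτ2 n J
    have hpiece2 : ∫⁻ y in Set.Ioi (x + J*b), convIter V n (Set.Ioi (x - y)) ∂V
        ≤ (ENNReal.ofReal θ)^J * posMod V (Set.Ioi x) := by
      calc ∫⁻ y in Set.Ioi (x + J*b), convIter V n (Set.Ioi (x - y)) ∂V
          ≤ ∫⁻ _ in Set.Ioi (x + J*b), 1 ∂V :=
            setLIntegral_mono measurable_const (fun y _ => prob_le_one)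
        _ = V (Set.Ioi (x + J*b)) := setLIntegral_one _
        _ = posMod V (Set.Ioi (x + J*b)) := (posMod_Ioi_of_nonneg V (by positivity)).symm
        _ ≤ (ENNReal.ofReal θ)^J * posMod V (Set.Ioi x) := hsliceτ J
    calc (∫⁻ y in Set.Ioc x (x + J*b), convIter V n (Set.Ioi (x - y)) ∂V)
          + ∫⁻ y in Set.Ioi (x + J*b), convIter V n (Set.Ioi (x - y)) ∂V
        ≤ ENNReal.ofReal (m^n * Real.exp (α*b)) * (ENNReal.ofReal 2)^J
            * posMod V (Set.Ioi x)
          + (ENNReal.ofReal θ)^J * posMod V (Set.Ioi x) := add_le_add hpiece1 hpiece2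
      _ ≤ ENNReal.ofReal ((2 * Real.exp (α*b) + 1) * ρ^n) * posMod V (Set.Ioi x) := by
          rw [← add_mul]
          apply mul_le_mul_left
          calc ENNReal.ofReal (m^n * Real.exp (α*b)) * (ENNReal.ofReal 2)^J
                + (ENNReal.ofReal θ)^J
              = ENNReal.ofReal (m^n * Real.exp (α*b) * 2^J) + ENNReal.ofReal (θ^J) := by
                rw [← ENNReal.ofReal_pow (by norm_num : (0:ℝ) ≤ 2),
                  ← ENNReal.ofReal_mul (by positivity),
                  ← ENNReal.ofReal_pow hθpos.le]
            _ ≤ ENNReal.ofReal (Real.exp (α*b) * (2 * ρ^n)) + ENNReal.ofReal (ρ^n) := by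
                apply add_le_add (ENNReal.ofReal_le_ofReal ?_) (ENNReal.ofReal_le_ofReal ?_)
                · have := hfact4 n
                  nlinarith [Real.exp_pos (α*b), hfact4 n]
                · exact hfact3 n
            _ = ENNReal.ofReal ((2 * Real.exp (α*b) + 1) * ρ^n) := by
                rw [← ENNReal.ofReal_add (by positivity) (by positivity)]
                congr 1
                ring

end Slices

end KAux

end KestenAux

set_option maxHeartbeats 2000000 in
/-- Lemma 3.6 (Kesten's bound without requiring `V̂(α) ≥ 1`): if `V ∈ S(α)` then for every
`ε > 0` there is `K > 0` with `\overline{V^{n∗}}(x) ≤ K (V̂(α)+ε)ⁿ V̄(x)` for all `n ≥ 1`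
and all `x ≥ 0`. -/
theorem stmt_13
    (V : Measure ℝ) [IsProbabilityMeasure V]
    (α : ℝ) (hα : 0 ≤ α) (hV : MemCE α V)
    (ε : ℝ) (hε : 0 < ε) :
    ∃ K : ℝ, 0 < K ∧ ∀ n : ℕ, 1 ≤ n → ∀ x : ℝ, 0 ≤ x →
      tailDist (convIter V n) x ≤ K * (mgfVal V α + ε) ^ n * tailDist V x := by
  classical
  have hWint : Integrable (fun x => Real.exp (α * x)) (posMod V) := hV.2.2.1
  have hm0 : 0 < mgfVal V α := KAux.mgfVal_pos hα hWint (hV.1 0)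
  obtain ⟨Cc, hCc1, hCev⟩ := KAux.chunk_c hα hV (ρ := mgfVal V α + ε/2)
    (by linarith) (by linarith)
  obtain ⟨A, hA1, hcore⟩ := KAux.core hα hV (δ := ε/2) (by linarith)
  have evA := KAux.ratio_event hV A 1 one_pos
  obtain ⟨t1, ht1⟩ := eventually_atTop.mp hcore
  obtain ⟨t2, ht2⟩ := eventually_atTop.mp evA
  obtain ⟨t3, ht3⟩ := eventually_atTop.mp hCev
  obtain ⟨x₀, hx₀def⟩ : ∃ x₀ : ℝ, x₀ = max (max t1 t2) (max t3 (2*A+1)) := ⟨_, rfl⟩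
  have hx₀1 : t1 ≤ x₀ := by rw [hx₀def]; exact le_trans (le_max_left _ _) (le_max_left _ _)
  have hx₀2 : t2 ≤ x₀ := by rw [hx₀def]; exact le_trans (le_max_right _ _) (le_max_left _ _)
  have hx₀3 : t3 ≤ x₀ := by rw [hx₀def]; exact le_trans (le_max_left _ _) (le_max_right _ _)
  have hx₀A : 2*A + 1 ≤ x₀ := by
    rw [hx₀def]; exact le_trans (le_max_right _ _) (le_max_right _ _)
  have hT0 : 0 < tailDist (posMod V) x₀ := hV.1 x₀
  obtain ⟨CA, hCAdef⟩ : ∃ c : ℝ, c = Real.exp (α*A) + 1 := ⟨_, rfl⟩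
  have hCA0 : 0 ≤ CA := by rw [hCAdef]; positivity
  obtain ⟨q, hqdef⟩ : ∃ q : ℝ, q = mgfVal V α + ε := ⟨_, rfl⟩
  have hq0 : 0 < q := by rw [hqdef]; linarith
  have hmq : mgfVal V α ≤ q := by rw [hqdef]; linarith
  have hρq : mgfVal V α + ε/2 ≤ q := by rw [hqdef]; linarith
  obtain ⟨K, hKdef⟩ : ∃ K : ℝ,
      K = max (max (1/q) (2*(CA + Cc)/ε)) (1/tailDist (posMod V) x₀) := ⟨_, rfl⟩
  have hK0 : 0 < K := by
    rw [hKdef]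
    exact lt_of_lt_of_le (by positivity : (0:ℝ) < 1/q)
      (le_trans (le_max_left _ _) (le_max_left _ _))
  have hK1 : 1 ≤ K * q := by
    have h : 1/q ≤ K := by
      rw [hKdef]; exact le_trans (le_max_left _ _) (le_max_left _ _)
    rw [div_le_iff₀ hq0] at h; linarith
  have hKG : CA + Cc ≤ K * ε / 2 := by
    have h : 2*(CA + Cc)/ε ≤ K := by
      rw [hKdef]; exact le_trans (le_max_right _ _) (le_max_left _ _)
    rw [div_le_iff₀ hε] at h; linarith
  have hKT : 1 ≤ K * tailDist (posMod V) x₀ := by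
    have h : 1/tailDist (posMod V) x₀ ≤ K := by
      rw [hKdef]; exact le_max_right _ _
    rw [div_le_iff₀ hT0] at h; linarith
  have main : ∀ n : ℕ, 1 ≤ n → ∀ z : ℝ, 0 ≤ z →
      convIter V n (Set.Ioi z) ≤ ENNReal.ofReal (K * q^n) * posMod V (Set.Ioi z) := by
    intro n
    induction n with
    | zero => intro h; exact absurd h (by norm_num)
    | succ n ih =>
      intro _ z hz0
      rcases Nat.eq_zero_or_pos n with rfl | hn1
      · rw [KAux.convIter_one_Ioi, ← KAux.posMod_Ioi_of_nonneg V hz0]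
        nth_rewrite 1 [← one_mul (posMod V (Set.Ioi z))]
        apply mul_le_mul_left
        rw [show (1:ENNReal) = ENNReal.ofReal 1 by simp]
        exact ENNReal.ofReal_le_ofReal (by rw [pow_one]; exact hK1)
      · rcases lt_or_ge z x₀ with hzlt | hzge
        · -- Chernoff region
          have hch := KAux.chernoff hα hWint (n+1) z
          have hTz : tailDist (posMod V) x₀ ≤ tailDist (posMod V) z :=
            KAux.T_antitone V hzlt.le
          calc convIter V (n+1) (Set.Ioi z)
              ≤ ENNReal.ofReal (Real.exp (-(α*z)) * (mgfVal V α)^(n+1)) := hch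
            _ ≤ ENNReal.ofReal (K * q^(n+1) * tailDist (posMod V) z) := by
                apply ENNReal.ofReal_le_ofReal
                have h1 : Real.exp (-(α*z)) ≤ 1 := by
                  rw [← Real.exp_zero]
                  apply Real.exp_le_exp.mpr
                  nlinarith [hα, hz0]
                have h2 : (mgfVal V α)^(n+1) ≤ q^(n+1) :=
                  pow_le_pow_left₀ hm0.le hmq (n+1)
                have h3 : q^(n+1) * 1 ≤ q^(n+1) * (K * tailDist (posMod V) z) := by
                  apply mul_le_mul_of_nonneg_left _ (pow_nonneg hq0.le (n+1))
                  calc (1:ℝ) ≤ K * tailDist (posMod V) x₀ := hKT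
                    _ ≤ K * tailDist (posMod V) z :=
                        mul_le_mul_of_nonneg_left hTz hK0.le
                have h4 : (0:ℝ) ≤ (mgfVal V α)^(n+1) := pow_nonneg hm0.le _
                nlinarith [Real.exp_pos (-(α*z))]
            _ = ENNReal.ofReal (K * q^(n+1)) * posMod V (Set.Ioi z) := by
                rw [ENNReal.ofReal_mul (by positivity), KAux.ofReal_T]
        · -- main region z ≥ x₀
          have hc1 := ht1 z (le_trans hx₀1 hzge)
          have hc2 := ht2 z (le_trans hx₀2 hzge)
          have hc3 := ht3 z (le_trans hx₀3 hzge) n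
          have hzA : 2*A + 1 ≤ z := le_trans hx₀A hzge
          rw [show convIter V (n+1) = convDist (convIter V n) V from rfl,
            KAux.convDist_apply_Ioi]
          have hsplit1 : ∫⁻ y, convIter V n (Set.Ioi (z - y)) ∂V
              = (∫⁻ y in Set.Iic (z-A), convIter V n (Set.Ioi (z - y)) ∂V)
                + ((∫⁻ y in Set.Ioc (z-A) z, convIter V n (Set.Ioi (z - y)) ∂V)
                + (∫⁻ y in Set.Ioi z, convIter V n (Set.Ioi (z - y)) ∂V)) := by
            rw [← lintegral_add_compl (fun y => convIter V n (Set.Ioi (z - y)))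
              (measurableSet_Iic (a := z - A))]
            congr 1
            rw [Set.compl_Iic,
              show Set.Ioi (z-A) = Set.Ioc (z-A) z ∪ Set.Ioi z from
                (Set.Ioc_union_Ioi_eq_Ioi (by linarith)).symm,
              lintegral_union measurableSet_Ioi (Set.Ioc_disjoint_Ioi le_rfl)]
          rw [hsplit1]
          have hcha : ∫⁻ y in Set.Iic (z-A), convIter V n (Set.Ioi (z - y)) ∂V
              ≤ ENNReal.ofReal (K*q^n*((mgfVal V α + ε/2) * tailDist (posMod V) z)) := by
            calc ∫⁻ y in Set.Iic (z-A), convIter V n (Set.Ioi (z - y)) ∂V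
                ≤ ∫⁻ y in Set.Iic (z-A),
                    ENNReal.ofReal (K*q^n) * posMod V (Set.Ioi (z-y)) ∂V := by
                  apply setLIntegral_mono
                    (((KAux.tau_meas V).comp
                      (measurable_const.sub measurable_id)).const_mul _)
                  intro y hy
                  simp only [Set.mem_Iic] at hy
                  exact ih hn1 (z-y) (by linarith)
              _ = ENNReal.ofReal (K*q^n)
                    * ∫⁻ y in Set.Iic (z-A), posMod V (Set.Ioi (z-y)) ∂V :=
                  lintegral_const_mul' _ _ ENNReal.ofReal_ne_top
              _ = ENNReal.ofReal (K*q^n)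
                    * ENNReal.ofReal
                      (∫ y in Set.Iic (z-A), tailDist (posMod V) (z-y) ∂V) := by
                  rw [KAux.lint_tail_eq]
              _ ≤ ENNReal.ofReal (K*q^n)
                    * ENNReal.ofReal ((mgfVal V α + ε/2) * tailDist (posMod V) z) :=
                  mul_le_mul_right (ENNReal.ofReal_le_ofReal hc1) _
              _ = _ := (ENNReal.ofReal_mul (by positivity)).symm
          have hchb : ∫⁻ y in Set.Ioc (z-A) z, convIter V n (Set.Ioi (z - y)) ∂V
              ≤ ENNReal.ofReal ((mgfVal V α)^n * (CA * tailDist (posMod V) z)) := by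
            calc ∫⁻ y in Set.Ioc (z-A) z, convIter V n (Set.Ioi (z-y)) ∂V
                ≤ ∫⁻ _ in Set.Ioc (z-A) z, ENNReal.ofReal ((mgfVal V α)^n) ∂V := by
                  apply setLIntegral_mono measurable_const
                  intro y hy
                  refine le_trans (KAux.chernoff hα hWint n (z-y))
                    (ENNReal.ofReal_le_ofReal ?_)
                  have h1 : Real.exp (-(α*(z-y))) ≤ 1 := by
                    rw [← Real.exp_zero]
                    apply Real.exp_le_exp.mpr
                    have h2 := hy.2
                    nlinarith [hα]
                  nlinarith [pow_nonneg hm0.le n, Real.exp_pos (-(α*(z-y)))]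
              _ = ENNReal.ofReal ((mgfVal V α)^n) * V (Set.Ioc (z-A) z) := by
                  rw [setLIntegral_const]
              _ ≤ ENNReal.ofReal ((mgfVal V α)^n) * posMod V (Set.Ioi (z-A)) := by
                  apply mul_le_mul_right
                  rw [KAux.posMod_Ioi_of_nonneg V (by linarith)]
                  exact measure_mono Set.Ioc_subset_Ioi_self
              _ ≤ _ := by
                  rw [← KAux.ofReal_T V (z-A),
                    ← ENNReal.ofReal_mul (pow_nonneg hm0.le n)]
                  apply ENNReal.ofReal_le_ofReal
                  rw [hCAdef]
                  exact mul_le_mul_of_nonneg_left hc2 (pow_nonneg hm0.le n)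
          have hchc : ∫⁻ y in Set.Ioi z, convIter V n (Set.Ioi (z - y)) ∂V
              ≤ ENNReal.ofReal (Cc * (mgfVal V α + ε/2)^n * tailDist (posMod V) z) := by
            refine le_trans hc3 ?_
            rw [← KAux.ofReal_T V z, ← ENNReal.ofReal_mul (by positivity)]
          calc (∫⁻ y in Set.Iic (z-A), convIter V n (Set.Ioi (z - y)) ∂V)
                + ((∫⁻ y in Set.Ioc (z-A) z, convIter V n (Set.Ioi (z - y)) ∂V)
                + (∫⁻ y in Set.Ioi z, convIter V n (Set.Ioi (z - y)) ∂V))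
              ≤ ENNReal.ofReal (K*q^n*((mgfVal V α + ε/2) * tailDist (posMod V) z))
                + (ENNReal.ofReal ((mgfVal V α)^n * (CA * tailDist (posMod V) z))
                + ENNReal.ofReal (Cc * (mgfVal V α + ε/2)^n * tailDist (posMod V) z)) :=
              add_le_add hcha (add_le_add hchb hchc)
            _ ≤ ENNReal.ofReal (K * q^(n+1)) * posMod V (Set.Ioi z) := by
                have hTz0 : 0 ≤ tailDist (posMod V) z := KAux.T_nonneg V z
                have hbnn : 0 ≤ (mgfVal V α)^n * (CA * tailDist (posMod V) z) :=
                  mul_nonneg (pow_nonneg hm0.le n) (mul_nonneg hCA0 hTz0)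
                have hcnn : 0 ≤ Cc * (mgfVal V α + ε/2)^n * tailDist (posMod V) z :=
                  mul_nonneg (mul_nonneg (by linarith) (pow_nonneg (by linarith) n)) hTz0
                have hann : 0 ≤ K*q^n*((mgfVal V α + ε/2) * tailDist (posMod V) z) :=
                  mul_nonneg (mul_nonneg hK0.le (pow_nonneg hq0.le n))
                    (mul_nonneg (by linarith) hTz0)
                have hKq1 : 0 ≤ K * q^(n+1) := mul_nonneg hK0.le (pow_nonneg hq0.le _)
                rw [← ENNReal.ofReal_add hbnn hcnn,
                  ← ENNReal.ofReal_add hann (add_nonneg hbnn hcnn),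
                  ← KAux.ofReal_T V z, ← ENNReal.ofReal_mul hKq1]
                apply ENNReal.ofReal_le_ofReal
                have hcoef : K*q^n*(mgfVal V α + ε/2) + ((mgfVal V α)^n * CA
                    + Cc * (mgfVal V α + ε/2)^n) ≤ K * q^(n+1) := by
                  have hpow1 : (mgfVal V α)^n ≤ q^n := pow_le_pow_left₀ hm0.le hmq n
                  have hpow2 : (mgfVal V α + ε/2)^n ≤ q^n :=
                    pow_le_pow_left₀ (by linarith) hρq n
                  have h1 : (mgfVal V α)^n * CA ≤ q^n * CA :=
                    mul_le_mul_of_nonneg_right hpow1 hCA0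
                  have h2 : Cc * (mgfVal V α + ε/2)^n ≤ Cc * q^n :=
                    mul_le_mul_of_nonneg_left hpow2
                      (by linarith : (0:ℝ) ≤ Cc)
                  have h3 : (CA + Cc) * q^n ≤ (K * ε / 2) * q^n :=
                    mul_le_mul_of_nonneg_right hKG (pow_nonneg hq0.le n)
                  have h5 : K*q^n*(mgfVal V α + ε/2) + (K*ε/2)*q^n
                      = K*q^n*(mgfVal V α + ε) := by ring
                  have h6 : K*q^n*(mgfVal V α + ε) = K * q^(n+1) := by
                    rw [← hqdef, pow_succ]
                    ring
                  nlinarith [h1, h2, h3, h5, h6]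
                nlinarith [hcoef, hTz0, mul_le_mul_of_nonneg_right hcoef hTz0]
  refine ⟨K, hK0, ?_⟩
  intro n hn x hx
  have h := main n hn x hx
  have hle := ENNReal.toReal_mono
    (ENNReal.mul_ne_top ENNReal.ofReal_ne_top (KAux.tau_ne_top V x)) h
  rw [ENNReal.toReal_mul, ENNReal.toReal_ofReal (by positivity)] at hle
  have hVx : tailDist V x = tailDist (posMod V) x := by
    rw [tailDist, tailDist, KAux.posMod_Ioi_of_nonneg V hx]
  calc tailDist (convIter V n) x ≤ K * q^n * tailDist (posMod V) x := hle
    _ = K * (mgfVal V α + ε)^n * tailDist V x := by rw [hVx, hqdef]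
end

section
/- Let F be a distribution on ℝ and G a distribution on (0,∞), and let α ≥ 0. If F ∈ R*_{-α} and Ḡ(x) = o(F̄(x)) as x → ∞, then every convex combination pF+(1-p)G, 0<p<1, belongs to R*_{-α}. -/
open MeasureTheory ProbabilityTheory Filter Asymptotics

noncomputable section Stmt16Aux

open Set ENNReal

namespace Stmt16Aux

/-! ### Basic facts about tails and convolutions -/

lemma tail_nonneg (μ : Measure ℝ) (x : ℝ) : 0 ≤ tailDist μ x := ENNReal.toReal_nonneg

lemma tail_anti (μ : Measure ℝ) [IsFiniteMeasure μ] : Antitone (tailDist μ) := fun _ _ hab =>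
  ENNReal.toReal_mono (measure_ne_top μ _) (measure_mono (Set.Ioi_subset_Ioi hab))

lemma tail_meas (μ : Measure ℝ) [IsFiniteMeasure μ] : Measurable (tailDist μ) :=
  (tail_anti μ).measurable

lemma tail_le_one (μ : Measure ℝ) [IsProbabilityMeasure μ] (s : ℝ) : tailDist μ s ≤ 1 := by
  have h : μ (Ioi s) ≤ 1 := prob_le_one
  simpa [tailDist] using ENNReal.toReal_mono (by norm_num) h

lemma ofReal_tail (μ : Measure ℝ) [IsFiniteMeasure μ] (x : ℝ) :
    μ (Set.Ioi x) = ENNReal.ofReal (tailDist μ x) :=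
  (ENNReal.ofReal_toReal (measure_ne_top μ _)).symm

lemma tail_le_ennreal {μ ρ : Measure ℝ} [IsFiniteMeasure μ] [IsFiniteMeasure ρ] {c s : ℝ}
    (hc : 0 ≤ c) (h : tailDist μ s ≤ c * tailDist ρ s) :
    μ (Ioi s) ≤ ENNReal.ofReal c * ρ (Ioi s) := by
  rw [ofReal_tail μ, ofReal_tail ρ, ← ENNReal.ofReal_mul hc]
  exact ENNReal.ofReal_le_ofReal h

lemma mono_inner (ν : Measure ℝ) (x : ℝ) : Monotone (fun y => ν (Set.Ioi (x - y))) :=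
  fun _ _ hab => measure_mono (Set.Ioi_subset_Ioi (by linarith))

lemma meas_inner (ν : Measure ℝ) (x : ℝ) : Measurable (fun y => ν (Set.Ioi (x - y))) :=
  (mono_inner ν x).measurable

lemma meas_tail_enn (ν : Measure ℝ) : Measurable (fun y : ℝ => ν (Set.Ioi y)) :=
  Antitone.measurable (fun _ _ hab => measure_mono (Set.Ioi_subset_Ioi hab))

lemma convDist_Ioi (μ ν : Measure ℝ) [SFinite ν] (x : ℝ) :
    convDist μ ν (Set.Ioi x) = ∫⁻ y, ν (Set.Ioi (x - y)) ∂μ := by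
  rw [convDist, Measure.map_apply (by fun_prop) measurableSet_Ioi, Measure.prod_apply]
  · congr 1; ext y; congr 1; ext v
    simp [Set.mem_preimage, sub_lt_iff_lt_add']
  · exact (by fun_prop : Measurable fun p : ℝ × ℝ => p.1 + p.2) measurableSet_Ioi

lemma convDist_Ioi' (μ ν : Measure ℝ) [SFinite μ] [SFinite ν] (x : ℝ) :
    convDist μ ν (Set.Ioi x) = ∫⁻ u, μ (Set.Ioi (x - u)) ∂ν := by
  rw [convDist, Measure.map_apply (by fun_prop) measurableSet_Ioi,
    Measure.prod_apply_symm ((by fun_prop : Measurable fun p : ℝ × ℝ => p.1 + p.2) measurableSet_Ioi)]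
  congr 1; ext u; congr 1; ext y
  simp [Set.mem_preimage, sub_lt_iff_lt_add]

instance convProb (μ ν : Measure ℝ) [IsProbabilityMeasure μ] [IsProbabilityMeasure ν] :
    IsProbabilityMeasure (convDist μ ν) :=
  Measure.isProbabilityMeasure_map (by fun_prop)

lemma part_ne_top (ρ B : Measure ℝ) [IsProbabilityMeasure ρ] [IsProbabilityMeasure B]
    (x : ℝ) (S : Set ℝ) : (∫⁻ y in S, ρ (Set.Ioi (x - y)) ∂B) ≠ ⊤ := by
  refine ne_top_of_le_ne_top (by norm_num : (1 : ℝ≥0∞) ≠ ⊤) ?_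
  calc ∫⁻ y in S, ρ (Set.Ioi (x - y)) ∂B ≤ ∫⁻ _ in S, 1 ∂B :=
        lintegral_mono (fun y => prob_le_one)
    _ = B S := setLIntegral_one S
    _ ≤ 1 := prob_le_one

lemma comp_shift {f : ℝ → ℝ} {l : ℝ} (h : Tendsto f atTop (nhds l)) (c : ℝ) :
    Tendsto (fun x => f (x - c)) atTop (nhds l) :=
  h.comp (tendsto_atTop_add_const_right atTop (-c) tendsto_id)

lemma swap_bound (ν B : Measure ℝ) [IsProbabilityMeasure ν] [IsProbabilityMeasure B]
    (x T : ℝ) (ε : ℝ≥0∞) (hT : ∀ t : ℝ, T ≤ t → B (Ioi t) ≤ ε * ν (Ioi t)) :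
    ∫⁻ y in Ioi T, ν (Ioi (x - y)) ∂B
      ≤ ε * (convDist ν ν (Set.Ioi x)) + B (Ioi T) * ν (Ioi (x - T)) := by
  rw [convDist_Ioi]
  have hS : MeasurableSet {p : ℝ × ℝ | T < p.1 ∧ x < p.1 + p.2} := by
    apply MeasurableSet.inter
    · exact measurableSet_lt measurable_const measurable_fst
    · exact measurableSet_lt measurable_const (measurable_fst.add measurable_snd)
  have eq1 : (B.prod ν) {p : ℝ × ℝ | T < p.1 ∧ x < p.1 + p.2}
      = ∫⁻ y in Ioi T, ν (Ioi (x - y)) ∂B := by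
    rw [Measure.prod_apply hS, ← lintegral_indicator measurableSet_Ioi]
    congr 1; ext y
    by_cases hy : T < y
    · rw [indicator_of_mem (show y ∈ Ioi T from hy)]
      congr 1; ext v; simp [Set.mem_preimage, hy, sub_lt_iff_lt_add']
    · rw [indicator_of_notMem (show y ∉ Ioi T from hy)]
      have : Prod.mk y ⁻¹' {p : ℝ × ℝ | T < p.1 ∧ x < p.1 + p.2} = ∅ := by
        ext v; simp [hy]
      simp [this]
  have eq2 : (B.prod ν) {p : ℝ × ℝ | T < p.1 ∧ x < p.1 + p.2}
      = ∫⁻ u, B (Ioi (max T (x - u))) ∂ν := by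
    rw [Measure.prod_apply_symm hS]
    congr 1; ext u; congr 1; ext y
    simp [Set.mem_preimage, max_lt_iff, sub_lt_iff_lt_add]
  rw [← eq1, eq2]
  have key : ∀ u : ℝ, B (Ioi (max T (x - u)))
      ≤ ε * ν (Ioi (x - u)) + (Ioi (x - T)).indicator (fun _ => B (Ioi T)) u := by
    intro u
    rcases le_or_gt u (x - T) with hu | hu
    · have hmax : max T (x - u) = x - u := max_eq_right (by linarith)
      rw [hmax, indicator_of_notMem (by simpa using hu), add_zero]
      exact hT _ (by linarith)
    · calc B (Ioi (max T (x - u))) ≤ B (Ioi T) := measure_mono (Ioi_subset_Ioi (le_max_left _ _))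
      _ ≤ _ := by rw [indicator_of_mem (by simpa using hu)]; exact le_add_self
  calc ∫⁻ u, B (Ioi (max T (x - u))) ∂ν
      ≤ ∫⁻ u, (ε * ν (Ioi (x - u)) + (Ioi (x - T)).indicator (fun _ => B (Ioi T)) u) ∂ν :=
        lintegral_mono key
    _ = ε * (∫⁻ y, ν (Ioi (x - y)) ∂ν) + B (Ioi T) * ν (Ioi (x - T)) := by
        rw [lintegral_add_left ((meas_inner ν x).const_mul ε),
          lintegral_const_mul _ (meas_inner ν x),
          lintegral_indicator measurableSet_Ioi, setLIntegral_const]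

/-! ### The analytic core -/

variable {ν B : Measure ℝ} [IsProbabilityMeasure ν] [IsProbabilityMeasure B] {α : ℝ}

lemma global_bound (h1 : ∀ x, 0 < tailDist ν x)
    (h5 : Tendsto (fun x => tailDist B x / tailDist ν x) atTop (nhds 0)) :
    ∃ M : ℝ, 1 ≤ M ∧ ∀ s : ℝ, tailDist B s ≤ M * tailDist ν s := by
  obtain ⟨x₀, hx₀⟩ := eventually_atTop.1 (h5.eventually_lt_const one_pos)
  refine ⟨max 1 (1 / tailDist ν x₀), le_max_left _ _, fun s => ?_⟩
  rcases le_or_gt x₀ s with hs | hs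
  · have h := hx₀ s hs
    rw [div_lt_one (h1 s)] at h
    calc tailDist B s ≤ 1 * tailDist ν s := by linarith
    _ ≤ _ := mul_le_mul_of_nonneg_right (le_max_left _ _) (tail_nonneg _ _)
  · have h1' := h1 x₀
    calc tailDist B s ≤ 1 := tail_le_one B s
    _ = (1 / tailDist ν x₀) * tailDist ν x₀ := by field_simp
    _ ≤ _ := mul_le_mul (le_max_right _ _) (tail_anti ν hs.le) h1'.le
          (le_trans zero_le_one (le_max_left _ _))

lemma exp_meas : Measurable (fun x : ℝ => Real.exp (α * x)) :=
  Real.measurable_exp.comp (measurable_const.mul measurable_id)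

lemma integrable_exp_B (hα : 0 ≤ α) (h3 : Integrable (fun x => Real.exp (α * x)) ν)
    {M : ℝ} (hM0 : 0 ≤ M) (hM : ∀ s : ℝ, tailDist B s ≤ M * tailDist ν s) :
    Integrable (fun x => Real.exp (α * x)) B := by
  rcases eq_or_lt_of_le hα with h0 | hpos
  · simp only [← h0, zero_mul, Real.exp_zero]
    exact integrable_const _
  have hnn : ∀ (μ : Measure ℝ), (0 : ℝ → ℝ) ≤ᵐ[μ] fun x => Real.exp (α * x) :=
    fun μ => Filter.Eventually.of_forall (fun x => (Real.exp_pos _).le)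
  have key : ∀ (μ : Measure ℝ), ∫⁻ x, ENNReal.ofReal (Real.exp (α * x)) ∂μ
      = ∫⁻ t in Ioi (0:ℝ), μ (Ioi (Real.log t / α)) := by
    intro μ
    rw [lintegral_eq_lintegral_meas_lt μ (hnn μ) exp_meas.aemeasurable]
    apply lintegral_congr_ae
    filter_upwards [ae_restrict_mem measurableSet_Ioi] with t ht
    congr 1
    ext x
    simp only [Set.mem_setOf_eq, Set.mem_Ioi]
    rw [div_lt_iff₀ hpos, mul_comm]
    exact (Real.log_lt_iff_lt_exp ht).symm
  constructor
  · exact exp_meas.aestronglyMeasurable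
  rw [hasFiniteIntegral_iff_ofReal (hnn B), key B]
  have hfin : ∫⁻ t in Ioi (0:ℝ), ν (Ioi (Real.log t / α)) < ⊤ := by
    rw [← key ν]
    exact (hasFiniteIntegral_iff_ofReal (hnn ν)).1 h3.2
  calc ∫⁻ t in Ioi (0:ℝ), B (Ioi (Real.log t / α))
      ≤ ∫⁻ t in Ioi (0:ℝ), ENNReal.ofReal M * ν (Ioi (Real.log t / α)) :=
        lintegral_mono (fun t => tail_le_ennreal hM0 (hM _))
    _ = ENNReal.ofReal M * ∫⁻ t in Ioi (0:ℝ), ν (Ioi (Real.log t / α)) := by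
        rw [lintegral_const_mul]
        exact (meas_tail_enn ν).comp (Real.measurable_log.div_const α)
    _ < ⊤ := ENNReal.mul_lt_top ENNReal.ofReal_lt_top hfin

lemma partIic_toReal (ν B : Measure ℝ) [IsProbabilityMeasure ν] [IsProbabilityMeasure B]
    (T x : ℝ) :
    (∫⁻ y in Iic T, ν (Set.Ioi (x - y)) ∂B).toReal = ∫ y in Iic T, tailDist ν (x - y) ∂B := by
  rw [← integral_toReal ((meas_inner ν x).aemeasurable) (ae_of_all _ fun y => measure_lt_top ν _)]
  simp only [tailDist]

lemma A_div_tendsto (h1 : ∀ x, 0 < tailDist ν x)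
    (h2 : ∀ y : ℝ, Tendsto (fun x => tailDist ν (x - y) / tailDist ν x)
      atTop (nhds (Real.exp (α * y)))) (T : ℝ) :
    Tendsto (fun x => (∫ y in Iic T, tailDist ν (x - y) ∂B) / tailDist ν x) atTop
      (nhds (∫ y in Iic T, Real.exp (α * y) ∂B)) := by
  have hrw : ∀ x : ℝ, (∫ y in Iic T, tailDist ν (x - y) ∂B) / tailDist ν x
      = ∫ y in Iic T, tailDist ν (x - y) / tailDist ν x ∂B := fun x => (integral_div _ _).symm
  simp only [hrw]
  apply tendsto_integral_filter_of_dominated_convergence (fun _ => Real.exp (α * T) + 1)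
  · apply Eventually.of_forall
    intro x
    exact (((tail_meas ν).comp (measurable_const.sub measurable_id)).div_const _).aestronglyMeasurable
  · have hev := (h2 T).eventually_lt_const (lt_add_one (Real.exp (α * T)))
    filter_upwards [hev] with x hx
    filter_upwards [ae_restrict_mem measurableSet_Iic] with y hy
    have hnn : 0 ≤ tailDist ν (x - y) / tailDist ν x :=
      div_nonneg (tail_nonneg _ _) (tail_nonneg _ _)
    rw [Real.norm_eq_abs, abs_of_nonneg hnn]
    have hmono : tailDist ν (x - y) ≤ tailDist ν (x - T) :=
      tail_anti ν (by simp only [Set.mem_Iic] at hy; linarith)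
    calc tailDist ν (x - y) / tailDist ν x ≤ tailDist ν (x - T) / tailDist ν x := by
          gcongr
          exact (h1 x).le
      _ ≤ Real.exp (α * T) + 1 := hx.le
  · exact integrable_const _
  · exact ae_of_all _ (fun y => h2 y)

lemma mT_tendsto (h6 : Integrable (fun x => Real.exp (α * x)) B) :
    Tendsto (fun T => ∫ y in Iic T, Real.exp (α * y) ∂B) atTop
      (nhds (∫ y, Real.exp (α * y) ∂B)) := by
  have hrw : ∀ T : ℝ, ∫ y in Iic T, Real.exp (α * y) ∂B
      = ∫ y, (Iic T).indicator (fun y => Real.exp (α * y)) y ∂B :=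
    fun T => (integral_indicator measurableSet_Iic).symm
  simp only [hrw]
  apply tendsto_integral_filter_of_dominated_convergence (fun y => Real.exp (α * y))
  · exact Eventually.of_forall (fun T =>
      (exp_meas.aestronglyMeasurable).indicator measurableSet_Iic)
  · apply Eventually.of_forall
    intro T
    apply ae_of_all
    intro y
    calc ‖(Iic T).indicator (fun y => Real.exp (α * y)) y‖
        ≤ ‖Real.exp (α * y)‖ := norm_indicator_le_norm_self _ _
      _ = Real.exp (α * y) := by rw [Real.norm_eq_abs, abs_of_pos (Real.exp_pos _)]
  · exact h6
  · apply ae_of_all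
    intro y
    apply tendsto_const_nhds.congr'
    filter_upwards [eventually_ge_atTop y] with T hT
    rw [indicator_of_mem (mem_Iic.2 hT)]

lemma markov_tail (hα : 0 ≤ α) (h6 : Integrable (fun x => Real.exp (α * x)) B) (T : ℝ) :
    tailDist B T * Real.exp (α * T) ≤ ∫ y in Ioi T, Real.exp (α * y) ∂B := by
  have h : ∫ _ in Ioi T, Real.exp (α * T) ∂B = tailDist B T * Real.exp (α * T) := by
    rw [setIntegral_const, smul_eq_mul]
    rfl
  rw [← h]
  apply setIntegral_mono_on (integrable_const _) h6.integrableOn measurableSet_Ioi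
  intro y hy
  exact Real.exp_le_exp.2 (mul_le_mul_of_nonneg_left (le_of_lt hy) hα)


lemma L1 {K : ℝ} (hα : 0 ≤ α)
    (h1 : ∀ x, 0 < tailDist ν x)
    (h2 : ∀ y : ℝ, Tendsto (fun x => tailDist ν (x - y) / tailDist ν x) atTop
      (nhds (Real.exp (α * y))))
    (h4 : Tendsto (fun x => tailDist (convDist ν ν) x / tailDist ν x) atTop (nhds K))
    (h5 : Tendsto (fun x => tailDist B x / tailDist ν x) atTop (nhds 0))
    (h6 : Integrable (fun x => Real.exp (α * x)) B) :
    Tendsto (fun x => tailDist (convDist ν B) x / tailDist ν x) atTop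
      (nhds (∫ y, Real.exp (α * y) ∂B)) := by
  have hK0 : 0 ≤ K :=
    ge_of_tendsto' h4 (fun x => div_nonneg (tail_nonneg _ _) (tail_nonneg _ _))
  set mB := ∫ y, Real.exp (α * y) ∂B with hmB
  rw [Metric.tendsto_nhds]
  intro δ hδ
  set ε' := δ / (4 * (K + 1)) with hε'
  have hε'pos : 0 < ε' := div_pos hδ (by linarith)
  have E1 : ∀ᶠ t in atTop, tailDist B t ≤ ε' * tailDist ν t := by
    filter_upwards [h5.eventually_lt_const hε'pos] with t ht
    rw [div_lt_iff₀ (h1 t)] at ht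
    linarith
  obtain ⟨T₁, hT₁⟩ := eventually_atTop.1 E1
  have hcompl : ∀ T : ℝ, (∫ y in Iic T, Real.exp (α * y) ∂B)
      + (∫ y in Ioi T, Real.exp (α * y) ∂B) = mB := by
    intro T
    have h := integral_add_compl (measurableSet_Iic (a := T)) h6
      (f := fun y => Real.exp (α * y))
    rwa [compl_Iic] at h
  have E2 : Tendsto (fun T : ℝ => ∫ y in Ioi T, Real.exp (α * y) ∂B) atTop (nhds 0) := by
    have h := (mT_tendsto (B := B) h6).const_sub mB
    rw [sub_self] at h
    apply h.congr
    intro T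
    have := hcompl T
    linarith
  obtain ⟨T₂, hT₂⟩ := eventually_atTop.1 (E2.eventually_lt_const (by linarith : (0:ℝ) < δ/4))
  set T := max T₁ T₂ with hTdef
  have hT5 : ∀ t : ℝ, T ≤ t → tailDist B t ≤ ε' * tailDist ν t :=
    fun t ht => hT₁ t (le_trans (le_max_left _ _) ht)
  have hrT : ∫ y in Ioi T, Real.exp (α * y) ∂B < δ/4 := hT₂ T (le_max_right _ _)
  have hrTnn : 0 ≤ ∫ y in Ioi T, Real.exp (α * y) ∂B :=
    integral_nonneg (fun y => (Real.exp_pos _).le)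
  have hmTsum := hcompl T
  set mT := ∫ y in Iic T, Real.exp (α * y) ∂B with hmT
  have split : ∀ x : ℝ, tailDist (convDist ν B) x
      = (∫⁻ y in Iic T, ν (Ioi (x - y)) ∂B).toReal
        + (∫⁻ y in Ioi T, ν (Ioi (x - y)) ∂B).toReal := by
    intro x
    simp only [tailDist]
    rw [convDist_Ioi',
      show (∫⁻ y, ν (Ioi (x - y)) ∂B) = ∫⁻ y in Iic T, ν (Ioi (x - y)) ∂B
        + ∫⁻ y in (Iic T)ᶜ, ν (Ioi (x - y)) ∂B from (lintegral_add_compl _ measurableSet_Iic).symm,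
      compl_Iic, ENNReal.toReal_add (part_ne_top ν B x _) (part_ne_top ν B x _)]
  have up : ∀ x : ℝ, tailDist (convDist ν B) x
      ≤ (∫ y in Iic T, tailDist ν (x - y) ∂B)
        + (ε' * tailDist (convDist ν ν) x + tailDist B T * tailDist ν (x - T)) := by
    intro x
    rw [split x, partIic_toReal]
    apply add_le_add le_rfl
    have hswap := swap_bound ν B x T (ENNReal.ofReal ε')
      (fun t ht => tail_le_ennreal hε'pos.le (hT5 t ht))
    have hne1 : ENNReal.ofReal ε' * convDist ν ν (Ioi x) ≠ ⊤ :=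
      ENNReal.mul_ne_top ENNReal.ofReal_ne_top (measure_ne_top _ _)
    have hne2 : B (Ioi T) * ν (Ioi (x - T)) ≠ ⊤ :=
      ENNReal.mul_ne_top (measure_ne_top _ _) (measure_ne_top _ _)
    calc (∫⁻ y in Ioi T, ν (Ioi (x - y)) ∂B).toReal
        ≤ (ENNReal.ofReal ε' * convDist ν ν (Ioi x) + B (Ioi T) * ν (Ioi (x - T))).toReal :=
          ENNReal.toReal_mono (by finiteness) hswap
      _ = ε' * tailDist (convDist ν ν) x + tailDist B T * tailDist ν (x - T) := by
          rw [ENNReal.toReal_add hne1 hne2, ENNReal.toReal_mul, ENNReal.toReal_mul,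
            ENNReal.toReal_ofReal hε'pos.le]
          rfl
  have low : ∀ x : ℝ, (∫ y in Iic T, tailDist ν (x - y) ∂B) ≤ tailDist (convDist ν B) x := by
    intro x
    rw [split x, ← partIic_toReal ν B]
    exact le_add_of_nonneg_right ENNReal.toReal_nonneg
  have hA := A_div_tendsto (B := B) h1 h2 T
  have hup1 : ∀ᶠ x in atTop,
      (∫ y in Iic T, tailDist ν (x - y) ∂B) / tailDist ν x < mT + δ/4 :=
    hA.eventually_lt_const (by linarith)
  have hup2 : ∀ᶠ x in atTop,
      ε' * (tailDist (convDist ν ν) x / tailDist ν x) < δ/4 := by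
    have hl : Tendsto (fun x => ε' * (tailDist (convDist ν ν) x / tailDist ν x)) atTop
        (nhds (ε' * K)) := h4.const_mul ε'
    apply hl.eventually_lt_const
    rw [hε', div_mul_eq_mul_div, div_lt_div_iff₀ (by linarith) (by norm_num)]
    nlinarith
  have hup3 : ∀ᶠ x in atTop,
      tailDist B T * (tailDist ν (x - T) / tailDist ν x) < δ/4 := by
    have hl : Tendsto (fun x => tailDist B T * (tailDist ν (x - T) / tailDist ν x)) atTop
        (nhds (tailDist B T * Real.exp (α * T))) := (h2 T).const_mul _
    apply hl.eventually_lt_const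
    calc tailDist B T * Real.exp (α * T) ≤ ∫ y in Ioi T, Real.exp (α * y) ∂B :=
          markov_tail hα h6 T
      _ < δ/4 := hrT
  have hlow1 : ∀ᶠ x in atTop,
      mB - δ < (∫ y in Iic T, tailDist ν (x - y) ∂B) / tailDist ν x :=
    hA.eventually_const_lt (by linarith)
  filter_upwards [hup1, hup2, hup3, hlow1] with x hx1 hx2 hx3 hx4
  rw [Real.dist_eq, abs_sub_lt_iff]
  have hnx := h1 x
  constructor
  · have hu : tailDist (convDist ν B) x / tailDist ν x
        ≤ (∫ y in Iic T, tailDist ν (x - y) ∂B) / tailDist ν x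
          + (ε' * (tailDist (convDist ν ν) x / tailDist ν x)
            + tailDist B T * (tailDist ν (x - T) / tailDist ν x)) := by
      calc tailDist (convDist ν B) x / tailDist ν x
          ≤ ((∫ y in Iic T, tailDist ν (x - y) ∂B)
            + (ε' * tailDist (convDist ν ν) x + tailDist B T * tailDist ν (x - T)))
              / tailDist ν x := by gcongr; exact up x
        _ = _ := by rw [add_div, add_div, mul_div_assoc, mul_div_assoc]
    linarith
  · have hu : (∫ y in Iic T, tailDist ν (x - y) ∂B) / tailDist ν x
        ≤ tailDist (convDist ν B) x / tailDist ν x := by gcongr; exact low x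
    linarith


lemma L2 {K : ℝ} (hα : 0 ≤ α)
    (h1 : ∀ x, 0 < tailDist ν x)
    (h2 : ∀ y : ℝ, Tendsto (fun x => tailDist ν (x - y) / tailDist ν x) atTop
      (nhds (Real.exp (α * y))))
    (h4 : Tendsto (fun x => tailDist (convDist ν ν) x / tailDist ν x) atTop (nhds K))
    (h5 : Tendsto (fun x => tailDist B x / tailDist ν x) atTop (nhds 0))
    (h6 : Integrable (fun x => Real.exp (α * x)) B)
    {M : ℝ} (hM1 : 1 ≤ M) (hM : ∀ s : ℝ, tailDist B s ≤ M * tailDist ν s) :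
    Tendsto (fun x => tailDist (convDist B B) x / tailDist ν x) atTop (nhds 0) := by
  have hK0 : 0 ≤ K :=
    ge_of_tendsto' h4 (fun x => div_nonneg (tail_nonneg _ _) (tail_nonneg _ _))
  have hM0 : 0 < M := lt_of_lt_of_le one_pos hM1
  rw [Metric.tendsto_nhds]
  intro δ hδ
  set ε' := δ / (4 * M * (K + 1)) with hε'
  have hε'pos : 0 < ε' := div_pos hδ (by positivity)
  have E1 : ∀ᶠ t in atTop, tailDist B t ≤ ε' * tailDist ν t := by
    filter_upwards [h5.eventually_lt_const hε'pos] with t ht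
    rw [div_lt_iff₀ (h1 t)] at ht
    linarith
  obtain ⟨T₁, hT₁⟩ := eventually_atTop.1 E1
  have hcompl : ∀ T : ℝ, (∫ y in Iic T, Real.exp (α * y) ∂B)
      + (∫ y in Ioi T, Real.exp (α * y) ∂B) = ∫ y, Real.exp (α * y) ∂B := by
    intro T
    have h := integral_add_compl (measurableSet_Iic (a := T)) h6
      (f := fun y => Real.exp (α * y))
    rwa [compl_Iic] at h
  have E2 : Tendsto (fun T : ℝ => M * ∫ y in Ioi T, Real.exp (α * y) ∂B) atTop (nhds 0) := by
    have h := ((mT_tendsto (B := B) h6).const_sub (∫ y, Real.exp (α * y) ∂B)).const_mul M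
    rw [sub_self, mul_zero] at h
    apply h.congr
    intro T
    have := hcompl T
    ring_nf
    nlinarith [hcompl T]
  obtain ⟨T₂, hT₂⟩ := eventually_atTop.1 (E2.eventually_lt_const (by linarith : (0:ℝ) < δ/4))
  set T := max T₁ T₂ with hTdef
  have hT5 : ∀ t : ℝ, T ≤ t → tailDist B t ≤ ε' * tailDist ν t :=
    fun t ht => hT₁ t (le_trans (le_max_left _ _) ht)
  have hrT : M * ∫ y in Ioi T, Real.exp (α * y) ∂B < δ/4 := hT₂ T (le_max_right _ _)
  have split : ∀ x : ℝ, tailDist (convDist B B) x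
      = (∫⁻ y in Iic T, B (Ioi (x - y)) ∂B).toReal
        + (∫⁻ y in Ioi T, B (Ioi (x - y)) ∂B).toReal := by
    intro x
    simp only [tailDist]
    rw [convDist_Ioi',
      show (∫⁻ y, B (Ioi (x - y)) ∂B) = ∫⁻ y in Iic T, B (Ioi (x - y)) ∂B
        + ∫⁻ y in (Iic T)ᶜ, B (Ioi (x - y)) ∂B from (lintegral_add_compl _ measurableSet_Iic).symm,
      compl_Iic, ENNReal.toReal_add (part_ne_top B B x _) (part_ne_top B B x _)]
  have up : ∀ x : ℝ, tailDist (convDist B B) x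
      ≤ tailDist B (x - T)
        + M * (ε' * tailDist (convDist ν ν) x + tailDist B T * tailDist ν (x - T)) := by
    intro x
    rw [split x]
    have p1 : (∫⁻ y in Iic T, B (Ioi (x - y)) ∂B).toReal ≤ tailDist B (x - T) := by
      have hle : ∫⁻ y in Iic T, B (Ioi (x - y)) ∂B ≤ B (Ioi (x - T)) := by
        calc ∫⁻ y in Iic T, B (Ioi (x - y)) ∂B ≤ ∫⁻ _ in Iic T, B (Ioi (x - T)) ∂B := by
              apply lintegral_mono_ae
              filter_upwards [ae_restrict_mem measurableSet_Iic] with y hy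
              exact measure_mono (Ioi_subset_Ioi (by simp only [Set.mem_Iic] at hy; linarith))
          _ = B (Ioi (x - T)) * B (Iic T) := setLIntegral_const _ _
          _ ≤ B (Ioi (x - T)) * 1 := by gcongr; exact prob_le_one
          _ = B (Ioi (x - T)) := mul_one _
      exact ENNReal.toReal_mono (measure_ne_top _ _) hle
    have p2 : (∫⁻ y in Ioi T, B (Ioi (x - y)) ∂B).toReal
        ≤ M * (ε' * tailDist (convDist ν ν) x + tailDist B T * tailDist ν (x - T)) := by
      have hle : ∫⁻ y in Ioi T, B (Ioi (x - y)) ∂B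
          ≤ ENNReal.ofReal M * (ENNReal.ofReal ε' * convDist ν ν (Ioi x)
            + B (Ioi T) * ν (Ioi (x - T))) := by
        calc ∫⁻ y in Ioi T, B (Ioi (x - y)) ∂B
            ≤ ∫⁻ y in Ioi T, ENNReal.ofReal M * ν (Ioi (x - y)) ∂B :=
              lintegral_mono (fun y => tail_le_ennreal hM0.le (hM _))
          _ = ENNReal.ofReal M * ∫⁻ y in Ioi T, ν (Ioi (x - y)) ∂B :=
              lintegral_const_mul _ (meas_inner ν x)
          _ ≤ _ := by
              gcongr
              exact swap_bound ν B x T (ENNReal.ofReal ε')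
                (fun t ht => tail_le_ennreal hε'pos.le (hT5 t ht))
      calc (∫⁻ y in Ioi T, B (Ioi (x - y)) ∂B).toReal
          ≤ (ENNReal.ofReal M * (ENNReal.ofReal ε' * convDist ν ν (Ioi x)
            + B (Ioi T) * ν (Ioi (x - T)))).toReal :=
            ENNReal.toReal_mono (by finiteness) hle
        _ = M * (ε' * tailDist (convDist ν ν) x + tailDist B T * tailDist ν (x - T)) := by
            rw [ENNReal.toReal_mul, ENNReal.toReal_add
                (ENNReal.mul_ne_top ENNReal.ofReal_ne_top (measure_ne_top _ _))
                (ENNReal.mul_ne_top (measure_ne_top _ _) (measure_ne_top _ _)),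
              ENNReal.toReal_mul, ENNReal.toReal_mul, ENNReal.toReal_ofReal hM0.le,
              ENNReal.toReal_ofReal hε'pos.le]
            rfl
    linarith
  have l1 : Tendsto (fun x => tailDist B (x - T) / tailDist ν x) atTop (nhds 0) := by
    have hprod : Tendsto (fun x => (tailDist B (x - T) / tailDist ν (x - T))
        * (tailDist ν (x - T) / tailDist ν x)) atTop (nhds (0 * Real.exp (α * T))) :=
      (comp_shift h5 T).mul (h2 T)
    rw [zero_mul] at hprod
    apply hprod.congr
    intro x
    have h := (h1 (x - T)).ne'
    field_simp
  have l2 : Tendsto (fun x => M * (ε' * (tailDist (convDist ν ν) x / tailDist ν x))) atTop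
      (nhds (M * (ε' * K))) := (h4.const_mul ε').const_mul M
  have l3 : Tendsto (fun x => M * (tailDist B T * (tailDist ν (x - T) / tailDist ν x))) atTop
      (nhds (M * (tailDist B T * Real.exp (α * T)))) := ((h2 T).const_mul _).const_mul M
  have e1 : ∀ᶠ x in atTop, tailDist B (x - T) / tailDist ν x < δ/4 :=
    l1.eventually_lt_const (by linarith)
  have e2 : ∀ᶠ x in atTop, M * (ε' * (tailDist (convDist ν ν) x / tailDist ν x)) < δ/4 := by
    apply l2.eventually_lt_const
    rw [hε', div_mul_eq_mul_div, mul_div_assoc']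
    have h4M : (0:ℝ) < 4 * M * (K + 1) := by positivity
    rw [div_lt_div_iff₀ h4M (by norm_num : (0:ℝ) < 4)]
    nlinarith [mul_pos hM0 hδ]
  have e3 : ∀ᶠ x in atTop,
      M * (tailDist B T * (tailDist ν (x - T) / tailDist ν x)) < δ/4 := by
    apply l3.eventually_lt_const
    calc M * (tailDist B T * Real.exp (α * T))
        ≤ M * ∫ y in Ioi T, Real.exp (α * y) ∂B := by
          gcongr
          exact markov_tail hα h6 T
      _ < δ/4 := hrT
  filter_upwards [e1, e2, e3] with x hx1 hx2 hx3
  rw [Real.dist_eq, sub_zero, abs_of_nonneg (div_nonneg (tail_nonneg _ _) (tail_nonneg _ _))]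
  have hnx := h1 x
  have hu : tailDist (convDist B B) x / tailDist ν x
      ≤ tailDist B (x - T) / tailDist ν x
        + (M * (ε' * (tailDist (convDist ν ν) x / tailDist ν x))
          + M * (tailDist B T * (tailDist ν (x - T) / tailDist ν x))) := by
    calc tailDist (convDist B B) x / tailDist ν x
        ≤ (tailDist B (x - T)
          + M * (ε' * tailDist (convDist ν ν) x + tailDist B T * tailDist ν (x - T)))
            / tailDist ν x := by gcongr; exact up x
      _ = _ := by field_simp
  linarith


lemma tail_combo (ν B : Measure ℝ) [IsProbabilityMeasure ν] [IsProbabilityMeasure B]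
    {a b : ℝ≥0∞} (hat : a ≠ ⊤) (hbt : b ≠ ⊤) (x : ℝ) :
    tailDist (a • ν + b • B) x = a.toReal * tailDist ν x + b.toReal * tailDist B x := by
  simp only [tailDist, Measure.add_apply, Measure.smul_apply, smul_eq_mul]
  rw [ENNReal.toReal_add (ENNReal.mul_ne_top hat (measure_ne_top _ _))
    (ENNReal.mul_ne_top hbt (measure_ne_top _ _)), ENNReal.toReal_mul, ENNReal.toReal_mul]

lemma combo (hα : 0 ≤ α)
    (h1 : ∀ x, 0 < tailDist ν x)
    (h2 : ∀ y : ℝ, Tendsto (fun x => tailDist ν (x - y) / tailDist ν x) atTop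
      (nhds (Real.exp (α * y))))
    (h3 : Integrable (fun x => Real.exp (α * x)) ν)
    (h4 : Tendsto (fun x => tailDist (convDist ν ν) x / tailDist ν x) atTop
      (nhds (2 * mgfVal ν α)))
    (h5 : Tendsto (fun x => tailDist B x / tailDist ν x) atTop (nhds 0))
    {a b : ℝ≥0∞} (ha0 : a ≠ 0) (hat : a ≠ ⊤) (hb0 : b ≠ 0) (hbt : b ≠ ⊤) :
    (∀ x, 0 < tailDist (a • ν + b • B) x) ∧
    (∀ y : ℝ, Tendsto (fun x => tailDist (a • ν + b • B) (x - y)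
        / tailDist (a • ν + b • B) x) atTop (nhds (Real.exp (α * y)))) ∧
    Integrable (fun x => Real.exp (α * x)) (a • ν + b • B) ∧
    Tendsto (fun x => tailDist (convDist (a • ν + b • B) (a • ν + b • B)) x
        / tailDist (a • ν + b • B) x) atTop
      (nhds (2 * mgfVal (a • ν + b • B) α)) := by
  obtain ⟨M, hM1, hM⟩ := global_bound h1 h5
  have h6 : Integrable (fun x => Real.exp (α * x)) B :=
    integrable_exp_B hα h3 (le_trans zero_le_one hM1) hM
  set a' := a.toReal with ha'
  set b' := b.toReal with hb'
  have ha'pos : 0 < a' := ENNReal.toReal_pos ha0 hat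
  have hb'pos : 0 < b' := ENNReal.toReal_pos hb0 hbt
  have htail : ∀ x : ℝ, tailDist (a • ν + b • B) x
      = a' * tailDist ν x + b' * tailDist B x := tail_combo ν B hat hbt
  have hpos : ∀ x, 0 < tailDist (a • ν + b • B) x := by
    intro x
    rw [htail x]
    have := mul_nonneg hb'pos.le (tail_nonneg B x)
    nlinarith [mul_pos ha'pos (h1 x)]
  -- ratio of combined tail to ν-tail
  have hratio : Tendsto (fun x => tailDist (a • ν + b • B) x / tailDist ν x) atTop
      (nhds a') := by
    have hl : Tendsto (fun x => a' + b' * (tailDist B x / tailDist ν x)) atTop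
        (nhds (a' + b' * 0)) := tendsto_const_nhds.add (h5.const_mul b')
    rw [mul_zero, add_zero] at hl
    apply hl.congr
    intro x
    rw [htail x, add_div, mul_div_assoc, mul_div_assoc, div_self (h1 x).ne', mul_one]
  have hinv : Tendsto (fun x => tailDist ν x / tailDist (a • ν + b • B) x) atTop
      (nhds a'⁻¹) := by
    have hl := hratio.inv₀ ha'pos.ne'
    apply hl.congr
    intro x
    rw [inv_div]
  refine ⟨hpos, ?_, ?_, ?_⟩
  · intro y
    have hl : Tendsto (fun x =>
        (tailDist (a • ν + b • B) (x - y) / tailDist ν (x - y))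
          * (tailDist ν (x - y) / tailDist ν x)
          * (tailDist ν x / tailDist (a • ν + b • B) x)) atTop
        (nhds (a' * Real.exp (α * y) * a'⁻¹)) := (comp_shift hratio y |>.mul (h2 y)).mul hinv
    have : a' * Real.exp (α * y) * a'⁻¹ = Real.exp (α * y) := by
      field_simp
    rw [this] at hl
    apply hl.congr
    intro x
    have hn1 := (h1 (x - y)).ne'
    have hn2 := (h1 x).ne'
    have hn3 := (hpos x).ne'
    field_simp
  · rw [integrable_add_measure]
    exact ⟨(integrable_smul_measure ha0 hat).2 h3, (integrable_smul_measure hb0 hbt).2 h6⟩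
  · -- the convolution condition
    set mN := mgfVal ν α with hmN
    set mB := mgfVal B α with hmB2
    have hL1 : Tendsto (fun x => tailDist (convDist ν B) x / tailDist ν x) atTop
        (nhds mB) := L1 hα h1 h2 h4 h5 h6
    have hL2 : Tendsto (fun x => tailDist (convDist B B) x / tailDist ν x) atTop
        (nhds 0) := L2 hα h1 h2 h4 h5 h6 hM1 hM
    have hmgf : mgfVal (a • ν + b • B) α = a' * mN + b' * mB := by
      rw [mgfVal, integral_add_measure ((integrable_smul_measure ha0 hat).2 h3)
        ((integrable_smul_measure hb0 hbt).2 h6), integral_smul_measure, integral_smul_measure]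
      rfl
    have hconvtail : ∀ x : ℝ, tailDist (convDist (a • ν + b • B) (a • ν + b • B)) x
        = a' * (a' * tailDist (convDist ν ν) x + b' * tailDist (convDist ν B) x)
          + b' * (a' * tailDist (convDist ν B) x + b' * tailDist (convDist B B) x) := by
      intro x
      have inner : ∀ y : ℝ, (a • ν + b • B) (Set.Ioi (x - y))
          = a * ν (Set.Ioi (x - y)) + b * B (Set.Ioi (x - y)) := by
        intro y
        simp [Measure.add_apply, Measure.smul_apply, smul_eq_mul]
      have expand : ∀ (ρ : Measure ℝ), ∫⁻ y, (a • ν + b • B) (Set.Ioi (x - y)) ∂ρ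
          = a * (∫⁻ y, ν (Set.Ioi (x - y)) ∂ρ) + b * ∫⁻ y, B (Set.Ioi (x - y)) ∂ρ := by
        intro ρ
        simp only [inner]
        rw [lintegral_add_left ((meas_inner ν x).const_mul a),
          lintegral_const_mul _ (meas_inner ν x), lintegral_const_mul _ (meas_inner B x)]
      have hENN : convDist (a • ν + b • B) (a • ν + b • B) (Set.Ioi x)
          = a * (a * convDist ν ν (Set.Ioi x) + b * convDist ν B (Set.Ioi x))
            + b * (a * convDist ν B (Set.Ioi x) + b * convDist B B (Set.Ioi x)) := by
        rw [convDist_Ioi, lintegral_add_measure, lintegral_smul_measure, lintegral_smul_measure,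
          expand ν, expand B, ← convDist_Ioi ν ν x, ← convDist_Ioi ν B x,
          ← convDist_Ioi' ν B x, ← convDist_Ioi' B B x]
        simp only [smul_eq_mul]
      simp only [tailDist, hENN]
      have c1 : a * convDist ν ν (Set.Ioi x) ≠ ⊤ := ENNReal.mul_ne_top hat (measure_ne_top _ _)
      have c2 : b * convDist ν B (Set.Ioi x) ≠ ⊤ := ENNReal.mul_ne_top hbt (measure_ne_top _ _)
      have c3 : a * convDist ν B (Set.Ioi x) ≠ ⊤ := ENNReal.mul_ne_top hat (measure_ne_top _ _)
      have c4 : b * convDist B B (Set.Ioi x) ≠ ⊤ := ENNReal.mul_ne_top hbt (measure_ne_top _ _)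
      rw [ENNReal.toReal_add (by finiteness) (by finiteness),
        ENNReal.toReal_mul, ENNReal.toReal_mul, ENNReal.toReal_add c1 c2,
        ENNReal.toReal_add c3 c4, ENNReal.toReal_mul, ENNReal.toReal_mul,
        ENNReal.toReal_mul, ENNReal.toReal_mul]
    have hlim : Tendsto (fun x =>
        (a' * (a' * (tailDist (convDist ν ν) x / tailDist ν x)
            + b' * (tailDist (convDist ν B) x / tailDist ν x))
          + b' * (a' * (tailDist (convDist ν B) x / tailDist ν x)
            + b' * (tailDist (convDist B B) x / tailDist ν x)))
          * (tailDist ν x / tailDist (a • ν + b • B) x)) atTop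
        (nhds ((a' * (a' * (2 * mN) + b' * mB) + b' * (a' * mB + b' * 0)) * a'⁻¹)) := by
      exact (((h4.const_mul a').add (hL1.const_mul b')).const_mul a' |>.add
        (((hL1.const_mul a').add (hL2.const_mul b')).const_mul b')).mul hinv
    have hval : (a' * (a' * (2 * mN) + b' * mB) + b' * (a' * mB + b' * 0)) * a'⁻¹
        = 2 * (a' * mN + b' * mB) := by
      field_simp
      try ring
    rw [hval, ← hmgf] at hlim
    apply hlim.congr
    intro x
    have hn := (h1 x).ne'
    have hd := (hpos x).ne'
    rw [hconvtail x]
    field_simp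
    try ring


/-! ### Translation between measures on `(0,∞)` and their log-transforms -/

lemma posMod_smul (c : ℝ≥0∞) (μ : Measure ℝ) : posMod (c • μ) = c • posMod μ := by
  rw [posMod, posMod, Measure.map_smul]

lemma posMod_add (μ ρ : Measure ℝ) : posMod (μ + ρ) = posMod μ + posMod ρ := by
  rw [posMod, posMod, posMod, Measure.map_add _ _ (by fun_prop : Measurable fun x : ℝ => max x 0)]

lemma pm_log_univ (U : Measure ℝ) :
    posMod ((U.restrict (Set.Ioi 0)).map Real.log) Set.univ = U (Set.Ioi 0) := by
  rw [posMod, Measure.map_apply (by fun_prop) MeasurableSet.univ, Set.preimage_univ,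
    Measure.map_apply Real.measurable_log MeasurableSet.univ, Set.preimage_univ,
    Measure.restrict_apply_univ]

lemma tail_pm_log (U : Measure ℝ) {x : ℝ} (hx : 0 ≤ x) :
    posMod ((U.restrict (Set.Ioi 0)).map Real.log) (Set.Ioi x) = U (Set.Ioi (Real.exp x)) := by
  rw [posMod, Measure.map_apply (by fun_prop) measurableSet_Ioi]
  have h1 : (fun t : ℝ => max t 0) ⁻¹' (Set.Ioi x) = Set.Ioi x := by
    ext t
    simp [Set.mem_preimage, lt_max_iff, hx.not_gt]
  rw [h1, Measure.map_apply Real.measurable_log measurableSet_Ioi,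
    Measure.restrict_apply (Real.measurable_log measurableSet_Ioi)]
  congr 1
  ext t
  simp only [Set.mem_inter_iff, Set.mem_preimage, Set.mem_Ioi]
  constructor
  · rintro ⟨hlt, hpos⟩
    exact (Real.lt_log_iff_exp_lt hpos).1 hlt
  · intro h
    have hpos : 0 < t := lt_trans (Real.exp_pos x) h
    exact ⟨(Real.lt_log_iff_exp_lt hpos).2 h, hpos⟩

end Stmt16Aux
end Stmt16Aux

/-- Special case (a) of Assumption A: if `F ∈ R*_{-α}` and `Ḡ(x) = o(F̄(x))`, then every
convex combination `pF + (1-p)G`, `0 < p < 1`, is in `R*_{-α}`. -/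
theorem stmt_16
    (F G : Measure ℝ) [IsProbabilityMeasure F] [IsProbabilityMeasure G]
    (hGpos : G (Set.Iic 0) = 0)
    (α : ℝ) (hα : 0 ≤ α)
    (hF : MemSRV α F)
    (ho : (fun x => tailDist G x) =o[atTop] (fun x => tailDist F x)) :
    AssumpA α F G := by
  obtain ⟨hcF0, hCE⟩ := hF
  obtain ⟨h1, h2, h3, h4⟩ := hCE
  intro p hp hp1
  have hq : 0 < 1 - p := by linarith
  set cF := F (Set.Ioi 0) with hcF
  have hcFt : cF ≠ ⊤ := measure_ne_top F _
  set ν := posMod ((cF⁻¹ • F.restrict (Set.Ioi 0)).map Real.log) with hν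
  set PF := posMod ((F.restrict (Set.Ioi 0)).map Real.log) with hPF
  set B := posMod ((G.restrict (Set.Ioi 0)).map Real.log) with hB
  have hνPF : ν = cF⁻¹ • PF := by
    rw [hν, hPF, Measure.map_smul, Stmt16Aux.posMod_smul]
  have hPFν : PF = cF • ν := by
    rw [hνPF, smul_smul, ENNReal.mul_inv_cancel hcF0 hcFt, one_smul]
  have hPFuniv : PF Set.univ = cF := by rw [hPF, Stmt16Aux.pm_log_univ, hcF]
  haveI hνprob : IsProbabilityMeasure ν := ⟨by
    rw [hνPF, Measure.smul_apply, hPFuniv, smul_eq_mul, ENNReal.inv_mul_cancel hcF0 hcFt]⟩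
  have hG1 : G (Set.Ioi 0) = 1 := by
    have h := prob_compl_eq_one_sub (μ := G) (measurableSet_Iic (a := (0:ℝ)))
    rwa [Set.compl_Iic, hGpos, tsub_zero] at h
  haveI hBprob : IsProbabilityMeasure B := ⟨by rw [hB, Stmt16Aux.pm_log_univ, hG1]⟩
  set H := ENNReal.ofReal p • F + ENNReal.ofReal (1-p) • G with hH
  have hcH : H (Set.Ioi 0) = ENNReal.ofReal p * cF + ENNReal.ofReal (1-p) := by
    rw [hH]
    simp only [Measure.add_apply, Measure.smul_apply, smul_eq_mul, hG1, mul_one, hcF]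
  have hcH0 : H (Set.Ioi 0) ≠ 0 := by
    rw [hcH]
    intro hcon
    rw [add_eq_zero] at hcon
    exact (ENNReal.ofReal_pos.2 hq).ne' hcon.2
  have hcHt : H (Set.Ioi 0) ≠ ⊤ := by
    rw [hcH]
    exact ENNReal.add_ne_top.2
      ⟨ENNReal.mul_ne_top ENNReal.ofReal_ne_top hcFt, ENNReal.ofReal_ne_top⟩
  refine ⟨hcH0, ?_⟩
  set aE := (H (Set.Ioi 0))⁻¹ * (ENNReal.ofReal p * cF) with haE
  set bE := (H (Set.Ioi 0))⁻¹ * ENNReal.ofReal (1-p) with hbE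
  have hdec : posMod (((H (Set.Ioi 0))⁻¹ • H.restrict (Set.Ioi 0)).map Real.log)
      = aE • ν + bE • B := by
    have hres : H.restrict (Set.Ioi 0)
        = ENNReal.ofReal p • F.restrict (Set.Ioi 0)
          + ENNReal.ofReal (1-p) • G.restrict (Set.Ioi 0) := by
      rw [hH, Measure.restrict_add, Measure.restrict_smul, Measure.restrict_smul]
    rw [Measure.map_smul, Stmt16Aux.posMod_smul, hres,
      Measure.map_add _ _ Real.measurable_log, Measure.map_smul, Measure.map_smul,
      Stmt16Aux.posMod_add, Stmt16Aux.posMod_smul, Stmt16Aux.posMod_smul, ← hPF, ← hB, hPFν,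
      smul_add, smul_smul, smul_smul, smul_smul, haE, hbE, mul_assoc]
  have haE0 : aE ≠ 0 := by
    rw [haE]
    exact mul_ne_zero (ENNReal.inv_ne_zero.2 hcHt)
      (mul_ne_zero (ENNReal.ofReal_pos.2 hp).ne' hcF0)
  have haEt : aE ≠ ⊤ := by
    rw [haE]
    exact ENNReal.mul_ne_top (ENNReal.inv_ne_top.2 hcH0)
      (ENNReal.mul_ne_top ENNReal.ofReal_ne_top hcFt)
  have hbE0 : bE ≠ 0 := by
    rw [hbE]
    exact mul_ne_zero (ENNReal.inv_ne_zero.2 hcHt) (ENNReal.ofReal_pos.2 hq).ne'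
  have hbEt : bE ≠ ⊤ := by
    rw [hbE]
    exact ENNReal.mul_ne_top (ENNReal.inv_ne_top.2 hcH0) ENNReal.ofReal_ne_top
  have h5 : Tendsto (fun x => tailDist B x / tailDist ν x) atTop (nhds 0) := by
    have hdiv : Tendsto (fun x => tailDist G (Real.exp x) / tailDist F (Real.exp x))
        atTop (nhds 0) := (ho.tendsto_div_nhds_zero).comp Real.tendsto_exp_atTop
    have hl := hdiv.const_mul (cF.toReal)
    rw [mul_zero] at hl
    apply hl.congr'
    filter_upwards [eventually_ge_atTop (0:ℝ)] with x hx
    have hBx : tailDist B x = tailDist G (Real.exp x) := by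
      rw [hB, tailDist, Stmt16Aux.tail_pm_log G hx]
      rfl
    have hνx : tailDist ν x = (cF.toReal)⁻¹ * tailDist F (Real.exp x) := by
      rw [hνPF, tailDist, Measure.smul_apply, smul_eq_mul, ENNReal.toReal_mul, hPF,
        Stmt16Aux.tail_pm_log F hx, ENNReal.toReal_inv]
      rfl
    rw [hBx, hνx]
    rcases eq_or_ne (tailDist F (Real.exp x)) 0 with h0 | h0
    · simp [h0]
    · have hcFr : cF.toReal ≠ 0 := (ENNReal.toReal_pos hcF0 hcFt).ne'
      field_simp
  obtain ⟨c1, c2, c3, c4⟩ := Stmt16Aux.combo hα h1 h2 h3 h4 h5 haE0 haEt hbE0 hbEt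
  simp only [MemCE]
  rw [hdec]
  exact ⟨c1, c2, c3, c4⟩
end

section
/- Let F be a distribution on ℝ and G a distribution on (0,∞), and let α ≥ 0. If F ∈ R*_{-α}, G ∈ R_{-α} (i.e., Ḡ(x) > 0 for all x and lim_{x→∞} Ḡ(xy)/Ḡ(x) = y^{-α} for all y > 0), and Ḡ(x) = O(F̄(x)) as x → ∞, then every convex combination pF+(1-p)G, 0<p<1, belongs to R*_{-α}. -/
open MeasureTheory ProbabilityTheory Filter Asymptotics

noncomputable section

open Set

-- Part 1: basic tail lemmas
lemma tailDist_nonneg (μ : Measure ℝ) (x : ℝ) : 0 ≤ tailDist μ x := ENNReal.toReal_nonneg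

lemma tailDist_antitone (μ : Measure ℝ) [IsFiniteMeasure μ] : Antitone (tailDist μ) := by
  intro a b hab
  exact ENNReal.toReal_mono (measure_ne_top _ _) (measure_mono (Ioi_subset_Ioi hab))

lemma measure_Ioi_eq_ofReal (μ : Measure ℝ) [IsFiniteMeasure μ] (x : ℝ) :
    μ (Set.Ioi x) = ENNReal.ofReal (tailDist μ x) := by
  rw [tailDist, ENNReal.ofReal_toReal (measure_ne_top _ _)]

lemma tailDist_measurable (μ : Measure ℝ) [IsFiniteMeasure μ] : Measurable (tailDist μ) :=
  (tailDist_antitone μ).measurable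

-- Part 2: convolution tail formula
lemma convDist_apply_Ioi (μ ν : Measure ℝ) [SFinite μ] [SFinite ν] (x : ℝ) :
    convDist μ ν (Set.Ioi x) = ∫⁻ t, ν (Set.Ioi (x - t)) ∂μ := by
  rw [convDist, Measure.map_apply (by fun_prop) measurableSet_Ioi]
  have hms : MeasurableSet ((fun p : ℝ × ℝ => p.1 + p.2) ⁻¹' Ioi x) :=
    (by fun_prop : Measurable (fun p : ℝ × ℝ => p.1 + p.2)) measurableSet_Ioi
  rw [Measure.prod_apply hms]
  congr 1; ext t
  congr 1; ext s
  simp [sub_lt_iff_lt_add']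
/-- The "both large" remainder set. -/
def Rset (T x : ℝ) : Set (ℝ × ℝ) := {p : ℝ × ℝ | T < p.1 ∧ T < p.2 ∧ x < p.1 + p.2}

lemma Rset_measurable (T x : ℝ) : MeasurableSet (Rset T x) := by
  have h1 : MeasurableSet {p : ℝ × ℝ | T < p.1} := measurableSet_lt measurable_const measurable_fst
  have h2 : MeasurableSet {p : ℝ × ℝ | T < p.2} := measurableSet_lt measurable_const measurable_snd
  have h3 : MeasurableSet {p : ℝ × ℝ | x < p.1 + p.2} :=
    measurableSet_lt measurable_const (by fun_prop)
  exact h1.inter (h2.inter h3)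

lemma slice_Rset (T x t : ℝ) :
    (Prod.mk t ⁻¹' Rset T x) = if T < t then Set.Ioi (max T (x - t)) else ∅ := by
  ext s
  by_cases h : T < t <;> simp [Rset, h, sub_lt_iff_lt_add', and_comm]

lemma prod_Rset_apply (μ ν : Measure ℝ) [SFinite ν] (T x : ℝ) :
    (μ.prod ν) (Rset T x)
      = ∫⁻ t in Set.Ioi T, ν (Set.Ioi (max T (x - t))) ∂μ := by
  rw [Measure.prod_apply (Rset_measurable T x)]
  rw [← lintegral_indicator measurableSet_Ioi]
  congr 1; ext t
  rw [slice_Rset]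
  by_cases h : T < t <;> simp [h, Set.indicator]

/-- Decomposition of the convolution tail, for `x > 2T`. -/
lemma conv_tail_decomp (μ : Measure ℝ) [IsFiniteMeasure μ] (T x : ℝ) (hx : 2 * T < x) :
    convDist μ μ (Set.Ioi x)
      = 2 * (∫⁻ t in Set.Iic T, μ (Set.Ioi (x - t)) ∂μ) + (μ.prod μ) (Rset T x) := by
  have hadd : Measurable (fun p : ℝ × ℝ => p.1 + p.2) := by fun_prop
  have hS : MeasurableSet ((fun p : ℝ × ℝ => p.1 + p.2) ⁻¹' Ioi x) := hadd measurableSet_Ioi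
  rw [convDist, Measure.map_apply hadd measurableSet_Ioi]
  set S : Set (ℝ × ℝ) := (fun p : ℝ × ℝ => p.1 + p.2) ⁻¹' Ioi x with hSdef
  have hA : MeasurableSet {p : ℝ × ℝ | p.1 ≤ T} := measurableSet_le measurable_fst measurable_const
  have hB : MeasurableSet {p : ℝ × ℝ | p.2 ≤ T} := measurableSet_le measurable_snd measurable_const
  -- split S into three pieces
  have hsplit : S = (S ∩ {p | p.1 ≤ T}) ∪ ((S ∩ {p | p.2 ≤ T}) ∪ Rset T x) := by
    ext p
    simp only [Set.mem_union, Set.mem_inter_iff, Set.mem_setOf_eq, Rset, hSdef, Set.mem_preimage,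
      Set.mem_Ioi]
    constructor
    · rintro h
      rcases le_or_gt p.1 T with h1 | h1
      · exact Or.inl ⟨h, h1⟩
      rcases le_or_gt p.2 T with h2 | h2
      · exact Or.inr (Or.inl ⟨h, h2⟩)
      · exact Or.inr (Or.inr ⟨h1, h2, h⟩)
    · rintro (⟨h, _⟩ | ⟨h, _⟩ | ⟨_, _, h⟩) <;> exact h
  have hd1 : Disjoint (S ∩ {p : ℝ × ℝ | p.1 ≤ T}) ((S ∩ {p | p.2 ≤ T}) ∪ Rset T x) := by
    rw [Set.disjoint_union_right]
    constructor
    · rw [Set.disjoint_left]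
      rintro p ⟨hp, h1⟩ ⟨hq, h2⟩
      simp only [Set.mem_setOf_eq, hSdef, Set.mem_preimage, Set.mem_Ioi] at hp h1 h2
      linarith
    · rw [Set.disjoint_left]
      rintro p ⟨hp, h1⟩ ⟨h2, _, _⟩
      simp only [Set.mem_setOf_eq] at h1 h2
      linarith
  have hd2 : Disjoint (S ∩ {p : ℝ × ℝ | p.2 ≤ T}) (Rset T x) := by
    rw [Set.disjoint_left]
    rintro p ⟨hp, h1⟩ ⟨_, h2, _⟩
    simp only [Set.mem_setOf_eq] at h1 h2
    linarith
  rw [hsplit, measure_union hd1 (((hS.inter hB).union (Rset_measurable T x))),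
    measure_union hd2 (Rset_measurable T x)]
  -- first piece
  have e1 : (μ.prod μ) (S ∩ {p : ℝ × ℝ | p.1 ≤ T}) = ∫⁻ t in Set.Iic T, μ (Set.Ioi (x - t)) ∂μ := by
    rw [Measure.prod_apply (hS.inter hA), ← lintegral_indicator measurableSet_Iic]
    congr 1; ext t
    by_cases h : t ≤ T
    · have : (Prod.mk t ⁻¹' (S ∩ {p : ℝ × ℝ | p.1 ≤ T})) = Set.Ioi (x - t) := by
        ext s; simp [hSdef, h, sub_lt_iff_lt_add']
      simp [this, Set.indicator, h]
    · have : (Prod.mk t ⁻¹' (S ∩ {p : ℝ × ℝ | p.1 ≤ T})) = ∅ := by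
        ext s; simp [hSdef, h]
      simp [this, Set.indicator, h]
  -- second piece equals first by symmetry
  have e2 : (μ.prod μ) (S ∩ {p : ℝ × ℝ | p.2 ≤ T}) = (μ.prod μ) (S ∩ {p : ℝ × ℝ | p.1 ≤ T}) := by
    have hswap : (μ.prod μ) (S ∩ {p : ℝ × ℝ | p.2 ≤ T})
        = ((μ.prod μ).map Prod.swap) (S ∩ {p : ℝ × ℝ | p.1 ≤ T}) := by
      rw [Measure.map_apply measurable_swap (hS.inter hA)]
      congr 1
      ext p
      simp only [Set.mem_preimage, Set.mem_inter_iff, Set.mem_setOf_eq, hSdef, Set.mem_Ioi,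
        Prod.fst_swap, Prod.snd_swap, Prod.swap]
      constructor
      · rintro ⟨h1, h2⟩; exact ⟨by linarith, h2⟩
      · rintro ⟨h1, h2⟩; exact ⟨by linarith, h2⟩
    rw [hswap, Measure.prod_swap]
  rw [e1, e2, e1]
  ring
lemma prod_Rset_swap (μ ν : Measure ℝ) [SFinite μ] [SFinite ν] (T x : ℝ) :
    (μ.prod ν) (Rset T x) = (ν.prod μ) (Rset T x) := by
  rw [← Measure.prod_swap (μ := ν) (ν := μ), Measure.map_apply measurable_swap (Rset_measurable T x)]
  congr 1
  ext p
  simp only [Set.mem_preimage, Rset, Set.mem_setOf_eq, Prod.fst_swap, Prod.snd_swap]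
  constructor
  · rintro ⟨h1, h2, h3⟩; exact ⟨h2, h1, by linarith⟩
  · rintro ⟨h1, h2, h3⟩; exact ⟨h2, h1, by linarith⟩

lemma prod_Rset_le (μ V : Measure ℝ) [IsFiniteMeasure μ] [IsFiniteMeasure V] (c : ENNReal)
    (hc' : c ≠ ⊤) (T x : ℝ) (hc : ∀ u, T ≤ u → μ (Set.Ioi u) ≤ c * V (Set.Ioi u)) :
    (μ.prod μ) (Rset T x) ≤ c * c * ((V.prod V) (Rset T x)) := by
  have key : ∀ (ρ : Measure ℝ) [IsFiniteMeasure ρ],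
      (ρ.prod μ) (Rset T x) ≤ c * ((ρ.prod V) (Rset T x)) := by
    intro ρ _
    rw [prod_Rset_apply ρ μ T x, prod_Rset_apply ρ V T x, ← lintegral_const_mul' _ _ hc']
    exact lintegral_mono fun t => hc _ (le_max_left _ _)
  calc (μ.prod μ) (Rset T x) ≤ c * ((μ.prod V) (Rset T x)) := key μ
    _ = c * ((V.prod μ) (Rset T x)) := by rw [prod_Rset_swap]
    _ ≤ c * (c * ((V.prod V) (Rset T x))) := mul_le_mul_right (key V) c
    _ = c * c * ((V.prod V) (Rset T x)) := by rw [mul_assoc]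
lemma lintegral_tail_toReal (μ ν : Measure ℝ) [IsFiniteMeasure μ] [IsFiniteMeasure ν]
    (T x : ℝ) :
    (∫⁻ t in Set.Iic T, ν (Set.Ioi (x - t)) ∂μ).toReal
      = ∫ t in Set.Iic T, tailDist ν (x - t) ∂μ := by
  rw [← integral_toReal]
  · rfl
  · have : (fun t : ℝ => ν (Set.Ioi (x - t)))
        = fun t => ENNReal.ofReal (tailDist ν (x - t)) :=
      funext fun t => measure_Ioi_eq_ofReal ν (x - t)
    rw [this]
    exact (ENNReal.measurable_ofReal.comp
      ((tailDist_measurable ν).comp (measurable_const.sub measurable_id))).aemeasurable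
  · exact Filter.Eventually.of_forall fun t => measure_lt_top ν _

lemma tendsto_J (α : ℝ) (μ ν : Measure ℝ) [IsFiniteMeasure μ] [IsFiniteMeasure ν]
    (hν1 : ∀ x, 0 < tailDist ν x)
    (hνL : ∀ y, Tendsto (fun x => tailDist ν (x - y) / tailDist ν x) atTop
      (nhds (Real.exp (α * y)))) (T : ℝ) :
    Tendsto (fun x => (∫⁻ t in Set.Iic T, ν (Set.Ioi (x - t)) ∂μ).toReal / tailDist ν x)
      atTop (nhds (∫ t in Set.Iic T, Real.exp (α * t) ∂μ)) := by
  have hres : ∀ x : ℝ, (∫⁻ t in Set.Iic T, ν (Set.Ioi (x - t)) ∂μ).toReal / tailDist ν x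
      = ∫ t in Set.Iic T, tailDist ν (x - t) / tailDist ν x ∂μ := by
    intro x
    rw [lintegral_tail_toReal, integral_div]
  simp only [hres]
  have hbd : ∀ᶠ x : ℝ in atTop,
      tailDist ν (x - T) / tailDist ν x ≤ Real.exp (α * T) + 1 := by
    have := hνL T
    filter_upwards [this.eventually (eventually_le_nhds (by linarith [Real.exp_pos (α * T)] :
      Real.exp (α * T) < Real.exp (α * T) + 1))] with x hx using hx
  apply tendsto_integral_filter_of_dominated_convergence (fun _ => Real.exp (α * T) + 1)
  · apply Filter.Eventually.of_forall
    intro x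
    exact (((tailDist_measurable ν).comp (measurable_const.sub measurable_id)).div_const
      _).aestronglyMeasurable
  · filter_upwards [hbd] with x hx
    apply (ae_restrict_iff' measurableSet_Iic).2
    apply Filter.Eventually.of_forall
    intro t ht
    have h1 : 0 ≤ tailDist ν (x - t) / tailDist ν x :=
      div_nonneg (tailDist_nonneg ν _) (tailDist_nonneg ν _)
    rw [Real.norm_eq_abs, abs_of_nonneg h1]
    have h2 : tailDist ν (x - t) ≤ tailDist ν (x - T) :=
      tailDist_antitone ν (by simp only [Set.mem_Iic] at ht; linarith : x - T ≤ x - t)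
    calc tailDist ν (x - t) / tailDist ν x ≤ tailDist ν (x - T) / tailDist ν x :=
          by gcongr; exact (hν1 x).le
      _ ≤ Real.exp (α * T) + 1 := hx
  · exact integrable_const _
  · exact Filter.Eventually.of_forall fun t => hνL t
lemma iUnion_Iic_nat : (⋃ n : ℕ, Set.Iic (n : ℝ)) = Set.univ := by
  ext x
  simp only [Set.mem_iUnion, Set.mem_Iic, Set.mem_univ, iff_true]
  exact ⟨⌈x⌉₊, Nat.le_ceil x⟩

lemma tendsto_truncated (f : ℝ → ℝ) (μ : Measure ℝ) [IsFiniteMeasure μ]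
    (hf : Integrable f μ) :
    Tendsto (fun n : ℕ => ∫ t in Set.Iic (n : ℝ), f t ∂μ) atTop (nhds (∫ t, f t ∂μ)) := by
  have := tendsto_setIntegral_of_monotone (s := fun n : ℕ => Set.Iic (n : ℝ)) (f := f) (μ := μ)
    (fun n => measurableSet_Iic)
    (fun m n hmn => Set.Iic_subset_Iic.2 (by exact_mod_cast hmn))
    (by rw [iUnion_Iic_nat]; exact hf.integrableOn)
  rwa [iUnion_Iic_nat, setIntegral_univ] at this

-- layer cake identity
lemma lintegral_exp_tail (μ : Measure ℝ) [IsFiniteMeasure μ] (α : ℝ) (hα : 0 < α) (x₀ : ℝ) :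
    ∫⁻ x in Set.Ioi x₀, ENNReal.ofReal (Real.exp (α * x)) ∂μ
      = ENNReal.ofReal (Real.exp (α * x₀)) * μ (Set.Ioi x₀)
        + ∫⁻ s in Set.Ioi x₀, ENNReal.ofReal (Real.exp (α * s) * α) * μ (Set.Ioi s) ∂volume := by
  have key : ∀ x ∈ Set.Ioi x₀, ENNReal.ofReal (Real.exp (α * x))
      = ENNReal.ofReal (Real.exp (α * x₀))
        + ∫⁻ s in Set.Ioi x₀, Set.indicator (Set.Iio x)
            (fun s => ENNReal.ofReal (Real.exp (α * s) * α)) s ∂volume := by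
    intro x hx
    rw [lintegral_indicator measurableSet_Iio, Measure.restrict_restrict measurableSet_Iio]
    have hIoo : Set.Iio x ∩ Set.Ioi x₀ = Set.Ioo x₀ x := by
      ext s; simp only [Set.mem_inter_iff, Set.mem_Iio, Set.mem_Ioi, Set.mem_Ioo]; tauto
    rw [hIoo]
    have hx' : x₀ < x := hx
    have hderiv : ∀ s ∈ Set.uIcc x₀ x, HasDerivAt (fun u => Real.exp (α * u))
        (Real.exp (α * s) * α) s := by
      intro s _
      simpa using ((hasDerivAt_id s).const_mul α).exp
    have hcont : Continuous fun s => Real.exp (α * s) * α := by continuity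
    have hint : ∫ s in x₀..x, Real.exp (α * s) * α
        = Real.exp (α * x) - Real.exp (α * x₀) :=
      intervalIntegral.integral_eq_sub_of_hasDerivAt hderiv
        (hcont.intervalIntegrable x₀ x)
    have hio : ∫ s in Set.Ioo x₀ x, Real.exp (α * s) * α
        = Real.exp (α * x) - Real.exp (α * x₀) := by
      rw [← MeasureTheory.integral_Ioc_eq_integral_Ioo, ← intervalIntegral.integral_of_le hx'.le,
        hint]
    have hIntOn : IntegrableOn (fun s => Real.exp (α * s) * α) (Set.Ioo x₀ x) volume :=
      (hcont.integrableOn_Icc (a := x₀) (b := x)).mono_set Set.Ioo_subset_Icc_self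
    rw [← ofReal_integral_eq_lintegral_ofReal hIntOn
      (Filter.Eventually.of_forall fun s => mul_nonneg (Real.exp_pos _).le hα.le), hio,
      ← ENNReal.ofReal_add (Real.exp_pos _).le (sub_nonneg.2 (Real.exp_le_exp.2
        (mul_le_mul_of_nonneg_left hx'.le hα.le)))]
    congr 1
    ring
  calc ∫⁻ x in Set.Ioi x₀, ENNReal.ofReal (Real.exp (α * x)) ∂μ
      = ∫⁻ x in Set.Ioi x₀, (ENNReal.ofReal (Real.exp (α * x₀))
          + ∫⁻ s in Set.Ioi x₀, Set.indicator (Set.Iio x)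
              (fun s => ENNReal.ofReal (Real.exp (α * s) * α)) s ∂volume) ∂μ := by
        apply setLIntegral_congr_fun measurableSet_Ioi
        exact key
    _ = ENNReal.ofReal (Real.exp (α * x₀)) * μ (Set.Ioi x₀)
        + ∫⁻ x in Set.Ioi x₀, (∫⁻ s in Set.Ioi x₀, Set.indicator (Set.Iio x)
            (fun s => ENNReal.ofReal (Real.exp (α * s) * α)) s ∂volume) ∂μ := by
        rw [lintegral_add_left measurable_const, setLIntegral_const]
    _ = ENNReal.ofReal (Real.exp (α * x₀)) * μ (Set.Ioi x₀)
        + ∫⁻ s in Set.Ioi x₀, ENNReal.ofReal (Real.exp (α * s) * α) * μ (Set.Ioi s) ∂volume := by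
        congr 1
        rw [lintegral_lintegral_swap]
        · apply setLIntegral_congr_fun measurableSet_Ioi
          intro s hs
          have : ∀ x : ℝ, Set.indicator (Set.Iio x)
              (fun s => ENNReal.ofReal (Real.exp (α * s) * α)) s
              = Set.indicator (Set.Ioi s) (fun _ => ENNReal.ofReal (Real.exp (α * s) * α)) x := by
            intro x
            by_cases h : s < x <;> simp [Set.indicator, h]
          simp only [this]
          rw [lintegral_indicator measurableSet_Ioi, setLIntegral_const]
          congr 1
          exact Measure.restrict_eq_self μ (Set.Ioi_subset_Ioi (le_of_lt hs))
        · apply Measurable.aemeasurable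
          have : (Function.uncurry fun (x s : ℝ) => Set.indicator (Set.Iio x)
              (fun s => ENNReal.ofReal (Real.exp (α * s) * α)) s)
              = Set.indicator {p : ℝ × ℝ | p.2 < p.1}
                  (fun p => ENNReal.ofReal (Real.exp (α * p.2) * α)) := by
            ext p
            rcases p with ⟨x, s⟩
            by_cases h : s < x <;> simp [Function.uncurry, Set.indicator, h]
          rw [this]
          exact Measurable.indicator (by fun_prop)
            (measurableSet_lt measurable_snd measurable_fst)
lemma integrable_exp_iff_lintegral (α : ℝ) (μ : Measure ℝ) :
    Integrable (fun x => Real.exp (α * x)) μ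
      ↔ (∫⁻ x, ENNReal.ofReal (Real.exp (α * x)) ∂μ) < ⊤ := by
  constructor
  · intro h
    have := h.2
    rw [hasFiniteIntegral_iff_ofReal (Filter.Eventually.of_forall fun x =>
      (Real.exp_pos _).le)] at this
    exact this
  · intro h
    refine ⟨(by continuity : Continuous fun x : ℝ => Real.exp (α * x)).aestronglyMeasurable, ?_⟩
    rw [hasFiniteIntegral_iff_ofReal (Filter.Eventually.of_forall fun x =>
      (Real.exp_pos _).le)]
    exact h

lemma integrable_exp_of_tail_le (α : ℝ) (hα : 0 ≤ α) (V W : Measure ℝ)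
    [IsFiniteMeasure V] [IsFiniteMeasure W]
    (hV : Integrable (fun x => Real.exp (α * x)) V) (C x₀ : ℝ)
    (h : ∀ u, x₀ ≤ u → W (Set.Ioi u) ≤ ENNReal.ofReal C * V (Set.Ioi u)) :
    Integrable (fun x => Real.exp (α * x)) W := by
  rcases eq_or_lt_of_le hα with rfl | hα'
  · simpa using integrable_const (μ := W) (1 : ℝ)
  rw [integrable_exp_iff_lintegral]
  rw [integrable_exp_iff_lintegral] at hV
  have hsplit : ∫⁻ x, ENNReal.ofReal (Real.exp (α * x)) ∂W
      = (∫⁻ x in Set.Iic x₀, ENNReal.ofReal (Real.exp (α * x)) ∂W)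
        + ∫⁻ x in Set.Ioi x₀, ENNReal.ofReal (Real.exp (α * x)) ∂W := by
    rw [← lintegral_add_compl _ measurableSet_Iic, Set.compl_Iic]
  rw [hsplit]
  have h1 : (∫⁻ x in Set.Iic x₀, ENNReal.ofReal (Real.exp (α * x)) ∂W)
      ≤ ENNReal.ofReal (Real.exp (α * x₀)) * W Set.univ := by
    calc (∫⁻ x in Set.Iic x₀, ENNReal.ofReal (Real.exp (α * x)) ∂W)
        ≤ ∫⁻ _ in Set.Iic x₀, ENNReal.ofReal (Real.exp (α * x₀)) ∂W := by
          apply setLIntegral_mono measurable_const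
          intro x hx
          exact ENNReal.ofReal_le_ofReal (Real.exp_le_exp.2
            (mul_le_mul_of_nonneg_left hx hα'.le))
      _ = ENNReal.ofReal (Real.exp (α * x₀)) * W (Set.Iic x₀) := setLIntegral_const _ _
      _ ≤ _ := mul_le_mul_right (measure_mono (Set.subset_univ _)) _
  have h2 : (∫⁻ x in Set.Ioi x₀, ENNReal.ofReal (Real.exp (α * x)) ∂W)
      ≤ ENNReal.ofReal (Real.exp (α * x₀)) * W Set.univ
        + ENNReal.ofReal C * ∫⁻ x, ENNReal.ofReal (Real.exp (α * x)) ∂V := by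
    rw [lintegral_exp_tail W α hα' x₀]
    apply add_le_add (mul_le_mul_right (measure_mono (Set.subset_univ _)) _)
    calc (∫⁻ s in Set.Ioi x₀, ENNReal.ofReal (Real.exp (α * s) * α) * W (Set.Ioi s) ∂volume)
        ≤ ∫⁻ s in Set.Ioi x₀, ENNReal.ofReal C
            * (ENNReal.ofReal (Real.exp (α * s) * α) * V (Set.Ioi s)) ∂volume := by
          apply lintegral_mono_ae
          apply (ae_restrict_iff' measurableSet_Ioi).2
          apply Filter.Eventually.of_forall
          intro s hs
          calc ENNReal.ofReal (Real.exp (α * s) * α) * W (Set.Ioi s)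
              ≤ ENNReal.ofReal (Real.exp (α * s) * α) * (ENNReal.ofReal C * V (Set.Ioi s)) :=
                mul_le_mul_right (h s (le_of_lt hs)) _
            _ = ENNReal.ofReal C
                * (ENNReal.ofReal (Real.exp (α * s) * α) * V (Set.Ioi s)) := by ring
      _ = ENNReal.ofReal C
            * ∫⁻ s in Set.Ioi x₀, ENNReal.ofReal (Real.exp (α * s) * α) * V (Set.Ioi s) ∂volume :=
          lintegral_const_mul' _ _ ENNReal.ofReal_ne_top
      _ ≤ ENNReal.ofReal C * ∫⁻ x, ENNReal.ofReal (Real.exp (α * x)) ∂V := by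
          apply mul_le_mul_right
          calc (∫⁻ s in Set.Ioi x₀, ENNReal.ofReal (Real.exp (α * s) * α) * V (Set.Ioi s) ∂volume)
              ≤ ∫⁻ x in Set.Ioi x₀, ENNReal.ofReal (Real.exp (α * x)) ∂V := by
                rw [lintegral_exp_tail V α hα' x₀]
                exact le_add_self
            _ ≤ _ := setLIntegral_le_lintegral _ _
  have := add_le_add h1 h2
  apply lt_of_le_of_lt this
  have hWfin : W Set.univ < ⊤ := measure_lt_top W _
  apply ENNReal.add_lt_top.2
  constructor
  · exact ENNReal.mul_lt_top ENNReal.ofReal_lt_top hWfin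
  apply ENNReal.add_lt_top.2
  exact ⟨ENNReal.mul_lt_top ENNReal.ofReal_lt_top hWfin,
    ENNReal.mul_lt_top ENNReal.ofReal_lt_top hV⟩
set_option maxHeartbeats 1000000 in
theorem core_conv (V P : Measure ℝ) [IsProbabilityMeasure V] [IsProbabilityMeasure P]
    (α : ℝ) (hα : 0 ≤ α)
    (hV1 : ∀ x, 0 < tailDist V x)
    (hVL : ∀ y, Tendsto (fun x => tailDist V (x - y) / tailDist V x) atTop
      (nhds (Real.exp (α * y))))
    (hV3 : Integrable (fun x => Real.exp (α * x)) V)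
    (hV4 : Tendsto (fun x => tailDist (convDist V V) x / tailDist V x) atTop
      (nhds (2 * mgfVal V α)))
    (hP1 : ∀ x, 0 < tailDist P x)
    (hPL : ∀ y, Tendsto (fun x => tailDist P (x - y) / tailDist P x) atTop
      (nhds (Real.exp (α * y))))
    (hP3 : Integrable (fun x => Real.exp (α * x)) P)
    (C : ℝ) (hC : 0 ≤ C) (T₀ : ℝ) (hPC : ∀ u, T₀ ≤ u → tailDist P u ≤ C * tailDist V u)
    (κ : ℝ) (hκ : 0 < κ) (T₁ : ℝ) (hPκ : ∀ u, T₁ ≤ u → κ * tailDist V u ≤ tailDist P u) :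
    Tendsto (fun x => tailDist (convDist P P) x / tailDist P x) atTop
      (nhds (2 * mgfVal P α)) := by
  rw [Metric.tendsto_nhds]
  intro ε hε
  set δκ : ℝ := ε * κ / (32 * (C ^ 2 + 1)) with hδκdef
  have hδκ : 0 < δκ := by positivity
  have hδbound : (C * C / κ) * (5 * δκ) ≤ ε / 4 := by
    have hfrac : C * C / (C ^ 2 + 1) ≤ 1 := by
      rw [div_le_one (by positivity)]
      nlinarith
    have heq2 : C * C / κ * (5 * δκ) = 5 * ε / 32 * (C * C / (C ^ 2 + 1)) := by
      rw [hδκdef]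
      field_simp
    rw [heq2]
    nlinarith
  -- choose the truncation level n₀
  have hPtr := tendsto_truncated (fun t => Real.exp (α * t)) P hP3
  have hVtr := tendsto_truncated (fun t => Real.exp (α * t)) V hV3
  have hev : ∀ᶠ n : ℕ in atTop,
      (|(∫ t in Set.Iic (n : ℝ), Real.exp (α * t) ∂P) - mgfVal P α| < ε / 8
        ∧ |(∫ t in Set.Iic (n : ℝ), Real.exp (α * t) ∂V) - mgfVal V α| < δκ)
        ∧ max T₀ T₁ ≤ (n : ℝ) := by
    apply Filter.Eventually.and
    · apply Filter.Eventually.and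
      · have := Metric.tendsto_nhds.1 hPtr (ε / 8) (by positivity)
        filter_upwards [this] with n hn using by rwa [Real.dist_eq] at hn
      · have := Metric.tendsto_nhds.1 hVtr δκ hδκ
        filter_upwards [this] with n hn using by rwa [Real.dist_eq] at hn
    · exact tendsto_natCast_atTop_atTop.eventually_ge_atTop _
  obtain ⟨n₀, ⟨hPT, hVT⟩, hT01⟩ := hev.exists
  set T : ℝ := (n₀ : ℝ) with hTdef
  set PT : ℝ := ∫ t in Set.Iic T, Real.exp (α * t) ∂P with hPTdef
  set VT : ℝ := ∫ t in Set.Iic T, Real.exp (α * t) ∂V with hVTdef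
  have hT0 : T₀ ≤ T := le_trans (le_max_left _ _) hT01
  have hT1 : T₁ ≤ T := le_trans (le_max_right _ _) hT01
  -- ENNReal comparison of tails
  have hPC' : ∀ u, T ≤ u → P (Set.Ioi u) ≤ ENNReal.ofReal C * V (Set.Ioi u) := by
    intro u hu
    rw [measure_Ioi_eq_ofReal P, measure_Ioi_eq_ofReal V, ← ENNReal.ofReal_mul hC]
    exact ENNReal.ofReal_le_ofReal (hPC u (le_trans hT0 hu))
  -- eventual facts in x
  have hJP := Metric.tendsto_nhds.1 (tendsto_J α P P hP1 hPL T) (ε / 8) (by positivity)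
  have hJV := Metric.tendsto_nhds.1 (tendsto_J α V V hV1 hVL T) δκ hδκ
  have hCV := Metric.tendsto_nhds.1 hV4 δκ hδκ
  filter_upwards [hJP, hJV, hCV, eventually_ge_atTop (max (2 * T + 1) T₁)]
    with x hx1 hx2 hx3 hx4
  have hx2T : 2 * T < x := lt_of_lt_of_le (by linarith [le_max_left (2 * T + 1) T₁]) (le_refl x)
  have hxT1 : T₁ ≤ x := le_trans (le_max_right _ _) hx4
  have hx2T' : 2 * T < x := by
    have := le_trans (le_max_left (2 * T + 1) T₁) hx4
    linarith
  -- abbreviations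
  set tP : ℝ := tailDist P x with htPdef
  set tV : ℝ := tailDist V x with htVdef
  have htP : 0 < tP := hP1 x
  have htV : 0 < tV := hV1 x
  set JP : ENNReal := ∫⁻ t in Set.Iic T, P (Set.Ioi (x - t)) ∂P with hJPdef
  set RP : ENNReal := (P.prod P) (Rset T x) with hRPdef
  set JV : ENNReal := ∫⁻ t in Set.Iic T, V (Set.Ioi (x - t)) ∂V with hJVdef
  set RV : ENNReal := (V.prod V) (Rset T x) with hRVdef
  have hJPne : JP ≠ ⊤ := by
    have : JP ≤ ∫⁻ _ in Set.Iic T, 1 ∂P := lintegral_mono fun t => prob_le_one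
    apply ne_top_of_le_ne_top _ this
    simp only [lintegral_const, one_mul]
    exact ne_of_lt (lt_of_le_of_lt (measure_mono (Set.subset_univ _)) (by simp [lt_top_iff_ne_top]))
  have hRPne : RP ≠ ⊤ := measure_ne_top _ _
  have hJVne : JV ≠ ⊤ := by
    have : JV ≤ ∫⁻ _ in Set.Iic T, 1 ∂V := lintegral_mono fun t => prob_le_one
    apply ne_top_of_le_ne_top _ this
    simp only [lintegral_const, one_mul]
    exact ne_of_lt (lt_of_le_of_lt (measure_mono (Set.subset_univ _)) (by simp [lt_top_iff_ne_top]))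
  have hRVne : RV ≠ ⊤ := measure_ne_top _ _
  -- real decompositions
  have hdecP : tailDist (convDist P P) x = 2 * JP.toReal + RP.toReal := by
    rw [tailDist, conv_tail_decomp P T x hx2T', ENNReal.toReal_add
      (ENNReal.mul_ne_top (by simp) hJPne) hRPne, ENNReal.toReal_mul]
    norm_num
  have hdecV : tailDist (convDist V V) x = 2 * JV.toReal + RV.toReal := by
    rw [tailDist, conv_tail_decomp V T x hx2T', ENNReal.toReal_add
      (ENNReal.mul_ne_top (by simp) hJVne) hRVne, ENNReal.toReal_mul]
    norm_num
  -- bound on RP via RV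
  have hRPRV : RP.toReal ≤ C * C * RV.toReal := by
    have h1 : RP ≤ ENNReal.ofReal C * ENNReal.ofReal C * RV :=
      prod_Rset_le P V (ENNReal.ofReal C) ENNReal.ofReal_ne_top T x hPC'
    have h2 : (ENNReal.ofReal C * ENNReal.ofReal C * RV).toReal = C * C * RV.toReal := by
      rw [ENNReal.toReal_mul, ENNReal.toReal_mul, ENNReal.toReal_ofReal hC]
    calc RP.toReal ≤ (ENNReal.ofReal C * ENNReal.ofReal C * RV).toReal :=
          ENNReal.toReal_mono (ENNReal.mul_ne_top (ENNReal.mul_ne_top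
            ENNReal.ofReal_ne_top ENNReal.ofReal_ne_top) hRVne) h1
      _ = C * C * RV.toReal := h2
  -- bound on RV.toReal / tV
  have hrv : RV.toReal / tV < 5 * δκ := by
    have heq : RV.toReal / tV
        = tailDist (convDist V V) x / tV - 2 * (JV.toReal / tV) := by
      rw [hdecV]; ring
    rw [Real.dist_eq] at hx2 hx3
    have h1 : tailDist (convDist V V) x / tV < 2 * mgfVal V α + δκ := by
      have := abs_lt.1 hx3
      linarith [this.2]
    have h2 : VT - δκ < JV.toReal / tV := by
      have := abs_lt.1 hx2
      linarith [this.1]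
    have h3 : mgfVal V α - VT < δκ := by
      have := abs_lt.1 hVT
      linarith [this.1]
    rw [heq]
    nlinarith
  -- bound on RP.toReal / tP
  have hrp : RP.toReal / tP ≤ ε / 4 := by
    have hκtV : κ * tV ≤ tP := hPκ x hxT1
    have hRVnn : 0 ≤ RV.toReal := ENNReal.toReal_nonneg
    have hRPnn : 0 ≤ RP.toReal := ENNReal.toReal_nonneg
    have step1 : RP.toReal / tP ≤ RP.toReal / (κ * tV) := by
      gcongr <;> first | exact mul_pos hκ htV | exact hκtV
    have step2 : RP.toReal / (κ * tV) ≤ (C * C * RV.toReal) / (κ * tV) := by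
      exact div_le_div_of_nonneg_right hRPRV (mul_pos hκ htV).le
    have step3 : (C * C * RV.toReal) / (κ * tV) = (C * C / κ) * (RV.toReal / tV) := by
      field_simp
    have step4 : (C * C / κ) * (RV.toReal / tV) ≤ (C * C / κ) * (5 * δκ) :=
      mul_le_mul_of_nonneg_left hrv.le (by positivity)
    linarith [hδbound]
  -- main term
  rw [Real.dist_eq] at hx1 ⊢
  have hfx : tailDist (convDist P P) x / tP = 2 * (JP.toReal / tP) + RP.toReal / tP := by
    rw [hdecP]; ring
  have hmain : |2 * (JP.toReal / tP) - 2 * PT| < ε / 4 := by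
    have : |JP.toReal / tP - PT| < ε / 8 := hx1
    calc |2 * (JP.toReal / tP) - 2 * PT| = 2 * |JP.toReal / tP - PT| := by
          rw [show (2:ℝ) * (JP.toReal / tP) - 2 * PT = 2 * (JP.toReal / tP - PT) by ring,
            abs_mul, abs_two]
      _ < ε / 4 := by linarith
  have hPTclose : |2 * PT - 2 * mgfVal P α| < ε / 4 := by
    calc |2 * PT - 2 * mgfVal P α| = 2 * |PT - mgfVal P α| := by
          rw [show (2:ℝ) * PT - 2 * mgfVal P α = 2 * (PT - mgfVal P α) by ring,
            abs_mul, abs_two]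
      _ < ε / 4 := by linarith
  have hRPnn : 0 ≤ RP.toReal / tP := div_nonneg ENNReal.toReal_nonneg htP.le
  calc |tailDist (convDist P P) x / tP - 2 * mgfVal P α|
      = |(2 * (JP.toReal / tP) - 2 * PT) + (2 * PT - 2 * mgfVal P α) + RP.toReal / tP| := by
        rw [hfx]; ring_nf
    _ ≤ |2 * (JP.toReal / tP) - 2 * PT| + |2 * PT - 2 * mgfVal P α| + |RP.toReal / tP| := by
        exact (abs_add_le _ _).trans (by gcongr; exact abs_add_le _ _)
    _ < ε / 4 + ε / 4 + ε / 4 := by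
        rw [abs_of_nonneg hRPnn]
        exact add_lt_add_of_lt_of_le (add_lt_add hmain hPTclose) hrp
    _ < ε := by linarith
lemma posMod_apply_Ioi (μ : Measure ℝ) (u : ℝ) (hu : 0 ≤ u) :
    posMod μ (Set.Ioi u) = μ (Set.Ioi u) := by
  rw [posMod, Measure.map_apply (by fun_prop) measurableSet_Ioi]
  congr 1
  ext x
  simp only [Set.mem_preimage, Set.mem_Ioi, lt_max_iff]
  constructor
  · rintro (h | h)
    · exact h
    · linarith
  · exact fun h => Or.inl h

instance posMod_prob (μ : Measure ℝ) [IsProbabilityMeasure μ] :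
    IsProbabilityMeasure (posMod μ) :=
  Measure.isProbabilityMeasure_map (by fun_prop : Measurable fun x : ℝ => max x 0).aemeasurable

lemma posMod_add (μ ν : Measure ℝ) : posMod (μ + ν) = posMod μ + posMod ν :=
  Measure.map_add μ ν (by fun_prop)

lemma posMod_smul (c : ENNReal) (μ : Measure ℝ) : posMod (c • μ) = c • posMod μ :=
  Measure.map_smul c μ _

/-- Squeeze lemma for ratios of mixtures. -/
lemma tendsto_mix (l : Filter ℝ) (u w u' w' : ℝ → ℝ) (A B e : ℝ) (hA : 0 < A) (hB : 0 < B)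
    (hu : ∀ x, 0 < u x) (hw : ∀ x, 0 < w x)
    (h1 : Tendsto (fun x => u' x / u x) l (nhds e))
    (h2 : Tendsto (fun x => w' x / w x) l (nhds e)) :
    Tendsto (fun x => (A * u' x + B * w' x) / (A * u x + B * w x)) l (nhds e) := by
  have key : ∀ x, |(A * u' x + B * w' x) / (A * u x + B * w x) - e|
      ≤ |u' x / u x - e| + |w' x / w x - e| := by
    intro x
    have hux := hu x
    have hwx := hw x
    have hD : 0 < A * u x + B * w x := by positivity
    have hre : (A * u' x + B * w' x) / (A * u x + B * w x) - e
        = (A * u x * (u' x / u x - e) + B * w x * (w' x / w x - e)) / (A * u x + B * w x) := by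
      field_simp
      ring
    rw [hre, abs_div, abs_of_pos hD, div_le_iff₀ hD]
    calc |A * u x * (u' x / u x - e) + B * w x * (w' x / w x - e)|
        ≤ |A * u x * (u' x / u x - e)| + |B * w x * (w' x / w x - e)| := abs_add_le _ _
      _ = A * u x * |u' x / u x - e| + B * w x * |w' x / w x - e| := by
          rw [abs_mul (A * u x), abs_mul (B * w x), abs_of_pos (by positivity : (0:ℝ) < A * u x),
            abs_of_pos (by positivity : (0:ℝ) < B * w x)]
      _ ≤ (|u' x / u x - e| + |w' x / w x - e|) * (A * u x + B * w x) := by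
          nlinarith [mul_nonneg (mul_pos hA hux).le (abs_nonneg (w' x / w x - e)),
            mul_nonneg (mul_pos hB hwx).le (abs_nonneg (u' x / u x - e))]
  have h0 : Tendsto (fun x => |u' x / u x - e| + |w' x / w x - e|) l (nhds 0) := by
    have t1 : Tendsto (fun x => |u' x / u x - e|) l (nhds 0) := by
      have := (h1.sub_const e).abs
      simpa using this
    have t2 : Tendsto (fun x => |w' x / w x - e|) l (nhds 0) := by
      have := (h2.sub_const e).abs
      simpa using this
    simpa using t1.add t2
  have habs : Tendsto
      (fun x => |(A * u' x + B * w' x) / (A * u x + B * w x) - e|) l (nhds 0) :=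
    squeeze_zero (fun x => abs_nonneg _) key h0
  rw [← tendsto_sub_nhds_zero_iff]
  exact squeeze_zero_norm (fun x => le_of_eq (Real.norm_eq_abs _)) habs

end
open Set

set_option maxHeartbeats 1000000

/-- Special case (b) of Assumption A: if `F ∈ R*_{-α}`, `G ∈ R_{-α}` and `Ḡ(x) = O(F̄(x))`,
then every convex combination `pF + (1-p)G`, `0 < p < 1`, is in `R*_{-α}`. -/
theorem stmt_17
    (F G : Measure ℝ) [IsProbabilityMeasure F] [IsProbabilityMeasure G]
    (hGpos : G (Set.Iic 0) = 0)
    (α : ℝ) (hα : 0 ≤ α)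
    (hF : MemSRV α F)
    (hG : MemRV α G)
    (hO : (fun x => tailDist G x) =O[atTop] (fun x => tailDist F x)) :
    AssumpA α F G := by
  intro p hp0 hp1
  have hq0 : 0 < 1 - p := by linarith
  set q : ℝ := 1 - p with hqdef
  set H : Measure ℝ := ENNReal.ofReal p • F + ENNReal.ofReal q • G with hHdef
  obtain ⟨hcF0, hVF1, hVFL, hVF3, hVF4⟩ :
      F (Set.Ioi 0) ≠ 0 ∧ _ ∧ _ ∧ _ ∧ _ := ⟨hF.1, hF.2.1, hF.2.2.1, hF.2.2.2.1, hF.2.2.2.2⟩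
  set cF : ENNReal := F (Set.Ioi 0) with hcFdef
  have hcFtop : cF ≠ ⊤ := measure_ne_top F _
  have hlog : Measurable Real.log := Real.measurable_log
  have hmax : Measurable fun x : ℝ => max x 0 := by fun_prop
  -- G facts
  have hG1 : G (Set.Ioi 0) = 1 := by
    have h := measure_compl (μ := G) (measurableSet_Iic (a := (0:ℝ))) (measure_ne_top G _)
    rw [hGpos, Set.compl_Iic] at h
    simpa using h
  have hGrestrict : G.restrict (Set.Ioi 0) = G := by
    apply Measure.restrict_eq_self_of_ae_mem
    rw [ae_iff]
    convert hGpos using 2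
    ext x
    simp [not_lt]
  -- normalizing constant for H
  have hc : H (Set.Ioi 0) = ENNReal.ofReal p * cF + ENNReal.ofReal q := by
    simp [hHdef, Measure.add_apply, Measure.smul_apply, hG1, smul_eq_mul, hcFdef]
  set c : ENNReal := H (Set.Ioi 0) with hcdef
  have hcpos : 0 < c := by
    rw [hc]
    exact lt_of_lt_of_le (ENNReal.ofReal_pos.2 hq0) le_add_self
  have hc0 : c ≠ 0 := hcpos.ne'
  have hctop : c ≠ ⊤ := by
    rw [hc]
    exact ENNReal.add_ne_top.2 ⟨ENNReal.mul_ne_top ENNReal.ofReal_ne_top hcFtop,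
      ENNReal.ofReal_ne_top⟩
  -- the measures
  set VF : Measure ℝ := posMod ((cF⁻¹ • F.restrict (Set.Ioi 0)).map Real.log) with hVFdef
  set W : Measure ℝ := posMod (G.map Real.log) with hWdef
  set VH : Measure ℝ := (c⁻¹ • H.restrict (Set.Ioi 0)).map Real.log with hVHdef
  set P : Measure ℝ := posMod VH with hPdef
  obtain ⟨a, hadef⟩ : ∃ a : ENNReal, a = c⁻¹ * (ENNReal.ofReal p * cF) := ⟨_, rfl⟩
  obtain ⟨b, hbdef⟩ : ∃ b : ENNReal, b = c⁻¹ * ENNReal.ofReal q := ⟨_, rfl⟩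
  -- probability instances
  haveI h1 : IsProbabilityMeasure (cF⁻¹ • F.restrict (Set.Ioi 0)) := by
    constructor
    rw [Measure.smul_apply, Measure.restrict_apply_univ, smul_eq_mul]
    exact ENNReal.inv_mul_cancel hcF0 hcFtop
  haveI hprobVF : IsProbabilityMeasure ((cF⁻¹ • F.restrict (Set.Ioi 0)).map Real.log) :=
    Measure.isProbabilityMeasure_map hlog.aemeasurable
  haveI : IsProbabilityMeasure VF := by rw [hVFdef]; infer_instance
  haveI h2 : IsProbabilityMeasure (c⁻¹ • H.restrict (Set.Ioi 0)) := by
    constructor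
    rw [Measure.smul_apply, Measure.restrict_apply_univ, smul_eq_mul]
    exact ENNReal.inv_mul_cancel hc0 hctop
  haveI hprobVH : IsProbabilityMeasure VH := by
    rw [hVHdef]
    exact Measure.isProbabilityMeasure_map hlog.aemeasurable
  haveI : IsProbabilityMeasure P := by rw [hPdef]; infer_instance
  haveI h3 : IsProbabilityMeasure (G.map Real.log) := Measure.isProbabilityMeasure_map hlog.aemeasurable
  haveI hprobW : IsProbabilityMeasure W := by rw [hWdef]; infer_instance
  -- coefficients
  have hatop : a ≠ ⊤ := by
    rw [hadef]
    exact ENNReal.mul_ne_top (ENNReal.inv_ne_top.2 hc0)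
      (ENNReal.mul_ne_top ENNReal.ofReal_ne_top hcFtop)
  have ha0 : a ≠ 0 := by
    rw [hadef]
    exact mul_ne_zero (ENNReal.inv_ne_zero.2 hctop)
      (mul_ne_zero (ENNReal.ofReal_pos.2 hp0).ne' hcF0)
  have hbtop : b ≠ ⊤ := by
    rw [hbdef]
    exact ENNReal.mul_ne_top (ENNReal.inv_ne_top.2 hc0) ENNReal.ofReal_ne_top
  have hb0 : b ≠ 0 := by
    rw [hbdef]
    exact mul_ne_zero (ENNReal.inv_ne_zero.2 hctop) (ENNReal.ofReal_pos.2 hq0).ne'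
  obtain ⟨A, hAdef⟩ : ∃ A : ℝ, A = a.toReal := ⟨_, rfl⟩
  obtain ⟨B, hBdef⟩ : ∃ B : ℝ, B = b.toReal := ⟨_, rfl⟩
  have hA : 0 < A := hAdef ▸ ENNReal.toReal_pos ha0 hatop
  have hB : 0 < B := hBdef ▸ ENNReal.toReal_pos hb0 hbtop
  -- the mixture identity
  have hPid : P = a • VF + b • W := by
    have hHr : H.restrict (Set.Ioi 0)
        = ENNReal.ofReal p • F.restrict (Set.Ioi 0) + ENNReal.ofReal q • G := by
      rw [hHdef, Measure.restrict_add, Measure.restrict_smul, Measure.restrict_smul, hGrestrict]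
    have hmapF : (F.restrict (Set.Ioi 0)).map Real.log
        = cF • ((cF⁻¹ • F.restrict (Set.Ioi 0)).map Real.log) := by
      rw [Measure.map_smul, smul_smul, ENNReal.mul_inv_cancel hcF0 hcFtop, one_smul]
    have hVH2 : VH = a • ((cF⁻¹ • F.restrict (Set.Ioi 0)).map Real.log)
        + b • (G.map Real.log) := by
      rw [hVHdef, hHr, Measure.map_smul, Measure.map_add _ _ hlog, Measure.map_smul,
        Measure.map_smul, hmapF, smul_add, smul_smul, smul_smul, smul_smul,
        hadef, hbdef, mul_assoc]
    rw [hPdef, hVH2, posMod_add, posMod_smul, posMod_smul, hVFdef, hWdef]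
  -- tail formulas
  have htailP : ∀ u, tailDist P u = A * tailDist VF u + B * tailDist W u := by
    intro u
    rw [tailDist, hPid, Measure.add_apply, Measure.smul_apply, Measure.smul_apply,
      smul_eq_mul, smul_eq_mul,
      ENNReal.toReal_add (ENNReal.mul_ne_top hatop (measure_ne_top _ _))
        (ENNReal.mul_ne_top hbtop (measure_ne_top _ _)),
      ENNReal.toReal_mul, ENNReal.toReal_mul, hAdef, hBdef]
    rfl
  have hcFr : 0 < cF.toReal := ENNReal.toReal_pos hcF0 hcFtop
  have hsetlog : ∀ u : ℝ, Real.log ⁻¹' (Set.Ioi u) ∩ Set.Ioi 0 = Set.Ioi (Real.exp u) := by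
    intro u
    ext x
    simp only [Set.mem_inter_iff, Set.mem_preimage, Set.mem_Ioi]
    constructor
    · rintro ⟨h1, h2⟩
      exact (Real.lt_log_iff_exp_lt h2).1 h1
    · intro h
      have hx : 0 < x := lt_trans (Real.exp_pos u) h
      exact ⟨(Real.lt_log_iff_exp_lt hx).2 h, hx⟩
  have htailVF : ∀ u : ℝ, 0 ≤ u →
      tailDist VF u = (cF.toReal)⁻¹ * tailDist F (Real.exp u) := by
    intro u hu
    rw [tailDist, hVFdef, posMod_apply_Ioi _ u hu, Measure.map_apply hlog measurableSet_Ioi,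
      Measure.smul_apply, Measure.restrict_apply (hlog measurableSet_Ioi), hsetlog u,
      smul_eq_mul, ENNReal.toReal_mul, ENNReal.toReal_inv]
    rfl
  have htailW : ∀ u : ℝ, 0 ≤ u → tailDist W u = tailDist G (Real.exp u) := by
    intro u hu
    rw [tailDist, hWdef, posMod_apply_Ioi _ u hu, Measure.map_apply hlog measurableSet_Ioi,
      ← hGrestrict, Measure.restrict_apply (hlog measurableSet_Ioi), hsetlog u, hGrestrict]
    rfl
  -- positivity of W tails
  have hW1 : ∀ x, 0 < tailDist W x := by
    intro x
    have h0 : 0 < tailDist W (max x 0) := by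
      rw [htailW _ (le_max_right x 0)]
      exact hG.1 _
    exact lt_of_lt_of_le h0 (tailDist_antitone W (le_max_left x 0))
  -- L(α) property of W
  have hWL : ∀ y : ℝ, Tendsto (fun x => tailDist W (x - y) / tailDist W x) atTop
      (nhds (Real.exp (α * y))) := by
    intro y
    have hbase := (hG.2 (Real.exp (-y)) (Real.exp_pos _)).comp Real.tendsto_exp_atTop
    have hlim : (Real.exp (-y)) ^ (-α) = Real.exp (α * y) := by
      rw [Real.rpow_def_of_pos (Real.exp_pos _), Real.log_exp]
      congr 1
      ring
    rw [hlim] at hbase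
    apply hbase.congr'
    filter_upwards [eventually_ge_atTop (max y 0)] with x hx
    have hx0 : (0:ℝ) ≤ x := le_trans (le_max_right y 0) hx
    have hxy : (0:ℝ) ≤ x - y := by
      have := le_trans (le_max_left y 0) hx
      linarith
    have hee : Real.exp x * Real.exp (-y) = Real.exp (x - y) := by
      rw [← Real.exp_add]
      ring_nf
    simp only [Function.comp_apply]
    rw [hee, htailW _ hxy, htailW _ hx0]
  -- positivity of P tails
  have hP1 : ∀ x, 0 < tailDist P x := by
    intro x
    rw [htailP]
    have := hVF1 x
    have := hW1 x
    positivity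
  -- L(α) property of P
  have hPL : ∀ y : ℝ, Tendsto (fun x => tailDist P (x - y) / tailDist P x) atTop
      (nhds (Real.exp (α * y))) := by
    intro y
    have := tendsto_mix atTop (fun x => tailDist VF x) (fun x => tailDist W x)
      (fun x => tailDist VF (x - y)) (fun x => tailDist W (x - y)) A B
      (Real.exp (α * y)) hA hB hVF1 hW1 (hVFL y) (hWL y)
    apply this.congr
    intro x
    rw [htailP, htailP]
  -- tail comparison
  obtain ⟨C₀, hC₀, T₀, hT₀0, hPC⟩ : ∃ C₀, 0 ≤ C₀ ∧ ∃ T₀, (0:ℝ) ≤ T₀ ∧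
      ∀ u, T₀ ≤ u → tailDist W u ≤ C₀ * tailDist VF u := by
    obtain ⟨C₁, hC₁⟩ := Asymptotics.isBigO_iff.1 hO
    obtain ⟨x₁, hx₁⟩ := eventually_atTop.1 hC₁
    refine ⟨(max C₁ 0) * cF.toReal, by positivity, max 0 (Real.log (max x₁ 1)),
      le_max_left _ _, ?_⟩
    intro u hu
    have hu0 : (0:ℝ) ≤ u := le_trans (le_max_left _ _) hu
    have hxe : x₁ ≤ Real.exp u := by
      calc x₁ ≤ max x₁ 1 := le_max_left _ _
        _ = Real.exp (Real.log (max x₁ 1)) := (Real.exp_log (by positivity)).symm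
        _ ≤ Real.exp u := Real.exp_le_exp.2 (le_trans (le_max_right _ _) hu)
    have hGF := hx₁ (Real.exp u) hxe
    rw [Real.norm_eq_abs, Real.norm_eq_abs, abs_of_nonneg (tailDist_nonneg G _),
      abs_of_nonneg (tailDist_nonneg F _)] at hGF
    rw [htailW _ hu0, htailVF _ hu0]
    have h2 : tailDist G (Real.exp u) ≤ max C₁ 0 * tailDist F (Real.exp u) :=
      le_trans hGF (mul_le_mul_of_nonneg_right (le_max_left _ _) (tailDist_nonneg F _))
    calc tailDist G (Real.exp u) ≤ max C₁ 0 * tailDist F (Real.exp u) := h2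
      _ = max C₁ 0 * cF.toReal * (cF.toReal⁻¹ * tailDist F (Real.exp u)) := by
          field_simp
  have hPCfull : ∀ u, T₀ ≤ u → tailDist P u ≤ (A + B * C₀) * tailDist VF u := by
    intro u hu
    rw [htailP]
    have h1 := hPC u hu
    have h2 := (hW1 u).le
    have h3 := (hVF1 u).le
    nlinarith
  have hPκ : ∀ u, (0:ℝ) ≤ u → A * tailDist VF u ≤ tailDist P u := by
    intro u _
    rw [htailP]
    have := (hW1 u).le
    nlinarith
  -- integrability
  have hWint : Integrable (fun x => Real.exp (α * x)) W := by
    apply integrable_exp_of_tail_le α hα VF W hVF3 C₀ T₀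
    intro u hu
    rw [measure_Ioi_eq_ofReal W, measure_Ioi_eq_ofReal VF, ← ENNReal.ofReal_mul hC₀]
    exact ENNReal.ofReal_le_ofReal (hPC u hu)
  have hP3 : Integrable (fun x => Real.exp (α * x)) P := by
    rw [hPid]
    exact (hVF3.smul_measure hatop).add_measure (hWint.smul_measure hbtop)
  -- apply the core theorem
  have hcore := core_conv VF P α hα hVF1 hVFL hVF3 hVF4 hP1 hPL hP3
    (A + B * C₀) (by positivity) T₀ hPCfull A hA 0 (fun u hu => hPκ u hu)
  exact ⟨hc0, hP1, hPL, hP3, hcore⟩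
end

section
/- Let X, X_1, X_2, ... be i.i.d. real-valued random variables with common distribution F on ℝ, let Y, Y_1, Y_2, ... be i.i.d. positive random variables with common distribution G on (0,∞), and let the two sequences be mutually independent. Suppose every convex combination pF+(1-p)G, 0<p<1, belongs to the class R*_{-α} of strongly regularly varying distributions for some α > 0, and suppose μ_α = E[Y^α] < 1. Then M_n = max_{0≤k≤n} S_k (with S_0 = 0, S_k = Σ_{i=1}^k X_i Π_{j=1}^i Y_j) converges almost surely to a limit M_∞ satisfying E[M_∞^α] ≤ E[(Σ_{i=1}^∞ X_{i,+} Π_{j=1}^i Y_j)^α] < ∞. -/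
open MeasureTheory ProbabilityTheory Filter Asymptotics

section AuxLemmas


section Aux

lemma aux_prod_rpow {ι : Type*} (s : Finset ι) (f : ι → ENNReal) {α : ℝ} (hα : 0 ≤ α) :
    (∏ i ∈ s, f i) ^ α = ∏ i ∈ s, (f i) ^ α := by
  classical
  induction s using Finset.induction_on with
  | empty => simp [ENNReal.one_rpow]
  | insert _ _ h ih => rw [Finset.prod_insert h, Finset.prod_insert h,
      ENNReal.mul_rpow_of_nonneg _ _ hα, ih]

lemma aux_sum_rpow_le {ι : Type*} (s : Finset ι) (f : ι → ENNReal) {α : ℝ}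
    (hα : 0 < α) (hα1 : α ≤ 1) :
    (∑ i ∈ s, f i) ^ α ≤ ∑ i ∈ s, (f i) ^ α := by
  classical
  induction s using Finset.induction_on with
  | empty => simp [ENNReal.zero_rpow_of_pos hα]
  | insert _ _ h ih =>
      rw [Finset.sum_insert h, Finset.sum_insert h]
      exact le_trans (ENNReal.rpow_add_le_add_rpow _ _ hα.le hα1) (by gcongr)

lemma aux_indep_lintegral_prod {Ω ι : Type*} [MeasurableSpace Ω] {P : Measure Ω}
    [IsProbabilityMeasure P] {f : ι → Ω → ENNReal}
    (hind : iIndepFun f P) (hm : ∀ k, Measurable (f k))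
    (s : Finset ι) :
    ∫⁻ ω, ∏ k ∈ s, f k ω ∂P = ∏ k ∈ s, ∫⁻ ω, f k ω ∂P := by
  classical
  induction s using Finset.induction_on with
  | empty => simp
  | @insert a s ha ih =>
      rw [Finset.prod_insert ha]
      have hindep : IndepFun (f a) (fun ω => ∏ k ∈ s, f k ω) P := by
        have h2 := (hind.indepFun_finsetProd_of_notMem hm ha).symm
        have : (∏ j ∈ s, f j) = fun ω => ∏ k ∈ s, f k ω := by
          funext ω; simp [Finset.prod_apply]
        rwa [this] at h2
      have h3 := lintegral_mul_eq_lintegral_mul_lintegral_of_indepFun'' (hm a).aemeasurable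
        ((Finset.measurable_prod s fun k _ => hm k)).aemeasurable hindep
      rw [show (∫⁻ ω, ∏ k ∈ insert a s, f k ω ∂P) = ∫⁻ ω, f a ω * ∏ i ∈ s, f i ω ∂P by
          apply lintegral_congr; intro ω; rw [Finset.prod_insert ha], h3, ih]

lemma aux_lintegral_Lp_sum_le {Ω : Type*} [MeasurableSpace Ω] {P : Measure Ω}
    {f : ℕ → Ω → ENNReal} (hm : ∀ i, Measurable (f i)) {α : ℝ} (hα1 : 1 ≤ α) (n : ℕ) :
    (∫⁻ ω, (∑ i ∈ Finset.range n, f i ω) ^ α ∂P) ^ (1 / α) ≤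
      ∑ i ∈ Finset.range n, (∫⁻ ω, f i ω ^ α ∂P) ^ (1 / α) := by
  have hα : (0:ℝ) < α := lt_of_lt_of_le one_pos hα1
  induction n with
  | zero => simp [ENNReal.zero_rpow_of_pos hα]; positivity
  | succ n ih =>
      simp only [Finset.sum_range_succ]
      have hms : AEMeasurable (fun ω => ∑ i ∈ Finset.range n, f i ω) P :=
        (Finset.measurable_sum _ fun i _ => hm i).aemeasurable
      calc (∫⁻ ω, (∑ i ∈ Finset.range n, f i ω + f n ω) ^ α ∂P) ^ (1 / α)
          ≤ (∫⁻ ω, (fun ω => ∑ i ∈ Finset.range n, f i ω) ω ^ α ∂P) ^ (1 / α)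
            + (∫⁻ ω, f n ω ^ α ∂P) ^ (1 / α) := by
            have h4 := ENNReal.lintegral_Lp_add_le hms (hm n).aemeasurable hα1 (μ := P)
            exact h4
        _ ≤ ∑ i ∈ Finset.range n, (∫⁻ ω, f i ω ^ α ∂P) ^ (1 / α)
            + (∫⁻ ω, f n ω ^ α ∂P) ^ (1 / α) := add_le_add_left ih _

end Aux

lemma aux_geom_bound {n : ℕ} (A B : ENNReal) :
    ∑ i ∈ Finset.range n, A * B ^ (i + 1) ≤ A * (B * (1 - B)⁻¹) := by
  have h1 : ∑ i ∈ Finset.range n, A * B ^ (i + 1) = A * B * ∑ i ∈ Finset.range n, B ^ i := by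
    rw [Finset.mul_sum]
    exact Finset.sum_congr rfl fun i _ => by rw [pow_succ]; ring
  rw [h1, mul_assoc]
  refine mul_le_mul_right (mul_le_mul_right ?_ B) A
  exact le_trans (ENNReal.sum_le_tsum _) (le_of_eq (ENNReal.tsum_geometric B))

lemma aux_TE_moment_fin {Ω : Type*} [MeasurableSpace Ω] {P : Measure Ω}
    [IsProbabilityMeasure P] {W : ℕ → Ω → ENNReal} (hWm : ∀ i, Measurable (W i))
    {α : ℝ} (hα : 0 < α) {A B : ENNReal} (hAfin : A ≠ ⊤) (hB1 : B < 1)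
    (hWint : ∀ i, ∫⁻ ω, (W i ω) ^ α ∂P = A * B ^ (i + 1)) :
    ∫⁻ ω, (∑' i, W i ω) ^ α ∂P < ⊤ := by
  classical
  set pn : ℕ → Ω → ENNReal := fun n ω => ∑ i ∈ Finset.range n, W i ω with hpn
  have hpnm : ∀ n, Measurable (pn n) := fun n => Finset.measurable_sum _ fun i _ => hWm i
  have hpnmono : Monotone pn := fun m n h ω =>
    Finset.sum_le_sum_of_subset (Finset.range_subset_range.2 h)
  have hrpow_iSup : ∀ ω, (∑' i, W i ω) ^ α = ⨆ n, pn n ω ^ α := by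
    intro ω
    rw [ENNReal.tsum_eq_iSup_nat]
    have := (ENNReal.orderIsoRpow α hα).map_iSup (fun n => pn n ω)
    simp only [ENNReal.orderIsoRpow_apply] at this
    exact this
  have hkey : ∫⁻ ω, (∑' i, W i ω) ^ α ∂P = ⨆ n, ∫⁻ ω, pn n ω ^ α ∂P := by
    calc ∫⁻ ω, (∑' i, W i ω) ^ α ∂P = ∫⁻ ω, ⨆ n, pn n ω ^ α ∂P :=
          lintegral_congr fun ω => hrpow_iSup ω
      _ = ⨆ n, ∫⁻ ω, pn n ω ^ α ∂P :=
          lintegral_iSup (fun n => (hpnm n).pow measurable_const)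
            (fun m n h ω => ENNReal.rpow_le_rpow (hpnmono h ω) hα.le)
  have hBfin : B ≠ ⊤ := hB1.ne_top
  have hsub : (1 - B)⁻¹ ≠ ⊤ := by
    rw [ENNReal.inv_ne_top]
    intro hcon
    rw [tsub_eq_zero_iff_le] at hcon
    exact absurd hB1 (not_lt.2 hcon)
  obtain ⟨D, hDfin, hDbd⟩ : ∃ D : ENNReal, D ≠ ⊤ ∧ ∀ n, ∫⁻ ω, pn n ω ^ α ∂P ≤ D := by
    rcases le_or_gt α 1 with hα1 | hα1
    · refine ⟨A * (B * (1 - B)⁻¹), ?_, ?_⟩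
      · exact ENNReal.mul_ne_top hAfin (ENNReal.mul_ne_top hBfin hsub)
      · intro n
        calc ∫⁻ ω, pn n ω ^ α ∂P ≤ ∫⁻ ω, ∑ i ∈ Finset.range n, (W i ω) ^ α ∂P :=
              lintegral_mono fun ω => aux_sum_rpow_le _ _ hα hα1
          _ = ∑ i ∈ Finset.range n, ∫⁻ ω, (W i ω) ^ α ∂P :=
              lintegral_finset_sum _ (fun i _ => (hWm i).pow measurable_const)
          _ = ∑ i ∈ Finset.range n, A * B ^ (i + 1) := by
              exact Finset.sum_congr rfl fun i _ => hWint i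
          _ ≤ A * (B * (1 - B)⁻¹) := aux_geom_bound A B
    · set r : ENNReal := B ^ (1/α) with hr
      have hαinv : (0:ℝ) < 1/α := by positivity
      have hr1 : r < 1 := ENNReal.rpow_lt_one hB1 hαinv
      have hrfin : r ≠ ⊤ := hr1.ne_top
      have hrsub : (1 - r)⁻¹ ≠ ⊤ := by
        rw [ENNReal.inv_ne_top]
        intro hcon
        rw [tsub_eq_zero_iff_le] at hcon
        exact absurd hr1 (not_lt.2 hcon)
      set K : ENNReal := A ^ (1/α) * (r * (1 - r)⁻¹) with hK
      have hKfin : K ≠ ⊤ := ENNReal.mul_ne_top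
        (ENNReal.rpow_ne_top_of_nonneg hαinv.le hAfin) (ENNReal.mul_ne_top hrfin hrsub)
      refine ⟨K ^ α, ENNReal.rpow_ne_top_of_nonneg hα.le hKfin, ?_⟩
      intro n
      have h5 : (∫⁻ ω, pn n ω ^ α ∂P) ^ (1/α)
          ≤ ∑ i ∈ Finset.range n, (∫⁻ ω, (W i ω) ^ α ∂P) ^ (1/α) :=
        aux_lintegral_Lp_sum_le hWm hα1.le n
      have h6 : ∑ i ∈ Finset.range n, (∫⁻ ω, (W i ω) ^ α ∂P) ^ (1/α) ≤ K := by
        have h7 : ∀ i, (∫⁻ ω, (W i ω) ^ α ∂P) ^ (1/α) = A ^ (1/α) * r ^ (i+1) := by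
          intro i
          rw [hWint i, ENNReal.mul_rpow_of_nonneg _ _ hαinv.le]
          congr 1
          rw [hr, ← ENNReal.rpow_natCast_mul, ← ENNReal.rpow_natCast (B ^ (1/α)) (i+1),
            ← ENNReal.rpow_mul, mul_comm]
        calc ∑ i ∈ Finset.range n, (∫⁻ ω, (W i ω) ^ α ∂P) ^ (1/α)
            = ∑ i ∈ Finset.range n, A ^ (1/α) * r ^ (i+1) :=
              Finset.sum_congr rfl fun i _ => h7 i
          _ ≤ A ^ (1/α) * (r * (1 - r)⁻¹) := aux_geom_bound _ r
      calc ∫⁻ ω, pn n ω ^ α ∂P = ((∫⁻ ω, pn n ω ^ α ∂P) ^ (1/α)) ^ α := by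
            rw [one_div, ENNReal.rpow_inv_rpow hα.ne']
        _ ≤ K ^ α := ENNReal.rpow_le_rpow (le_trans h5 h6) hα.le
  rw [hkey]
  exact lt_of_le_of_lt (iSup_le hDbd) hDfin.lt_top

end AuxLemmas

/-- Moment bound (2.5): if `μ_α < 1` (for `α > 0`) then `Mₙ` converges a.s. to `M∞` with
`E[M∞^α] ≤ E[(Σᵢ X_{i,+} Πⱼ Yⱼ)^α] < ∞`. -/
theorem stmt_19
    {Ω : Type*} [MeasurableSpace Ω] (P : Measure Ω) [IsProbabilityMeasure P]
    (F G : Measure ℝ) [IsProbabilityMeasure F] [IsProbabilityMeasure G]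
    (hGpos : G (Set.Iic 0) = 0)
    (X Y : ℕ → Ω → ℝ)
    (hXm : ∀ i, Measurable (X i)) (hYm : ∀ i, Measurable (Y i))
    (hXF : ∀ i, P.map (X i) = F) (hYG : ∀ i, P.map (Y i) = G)
    (hIndep : iIndepFun (Sum.elim X Y) P)
    (α : ℝ) (hα : 0 < α)
    (hAssump : AssumpA α F G)
    (S M : ℕ → Ω → ℝ)
    (hS : ∀ n ω, S n ω = ∑ i ∈ Finset.Icc 1 n, X i ω * ∏ j ∈ Finset.Icc 1 i, Y j ω)
    (hM : ∀ n ω, M n ω = (Finset.range (n + 1)).sup' Finset.nonempty_range_add_one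
        (fun k => S k ω))
    (μα : ℝ) (hμα : μα = ∫ y, y ^ α ∂G)
    (hμlt : μα < 1) :
    ∃ Minf : Ω → ℝ, Measurable Minf ∧
      (∀ᵐ ω ∂P, Tendsto (fun n => M n ω) atTop (nhds (Minf ω))) ∧
      Integrable
        (fun ω => (∑' i : ℕ, max (X (i + 1) ω) 0 * ∏ j ∈ Finset.Icc 1 (i + 1), Y j ω) ^ α)
        P ∧
      (∫ ω, Minf ω ^ α ∂P) ≤
        ∫ ω, (∑' i : ℕ, max (X (i + 1) ω) 0 * ∏ j ∈ Finset.Icc 1 (i + 1), Y j ω) ^ α ∂P := by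
  classical
  -- measurability of S and M
  have hSm : ∀ k, Measurable (S k) := by
    intro k
    have h1 : S k = fun ω => ∑ i ∈ Finset.Icc 1 k, X i ω * ∏ j ∈ Finset.Icc 1 i, Y j ω :=
      funext fun ω => hS k ω
    rw [h1]
    exact Finset.measurable_sum _ fun i _ =>
      (hXm i).mul (Finset.measurable_prod _ fun j _ => hYm j)
  have hM0eq : ∀ ω, M 0 ω = S 0 ω := by
    intro ω
    rw [hM 0 ω]
    norm_num [Finset.range_one]
  have hMle' : ∀ n ω, M n ω ≤ M (n+1) ω := by
    intro n ω
    rw [hM n ω, hM (n+1) ω]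
    exact Finset.sup'_mono _ (Finset.range_subset_range.2 (by omega)) _
  have hMsucc : ∀ n ω, M (n+1) ω = max (S (n+1) ω) (M n ω) := by
    intro n ω
    refine le_antisymm ?_ (max_le ?_ (hMle' n ω))
    · rw [hM (n+1) ω]
      refine Finset.sup'_le _ _ fun k hk => ?_
      rcases Nat.lt_succ_iff_lt_or_eq.1 (Finset.mem_range.1 hk) with h | h
      · refine le_max_of_le_right ?_
        rw [hM n ω]
        exact Finset.le_sup' (fun k => S k ω) (Finset.mem_range.2 h)
      · subst h; exact le_max_left _ _
    · rw [hM (n+1) ω]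
      exact Finset.le_sup' (fun k => S k ω) (Finset.mem_range.2 (by omega))
  have hMm : ∀ n, Measurable (M n) := by
    intro n
    induction n with
    | zero => exact (funext hM0eq : M 0 = S 0) ▸ hSm 0
    | succ n ih =>
        have h1 : M (n+1) = fun ω => max (S (n+1) ω) (M n ω) := funext fun ω => hMsucc n ω
        rw [h1]
        exact (hSm (n+1)).max ih
  have hS0 : ∀ ω, S 0 ω = 0 := by intro ω; rw [hS 0 ω]; simp
  have hM0nonneg : ∀ n ω, 0 ≤ M n ω := by
    intro n ω
    rw [hM n ω]
    have h1 : S 0 ω ≤ (Finset.range (n+1)).sup' Finset.nonempty_range_add_one (fun k => S k ω) :=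
      Finset.le_sup' (fun k => S k ω) (Finset.mem_range.2 (Nat.succ_pos n))
    rw [hS0 ω] at h1
    exact h1
  have hMmono : ∀ ω, Monotone fun n => M n ω := fun ω =>
    monotone_nat_of_le_succ fun n => by rw [hMsucc n ω]; exact le_max_right _ _
  -- a.s. positivity of the Y's
  have hYpos : ∀ᵐ ω ∂P, ∀ j, 0 < Y j ω := by
    rw [ae_all_iff]
    intro j
    have h1 : P ((Y j) ⁻¹' (Set.Iic 0)) = 0 := by
      rw [← Measure.map_apply (hYm j) measurableSet_Iic, hYG j]; exact hGpos
    rw [ae_iff]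
    simp only [not_lt]; exact h1
  ---- moment extraction from Assumption A
  have hmax : Measurable fun x : ℝ => max x 0 := measurable_id.max measurable_const
  obtain ⟨hH0, hCE⟩ := hAssump (1/2) (by norm_num) (by norm_num)
  obtain ⟨-, -, hInt, -⟩ := hCE
  set H : Measure ℝ := ENNReal.ofReal (1/2) • F + ENNReal.ofReal (1 - 1/2) • G with hHdef
  set c : ENNReal := (H (Set.Ioi 0))⁻¹ with hc
  set μ₀ : Measure ℝ := c • H.restrict (Set.Ioi 0) with hμ₀
  have hposMod : posMod (μ₀.map Real.log)
      = μ₀.map (fun x => max (Real.log x) 0) := by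
    simp only [posMod]
    rw [Measure.map_map hmax Real.measurable_log]
    rfl
  rw [hposMod] at hInt
  have hInt2 : Integrable (fun x => Real.exp (α * max (Real.log x) 0)) μ₀ := by
    have hcont : Continuous fun x : ℝ => Real.exp (α * x) :=
      Real.continuous_exp.comp (continuous_const.mul continuous_id)
    rw [integrable_map_measure hcont.aestronglyMeasurable
      (Real.measurable_log.max measurable_const).aemeasurable] at hInt
    exact hInt
  have hHfinIoi : H (Set.Ioi 0) ≠ ⊤ := by
    rw [hHdef]
    simp only [Measure.coe_add, Pi.add_apply, Measure.smul_apply, smul_eq_mul]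
    exact ENNReal.add_ne_top.2 ⟨ENNReal.mul_ne_top ENNReal.ofReal_ne_top (measure_ne_top F _),
      ENNReal.mul_ne_top ENNReal.ofReal_ne_top (measure_ne_top G _)⟩
  have hcne0 : c ≠ 0 := ENNReal.inv_ne_zero.2 hHfinIoi
  have hcnetop : c ≠ ⊤ := ENNReal.inv_ne_top.2 hH0
  have hInt3 : Integrable (fun x => Real.exp (α * max (Real.log x) 0))
      (H.restrict (Set.Ioi 0)) := by
    rw [hμ₀, integrable_smul_measure hcne0 hcnetop] at hInt2; exact hInt2
  have hIH : ∫⁻ x in Set.Ioi 0, ENNReal.ofReal x ^ α ∂H < ⊤ := by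
    have h1 : ∫⁻ x, ENNReal.ofReal (Real.exp (α * max (Real.log x) 0))
        ∂(H.restrict (Set.Ioi 0)) < ⊤ := by
      have h2 := hInt3.hasFiniteIntegral
      rw [hasFiniteIntegral_iff_ofReal (Eventually.of_forall fun x => (Real.exp_pos _).le)] at h2
      exact h2
    refine lt_of_le_of_lt ?_ h1
    refine setLIntegral_mono
      ((Real.measurable_exp.comp
        ((Real.measurable_log.max measurable_const).const_mul α)).ennreal_ofReal) ?_
    intro x hx
    rw [ENNReal.ofReal_rpow_of_nonneg (le_of_lt hx) hα.le]
    apply ENNReal.ofReal_le_ofReal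
    rw [Real.rpow_def_of_pos hx]
    apply Real.exp_le_exp.2
    rw [mul_comm]
    exact mul_le_mul_of_nonneg_left (le_max_left _ _) hα.le
  have hsplit : ∫⁻ x in Set.Ioi 0, ENNReal.ofReal x ^ α ∂H
      = ENNReal.ofReal (1/2) * ∫⁻ x in Set.Ioi 0, ENNReal.ofReal x ^ α ∂F
        + ENNReal.ofReal (1 - 1/2) * ∫⁻ x in Set.Ioi 0, ENNReal.ofReal x ^ α ∂G := by
    rw [hHdef]
    rw [Measure.restrict_add, Measure.restrict_smul, Measure.restrict_smul,
      lintegral_add_measure, lintegral_smul_measure, lintegral_smul_measure]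
    simp only [smul_eq_mul]
  rw [hsplit] at hIH
  have h12 : ENNReal.ofReal (1/2) ≠ 0 := by positivity
  have h12' : ENNReal.ofReal (1 - 1/2) ≠ 0 := by
    rw [show (1 - 1/2 : ℝ) = 1/2 by norm_num]; exact h12
  have hFfin : ∫⁻ x in Set.Ioi 0, ENNReal.ofReal x ^ α ∂F ≠ ⊤ := by
    intro hcon
    rw [hcon, ENNReal.mul_top h12] at hIH
    simp at hIH
  have hGfin : ∫⁻ x in Set.Ioi 0, ENNReal.ofReal x ^ α ∂G ≠ ⊤ := by
    intro hcon
    rw [hcon, ENNReal.mul_top h12'] at hIH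
    simp at hIH
  set A := ∫⁻ x, ENNReal.ofReal (max x 0) ^ α ∂F with hAdef
  set B := ∫⁻ y, ENNReal.ofReal y ^ α ∂G with hBdef
  have hAfin : A ≠ ⊤ := by
    rw [hAdef, ← lintegral_add_compl (fun x => ENNReal.ofReal (max x 0) ^ α)
      (measurableSet_Ioi (a := (0:ℝ)))]
    have e1 : ∫⁻ x in Set.Ioi 0, ENNReal.ofReal (max x 0) ^ α ∂F
        = ∫⁻ x in Set.Ioi 0, ENNReal.ofReal x ^ α ∂F := by
      apply setLIntegral_congr_fun measurableSet_Ioi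
      exact fun x hx => by simp only [max_eq_left (le_of_lt (Set.mem_Ioi.1 hx))]
    have e2 : ∫⁻ x in (Set.Ioi (0:ℝ))ᶜ, ENNReal.ofReal (max x 0) ^ α ∂F = 0 := by
      rw [setLIntegral_congr_fun (measurableSet_Ioi (a := (0:ℝ))).compl
        (fun x hx => ?_), lintegral_zero]
      have hx0 : x ≤ 0 := by simpa using hx
      beta_reduce
      rw [max_eq_right hx0]
      simp [ENNReal.zero_rpow_of_pos hα]
    rw [e1, e2, add_zero]
    exact hFfin
  have hGae : ∀ᵐ y ∂G, y ∈ Set.Ioi (0:ℝ) := by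
    rw [ae_iff]
    have h1 : {y : ℝ | ¬ y ∈ Set.Ioi (0:ℝ)} = Set.Iic 0 := by ext y; simp
    rw [h1]; exact hGpos
  have hGrestrict : G.restrict (Set.Ioi 0) = G := Measure.restrict_eq_self_of_ae_mem hGae
  have hBfin : B ≠ ⊤ := by rw [hBdef, ← hGrestrict]; exact hGfin
  have hyInt : Integrable (fun y : ℝ => y ^ α) G := by
    refine ⟨(measurable_id.pow measurable_const).aestronglyMeasurable, ?_⟩
    rw [hasFiniteIntegral_iff_ofReal (hGae.mono fun y hy => Real.rpow_nonneg (le_of_lt hy) _)]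
    have h1 : ∫⁻ y, ENNReal.ofReal (y ^ α) ∂G = B := by
      rw [hBdef]
      refine lintegral_congr_ae (hGae.mono fun y hy => ?_)
      exact (ENNReal.ofReal_rpow_of_nonneg (le_of_lt hy) hα.le).symm
    rw [h1]
    exact hBfin.lt_top
  have hBval : B = ENNReal.ofReal μα := by
    rw [hμα, ofReal_integral_eq_lintegral_ofReal hyInt
      (hGae.mono fun y hy => Real.rpow_nonneg (le_of_lt hy) _), hBdef]
    refine lintegral_congr_ae (hGae.mono fun y hy => ?_)
    exact ENNReal.ofReal_rpow_of_nonneg (le_of_lt hy) hα.le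
  have hB1 : B < 1 := by rw [hBval]; exact ENNReal.ofReal_lt_one.2 hμlt
  ---- independent product moments
  set gX : ℝ → ENNReal := fun x => ENNReal.ofReal (max x 0) ^ α with hgX
  set gY : ℝ → ENNReal := fun y => ENNReal.ofReal y ^ α with hgY
  set g : ℕ ⊕ ℕ → ℝ → ENNReal := Sum.elim (fun _ => gX) (fun _ => gY) with hg
  have hgm : ∀ k, Measurable (g k) := by
    rintro (i | j)
    · exact ((measurable_id.max measurable_const).ennreal_ofReal.pow measurable_const)
    · exact (measurable_id.ennreal_ofReal.pow measurable_const)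
  have hXYm : ∀ k, Measurable (Sum.elim X Y k) := by rintro (i | j); exacts [hXm i, hYm j]
  set fam : (ℕ ⊕ ℕ) → Ω → ENNReal := fun k => g k ∘ Sum.elim X Y k with hfam
  have hfind : iIndepFun fam P := hIndep.comp g hgm
  have hfamm : ∀ k, Measurable (fam k) := fun k => (hgm k).comp (hXYm k)
  have hlinl : ∀ i, ∫⁻ ω, fam (Sum.inl i) ω ∂P = A := by
    intro i
    have h1 : ∫⁻ ω, fam (Sum.inl i) ω ∂P = ∫⁻ x, gX x ∂(P.map (X i)) :=
      (lintegral_map (hgm (Sum.inl i)) (hXm i)).symm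
    rw [h1, hXF i]
  have hlinr : ∀ j, ∫⁻ ω, fam (Sum.inr j) ω ∂P = B := by
    intro j
    have h1 : ∫⁻ ω, fam (Sum.inr j) ω ∂P = ∫⁻ y, gY y ∂(P.map (Y j)) :=
      (lintegral_map (hgm (Sum.inr j)) (hYm j)).symm
    rw [h1, hYG j]
  set Z : ℕ → Ω → ℝ :=
    fun i ω => max (X (i+1) ω) 0 * ∏ j ∈ Finset.Icc 1 (i+1), Y j ω with hZdef
  have hZm : ∀ i, Measurable (Z i) := fun i =>
    ((hXm (i+1)).max measurable_const).mul (Finset.measurable_prod _ fun j _ => hYm j)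
  set W : ℕ → Ω → ENNReal := fun i ω => ENNReal.ofReal (Z i ω) with hWdef
  have hWm : ∀ i, Measurable (W i) := fun i => (hZm i).ennreal_ofReal
  set e : ℕ ↪ ℕ ⊕ ℕ := ⟨Sum.inr, Sum.inr_injective⟩ with he
  have hWint : ∀ i, ∫⁻ ω, (W i ω) ^ α ∂P = A * B ^ (i + 1) := by
    intro i
    set sI : Finset (ℕ ⊕ ℕ) := insert (Sum.inl (i+1)) ((Finset.Icc 1 (i+1)).map e) with hsI
    have hnot : Sum.inl (i+1) ∉ (Finset.Icc 1 (i+1)).map e := by simp [he]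
    have hWprod : ∀ᵐ ω ∂P, (W i ω) ^ α = ∏ k ∈ sI, fam k ω := by
      filter_upwards [hYpos] with ω hY
      show (ENNReal.ofReal (max (X (i+1) ω) 0 * ∏ j ∈ Finset.Icc 1 (i+1), Y j ω)) ^ α
        = ∏ k ∈ sI, fam k ω
      rw [ENNReal.ofReal_mul (le_max_right (X (i+1) ω) 0),
        ENNReal.ofReal_prod_of_nonneg (fun j _ => (hY j).le),
        ENNReal.mul_rpow_of_nonneg _ _ hα.le, aux_prod_rpow _ _ hα.le,
        hsI, Finset.prod_insert hnot, Finset.prod_map]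
      rfl
    rw [lintegral_congr_ae hWprod, aux_indep_lintegral_prod hfind hfamm sI, hsI,
      Finset.prod_insert hnot, Finset.prod_map, hlinl]
    congr 1
    calc ∏ j ∈ Finset.Icc 1 (i+1), ∫⁻ ω, fam (e j) ω ∂P
        = ∏ j ∈ Finset.Icc 1 (i+1), B := Finset.prod_congr rfl fun j _ => hlinr j
      _ = B ^ (i+1) := by rw [Finset.prod_const, Nat.card_Icc]; norm_num
  ---- finiteness of the α-moment of the dominating series
  set TE : Ω → ENNReal := fun ω => ∑' i, W i ω with hTEdef
  have hTEm : Measurable TE := Measurable.ennreal_tsum hWm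
  have hTEfin : ∫⁻ ω, TE ω ^ α ∂P < ⊤ :=
    aux_TE_moment_fin hWm hα hAfin hB1 hWint
  have hTEαlt : ∀ᵐ ω ∂P, TE ω ^ α < ⊤ :=
    ae_lt_top (hTEm.pow measurable_const) hTEfin.ne
  have hTElt : ∀ᵐ ω ∂P, TE ω < ⊤ := by
    filter_upwards [hTEαlt] with ω h7
    by_contra h8
    rw [not_lt, top_le_iff] at h8
    rw [h8, ENNReal.top_rpow_of_pos hα] at h7
    exact absurd h7 (lt_irrefl ⊤)
  ---- pointwise facts on the good event
  have hgood : ∀ᵐ ω ∂P, (∀ j, 0 < Y j ω) ∧ TE ω < ⊤ := hYpos.and hTElt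
  have hptwise : ∀ ω, (∀ j, 0 < Y j ω) → TE ω < ⊤ →
      (Summable fun i => Z i ω) ∧ (∑' i, Z i ω = (TE ω).toReal)
        ∧ (∀ n, M n ω ≤ ∑' i, Z i ω) := by
    intro ω hY hTE
    have hZnn : ∀ i, 0 ≤ Z i ω := fun i =>
      mul_nonneg (le_max_right _ _) (Finset.prod_nonneg fun j _ => (hY j).le)
    have hsum : Summable fun i => Z i ω := by
      have h1 : Summable fun i => (W i ω).toReal := by
        apply ENNReal.summable_toReal
        rw [hTEdef] at hTE
        exact hTE.ne
      refine h1.congr fun i => ?_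
      rw [hWdef]
      exact ENNReal.toReal_ofReal (hZnn i)
    have hTeq : ∑' i, Z i ω = (TE ω).toReal := by
      rw [hTEdef]
      rw [ENNReal.tsum_toReal_eq (fun i => ENNReal.ofReal_ne_top)]
      exact tsum_congr fun i => (ENNReal.toReal_ofReal (hZnn i)).symm
    refine ⟨hsum, hTeq, ?_⟩
    have hSle : ∀ k, S k ω ≤ ∑' i, Z i ω := by
      intro k
      rw [hS k ω]
      have h1 : ∑ i ∈ Finset.Icc 1 k, X i ω * ∏ j ∈ Finset.Icc 1 i, Y j ω
          ≤ ∑ i ∈ Finset.Icc 1 k, max (X i ω) 0 * ∏ j ∈ Finset.Icc 1 i, Y j ω := by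
        refine Finset.sum_le_sum fun i _ => ?_
        exact mul_le_mul_of_nonneg_right (le_max_left _ _)
          (Finset.prod_nonneg fun j _ => (hY j).le)
      refine le_trans h1 ?_
      have h2 : ∑ i ∈ Finset.Icc 1 k, max (X i ω) 0 * ∏ j ∈ Finset.Icc 1 i, Y j ω
          = ∑ i ∈ Finset.range k, Z i ω := by
        rw [← Finset.Ico_add_one_right_eq_Icc, Finset.sum_Ico_eq_sum_range]
        refine Finset.sum_congr (by norm_num) fun i _ => ?_
        rw [Nat.add_comm 1 i]
      rw [h2]
      exact Summable.sum_le_tsum _ (fun i _ => hZnn i) hsum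
    intro n
    rw [hM n ω]
    exact Finset.sup'_le _ _ fun k _ => hSle k
  ---- definition of the limit
  set Minf : Ω → ℝ := fun ω => (⨆ n, ENNReal.ofReal (M n ω)).toReal with hMinf
  have hMinfm : Measurable Minf :=
    ENNReal.measurable_toReal.comp (Measurable.iSup fun n => (hMm n).ennreal_ofReal)
  have hMinf_eq : ∀ ω, (∀ j, 0 < Y j ω) → TE ω < ⊤ → Minf ω = ⨆ n, M n ω := by
    intro ω hY hTE
    obtain ⟨hsum, hTeq, hMle⟩ := hptwise ω hY hTE
    have hbdd : BddAbove (Set.range fun n => M n ω) := by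
      refine ⟨∑' i, Z i ω, ?_⟩
      rintro x ⟨n, rfl⟩
      exact hMle n
    set L : ℝ := ⨆ n, M n ω with hL
    have hLnn : 0 ≤ L := le_trans (hM0nonneg 0 ω) (le_ciSup hbdd 0)
    have h1 : Tendsto (fun n => ENNReal.ofReal (M n ω)) atTop (nhds (ENNReal.ofReal L)) :=
      (ENNReal.continuous_ofReal.tendsto L).comp (tendsto_atTop_ciSup (hMmono ω) hbdd)
    have h2 : Tendsto (fun n => ENNReal.ofReal (M n ω)) atTop
        (nhds (⨆ n, ENNReal.ofReal (M n ω))) :=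
      tendsto_atTop_iSup fun a b hab => ENNReal.ofReal_le_ofReal (hMmono ω hab)
    have h3 : (⨆ n, ENNReal.ofReal (M n ω)) = ENNReal.ofReal L :=
      tendsto_nhds_unique h2 h1
    show (⨆ n, ENNReal.ofReal (M n ω)).toReal = L
    rw [h3, ENNReal.toReal_ofReal hLnn]
  refine ⟨Minf, hMinfm, ?_, ?_, ?_⟩
  · -- a.s. convergence
    filter_upwards [hgood] with ω hω
    obtain ⟨hY, hTE⟩ := hω
    obtain ⟨hsum, hTeq, hMle⟩ := hptwise ω hY hTE
    have hbdd : BddAbove (Set.range fun n => M n ω) := by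
      refine ⟨∑' i, Z i ω, ?_⟩
      rintro x ⟨n, rfl⟩
      exact hMle n
    rw [hMinf_eq ω hY hTE]
    exact tendsto_atTop_ciSup (hMmono ω) hbdd
  · -- integrability of the dominating series
    show Integrable (fun ω => (∑' i, Z i ω) ^ α) P
    have haeeq : (fun ω => (∑' i, Z i ω) ^ α) =ᵐ[P] fun ω => ((TE ω) ^ α).toReal := by
      filter_upwards [hgood] with ω hω
      obtain ⟨hY, hTE⟩ := hω
      obtain ⟨hsum, hTeq, hMle⟩ := hptwise ω hY hTE
      rw [hTeq, ENNReal.toReal_rpow]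
    have hm2 : Measurable fun ω => ((TE ω) ^ α).toReal :=
      ENNReal.measurable_toReal.comp (hTEm.pow measurable_const)
    refine ⟨hm2.aestronglyMeasurable.congr haeeq.symm, ?_⟩
    rw [hasFiniteIntegral_iff_ofReal ?_]
    · have h1 : ∫⁻ ω, ENNReal.ofReal ((∑' i, Z i ω) ^ α) ∂P = ∫⁻ ω, TE ω ^ α ∂P := by
        refine lintegral_congr_ae ?_
        filter_upwards [haeeq, hTEαlt] with ω h2 h3
        rw [h2, ENNReal.ofReal_toReal h3.ne]
      rw [h1]
      exact hTEfin
    · filter_upwards [haeeq] with ω h2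
      rw [h2]
      exact ENNReal.toReal_nonneg
  · -- the moment inequality
    have hint : Integrable (fun ω => (∑' i, Z i ω) ^ α) P := by
      have haeeq : (fun ω => (∑' i, Z i ω) ^ α) =ᵐ[P] fun ω => ((TE ω) ^ α).toReal := by
        filter_upwards [hgood] with ω hω
        obtain ⟨hY, hTE⟩ := hω
        obtain ⟨hsum, hTeq, hMle⟩ := hptwise ω hY hTE
        rw [hTeq, ENNReal.toReal_rpow]
      have hm2 : Measurable fun ω => ((TE ω) ^ α).toReal :=
        ENNReal.measurable_toReal.comp (hTEm.pow measurable_const)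
      refine ⟨hm2.aestronglyMeasurable.congr haeeq.symm, ?_⟩
      rw [hasFiniteIntegral_iff_ofReal ?_]
      · have h1 : ∫⁻ ω, ENNReal.ofReal ((∑' i, Z i ω) ^ α) ∂P = ∫⁻ ω, TE ω ^ α ∂P := by
          refine lintegral_congr_ae ?_
          filter_upwards [haeeq, hTEαlt] with ω h2 h3
          rw [h2, ENNReal.ofReal_toReal h3.ne]
        rw [h1]
        exact hTEfin
      · filter_upwards [haeeq] with ω h2
        rw [h2]
        exact ENNReal.toReal_nonneg
    refine integral_mono_of_nonneg ?_ hint ?_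
    · exact Eventually.of_forall fun ω => Real.rpow_nonneg ENNReal.toReal_nonneg _
    · filter_upwards [hgood] with ω hω
      obtain ⟨hY, hTE⟩ := hω
      obtain ⟨hsum, hTeq, hMle⟩ := hptwise ω hY hTE
      show Minf ω ^ α ≤ (∑' i, Z i ω) ^ α
      refine Real.rpow_le_rpow ?_ ?_ hα.le
      · exact ENNReal.toReal_nonneg
      · rw [hMinf_eq ω hY hTE]
        exact ciSup_le fun n => hMle n
end
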